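/- arXiv:1609.01675 — 7 statements merged into one kernel-verified Lean document; each statement's English description precedes it below -/
import Mathlib

section
/- Assume G is a multigraph in which every pair of distinct vertices is joined by an even number of edges. Let 𝒫 be a cycle packing of G and let C_0 ∈ 𝒫. Then |𝒫| ≤ |E(G)|/2 − |E(C_0)| + f(G, 𝒫), where f(G, 𝒫) = 2 if 𝒫 is a cycle decomposition of G and f(G, 𝒫) = 1 otherwise. -/
/-- The edge list of a cycle with `m` edges traced by the vertex sequence
`v 0, v 1, …, v (m-1)` (indices modulo `m`). -/
def cycleEdgeList {V : Type*} (v : ℕ → V) (m : ℕ) : List (Sym2 V) :=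
  List.ofFn fun i : Fin m => s(v i.val, v ((i.val + 1) % m))

/-- `E` is the edge multiset of a cycle with `m` edges (vertices pairwise distinct);
a cycle of length 2 consists of two parallel edges. -/
def IsCycleM {V : Type*} (E : Multiset (Sym2 V)) (m : ℕ) : Prop :=
  2 ≤ m ∧ ∃ v : ℕ → V, Set.InjOn v (Set.Iio m) ∧ E = ↑(cycleEdgeList v m)

set_option linter.unusedSectionVars false

namespace CPB

variable {V : Type*} [DecidableEq V]

lemma succ_mod {i m : ℕ} (h : i < m) : (i + 1) % m = if i + 1 = m then 0 else i + 1 := by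
  split
  · simp [*, Nat.mod_self]
  · exact Nat.mod_eq_of_lt (by omega)

lemma mem_cycleEdgeList {v : ℕ → V} {m : ℕ} {e : Sym2 V} :
    e ∈ cycleEdgeList v m ↔ ∃ i < m, e = s(v i, v ((i + 1) % m)) := by
  simp only [cycleEdgeList, List.mem_ofFn, Set.mem_range]
  constructor
  · rintro ⟨i, rfl⟩; exact ⟨i.1, i.2, rfl⟩
  · rintro ⟨i, hi, rfl⟩; exact ⟨⟨i, hi⟩, rfl⟩

section cyc
variable {v : ℕ → V} {m : ℕ}

lemma vinj (hv : Set.InjOn v (Set.Iio m)) {i j : ℕ} (hi : i < m) (hj : j < m)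
    (hvij : v i = v j) : i = j :=
  hv (by exact hi) (by exact hj) hvij

lemma einj (h3 : 3 ≤ m) (hv : Set.InjOn v (Set.Iio m)) {i j : ℕ} (hi : i < m) (hj : j < m)
    (he : s(v i, v ((i + 1) % m)) = s(v j, v ((j + 1) % m))) : i = j := by
  have hi1 : (i + 1) % m < m := Nat.mod_lt _ (by omega)
  have hj1 : (j + 1) % m < m := Nat.mod_lt _ (by omega)
  rw [Sym2.eq_iff] at he
  rcases he with ⟨h1, _⟩ | ⟨h1, h2⟩
  · exact vinj hv hi hj h1
  · have e1 : i = (j + 1) % m := vinj hv hi hj1 h1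
    have e2 : (i + 1) % m = j := vinj hv hi1 hj h2
    rw [succ_mod hj] at e1
    rw [succ_mod hi] at e2
    split at e1 <;> split at e2 <;> omega

lemma nodup_cycleEdgeList (h3 : 3 ≤ m) (hv : Set.InjOn v (Set.Iio m)) :
    (cycleEdgeList v m).Nodup := by
  rw [cycleEdgeList, List.nodup_ofFn]
  intro i j hij
  exact Fin.ext (einj h3 hv i.2 j.2 hij)

lemma nondiag_cycleEdgeList (h2 : 2 ≤ m) (hv : Set.InjOn v (Set.Iio m))
    {e : Sym2 V} (he : e ∈ cycleEdgeList v m) : ¬ e.IsDiag := by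
  rw [mem_cycleEdgeList] at he
  obtain ⟨i, hi, rfl⟩ := he
  rw [Sym2.mk_isDiag_iff]
  intro hd
  have hi1 : (i + 1) % m < m := Nat.mod_lt _ (by omega)
  have := vinj hv hi hi1 hd
  rw [succ_mod hi] at this
  split at this <;> omega

end cyc

/-- edge-set of a cycle of length `≥ 3`, as a Finset -/
def IsCycF (C : Finset (Sym2 V)) : Prop :=
  ∃ m v, 3 ≤ m ∧ Set.InjOn v (Set.Iio m) ∧ C = (cycleEdgeList v m).toFinset

/-- degree of a vertex in an edge-set -/
def edeg (A : Finset (Sym2 V)) (x : V) : ℕ := (A.filter (fun e => x ∈ e)).card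

lemma edeg_mono {A B : Finset (Sym2 V)} (h : A ⊆ B) (x : V) : edeg A x ≤ edeg B x :=
  Finset.card_le_card (Finset.filter_subset_filter _ h)

section cycF
variable {C : Finset (Sym2 V)} (hC : IsCycF C)

include hC in
lemma IsCycF.card_ge : 3 ≤ C.card := by
  obtain ⟨m, v, h3, hv, rfl⟩ := hC
  rw [List.card_toFinset, (nodup_cycleEdgeList h3 hv).dedup]
  simpa [cycleEdgeList] using h3

include hC in
lemma IsCycF.nondiag {e : Sym2 V} (he : e ∈ C) : ¬ e.IsDiag := by
  obtain ⟨m, v, h3, hv, rfl⟩ := hC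
  rw [List.mem_toFinset] at he
  exact nondiag_cycleEdgeList (by omega) hv he

include hC in
lemma IsCycF.even_edeg (x : V) : Even (edeg C x) := by
  obtain ⟨m, v, h3, hv, rfl⟩ := hC
  have key : edeg ((cycleEdgeList v m).toFinset) x =
      (((Finset.range m).filter (fun i => x ∈ s(v i, v ((i + 1) % m)))).card) := by
    rw [edeg]
    symm
    apply Finset.card_bij (fun i _ => s(v i, v ((i + 1) % m)))
    · intro i hi
      simp only [Finset.mem_filter, Finset.mem_range] at hi
      simp only [Finset.mem_filter, List.mem_toFinset, mem_cycleEdgeList]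
      exact ⟨⟨i, hi.1, rfl⟩, hi.2⟩
    · intro i hi j hj hij
      simp only [Finset.mem_filter, Finset.mem_range] at hi hj
      exact einj h3 hv hi.1 hj.1 hij
    · intro e he
      simp only [Finset.mem_filter, List.mem_toFinset, mem_cycleEdgeList] at he
      obtain ⟨⟨i, hi, rfl⟩, hx⟩ := he
      exact ⟨i, by simp only [Finset.mem_filter, Finset.mem_range]; exact ⟨hi, hx⟩, rfl⟩
  rw [key]
  by_cases hx : ∃ j < m, v j = x
  · obtain ⟨j, hj, rfl⟩ := hx
    by_cases hj0 : j = 0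
    · subst hj0
      have hset : ((Finset.range m).filter (fun i => v 0 ∈ s(v i, v ((i + 1) % m)))) =
          {0, m - 1} := by
        ext i
        simp only [Finset.mem_filter, Finset.mem_range, Sym2.mem_iff, Finset.mem_insert,
          Finset.mem_singleton]
        constructor
        · rintro ⟨hi, hvi | hvi⟩
          · left; exact vinj hv hi (by omega) hvi.symm
          · right
            have hi1 : (i + 1) % m < m := Nat.mod_lt _ (by omega)
            have := vinj hv hi1 (by omega) hvi.symm
            rw [succ_mod hi] at this
            split at this <;> omega
        · rintro (rfl | rfl)
          · exact ⟨by omega, Or.inl rfl⟩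
          · refine ⟨by omega, Or.inr ?_⟩
            have hmm : (m - 1 + 1) % m = 0 := by
              have : m - 1 + 1 = m := by omega
              rw [this, Nat.mod_self]
            rw [hmm]
      rw [hset, Finset.card_insert_of_notMem (by simp; omega), Finset.card_singleton]
      exact ⟨1, rfl⟩
    · have hset : ((Finset.range m).filter (fun i => v j ∈ s(v i, v ((i + 1) % m)))) =
          {j, j - 1} := by
        ext i
        simp only [Finset.mem_filter, Finset.mem_range, Sym2.mem_iff, Finset.mem_insert,
          Finset.mem_singleton]
        constructor
        · rintro ⟨hi, hvi | hvi⟩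
          · left; exact vinj hv hi hj hvi.symm
          · right
            have hi1 : (i + 1) % m < m := Nat.mod_lt _ (by omega)
            have := vinj hv hi1 hj hvi.symm
            rw [succ_mod hi] at this
            split at this <;> omega
        · rintro (rfl | rfl)
          · exact ⟨hj, Or.inl rfl⟩
          · refine ⟨by omega, Or.inr ?_⟩
            have hmm : (j - 1 + 1) % m = j := by
              have : j - 1 + 1 = j := by omega
              rw [this]; exact Nat.mod_eq_of_lt hj
            rw [hmm]
      rw [hset, Finset.card_insert_of_notMem (by simp; omega), Finset.card_singleton]
      exact ⟨1, rfl⟩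
  · have hset : ((Finset.range m).filter (fun i => x ∈ s(v i, v ((i + 1) % m)))) = ∅ := by
      ext i
      simp only [Finset.mem_filter, Finset.mem_range, Sym2.mem_iff, Finset.notMem_empty,
        iff_false, not_and]
      intro hi
      rintro (rfl | rfl)
      · exact hx ⟨i, hi, rfl⟩
      · exact hx ⟨(i + 1) % m, Nat.mod_lt _ (by omega), rfl⟩
    rw [hset]
    simp

end cycF

section cyc2
variable {v : ℕ → V} {m : ℕ}

lemma edeg_eq_two (h3 : 3 ≤ m) (hv : Set.InjOn v (Set.Iio m)) {j : ℕ} (hj : j < m) :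
    edeg ((cycleEdgeList v m).toFinset) (v j) = 2 := by
  have key : edeg ((cycleEdgeList v m).toFinset) (v j) =
      (((Finset.range m).filter (fun i => v j ∈ s(v i, v ((i + 1) % m)))).card) := by
    rw [edeg]
    symm
    apply Finset.card_bij (fun i _ => s(v i, v ((i + 1) % m)))
    · intro i hi
      simp only [Finset.mem_filter, Finset.mem_range] at hi
      simp only [Finset.mem_filter, List.mem_toFinset, mem_cycleEdgeList]
      exact ⟨⟨i, hi.1, rfl⟩, hi.2⟩
    · intro i hi j' hj' hij
      simp only [Finset.mem_filter, Finset.mem_range] at hi hj'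
      exact einj h3 hv hi.1 hj'.1 hij
    · intro e he
      simp only [Finset.mem_filter, List.mem_toFinset, mem_cycleEdgeList] at he
      obtain ⟨⟨i, hi, rfl⟩, hx⟩ := he
      exact ⟨i, by simp only [Finset.mem_filter, Finset.mem_range]; exact ⟨hi, hx⟩, rfl⟩
  rw [key]
  by_cases hj0 : j = 0
  · subst hj0
    have hset : ((Finset.range m).filter (fun i => v 0 ∈ s(v i, v ((i + 1) % m)))) =
        {0, m - 1} := by
      ext i
      simp only [Finset.mem_filter, Finset.mem_range, Sym2.mem_iff, Finset.mem_insert,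
        Finset.mem_singleton]
      constructor
      · rintro ⟨hi, hvi | hvi⟩
        · left; exact vinj hv hi (by omega) hvi.symm
        · right
          have hi1 : (i + 1) % m < m := Nat.mod_lt _ (by omega)
          have := vinj hv hi1 (by omega) hvi.symm
          rw [succ_mod hi] at this
          split at this <;> omega
      · rintro (rfl | rfl)
        · exact ⟨by omega, Or.inl rfl⟩
        · refine ⟨by omega, Or.inr ?_⟩
          have hmm : (m - 1 + 1) % m = 0 := by
            have : m - 1 + 1 = m := by omega
            rw [this, Nat.mod_self]
          rw [hmm]
    rw [hset, Finset.card_insert_of_notMem (by simp; omega), Finset.card_singleton]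
  · have hset : ((Finset.range m).filter (fun i => v j ∈ s(v i, v ((i + 1) % m)))) =
        {j, j - 1} := by
      ext i
      simp only [Finset.mem_filter, Finset.mem_range, Sym2.mem_iff, Finset.mem_insert,
        Finset.mem_singleton]
      constructor
      · rintro ⟨hi, hvi | hvi⟩
        · left; exact vinj hv hi hj hvi.symm
        · right
          have hi1 : (i + 1) % m < m := Nat.mod_lt _ (by omega)
          have := vinj hv hi1 hj hvi.symm
          rw [succ_mod hi] at this
          split at this <;> omega
      · rintro (rfl | rfl)
        · exact ⟨hj, Or.inl rfl⟩
        · refine ⟨by omega, Or.inr ?_⟩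
          have hmm : (j - 1 + 1) % m = j := by
            have : j - 1 + 1 = j := by omega
            rw [this]; exact Nat.mod_eq_of_lt hj
          rw [hmm]
    rw [hset, Finset.card_insert_of_notMem (by simp; omega), Finset.card_singleton]

end cyc2

/-- a cycle contained in a cycle is the whole cycle -/
lemma cycF_subset_eq {D C : Finset (Sym2 V)} (hD : IsCycF D) (hC : IsCycF C)
    (hsub : D ⊆ C) : D = C := by
  obtain ⟨m, v, hm3, hvinj, rfl⟩ := hD
  obtain ⟨k, w, hk3, hwinj, rfl⟩ := hC
  set D := (cycleEdgeList v m).toFinset with hDdef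
  set C := (cycleEdgeList w k).toFinset with hCdef
  have hvert : ∀ x, (∃ e ∈ D, x ∈ e) → ∃ j < m, v j = x := by
    rintro x ⟨e, he, hx⟩
    rw [hDdef, List.mem_toFinset, mem_cycleEdgeList] at he
    obtain ⟨i, hi, rfl⟩ := he
    rw [Sym2.mem_iff] at hx
    rcases hx with rfl | rfl
    · exact ⟨i, hi, rfl⟩
    · exact ⟨(i + 1) % m, Nat.mod_lt _ (by omega), rfl⟩
  have claimA : ∀ i < k, s(w i, w ((i + 1) % k)) ∈ D →
      s(w ((i + 1) % k), w (((i + 1) % k + 1) % k)) ∈ D := by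
    intro i hi hei
    set i' := (i + 1) % k with hi'def
    have hi' : i' < k := Nat.mod_lt _ (by omega)
    have hxD : ∃ j < m, v j = w i' := hvert _ ⟨_, hei, by rw [Sym2.mem_iff]; right; rfl⟩
    obtain ⟨j, hjm, hjx⟩ := hxD
    have h1 : edeg D (w i') = 2 := by
      rw [← hjx, hDdef]; exact edeg_eq_two hm3 hvinj hjm
    have h2 : edeg C (w i') = 2 := by
      rw [hCdef]; exact edeg_eq_two hk3 hwinj hi'
    have hfil : D.filter (fun e => w i' ∈ e) = C.filter (fun e => w i' ∈ e) := by
      apply Finset.eq_of_subset_of_card_le (Finset.filter_subset_filter _ hsub)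
      rw [show (D.filter (fun e => w i' ∈ e)).card = edeg D (w i') from rfl,
        show (C.filter (fun e => w i' ∈ e)).card = edeg C (w i') from rfl, h1, h2]
    have hmemC : s(w i', w ((i' + 1) % k)) ∈ C.filter (fun e => w i' ∈ e) := by
      rw [Finset.mem_filter]
      refine ⟨?_, by rw [Sym2.mem_iff]; left; rfl⟩
      rw [hCdef, List.mem_toFinset, mem_cycleEdgeList]
      exact ⟨i', hi', rfl⟩
    rw [← hfil, Finset.mem_filter] at hmemC
    exact hmemC.1
  -- starting edge
  have hDne : D.Nonempty := by
    have : 3 ≤ D.card := IsCycF.card_ge ⟨m, v, hm3, hvinj, hDdef⟩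
    exact Finset.card_pos.mp (by omega)
  obtain ⟨e0, he0⟩ := hDne
  have he0C : e0 ∈ C := hsub he0
  rw [hCdef, List.mem_toFinset, mem_cycleEdgeList] at he0C
  obtain ⟨i₀, hi₀, he0eq⟩ := he0C
  subst he0eq
  have hall : ∀ j : ℕ, s(w ((i₀ + j) % k), w (((i₀ + j) % k + 1) % k)) ∈ D := by
    intro j
    induction j with
    | zero =>
      have h0 : (i₀ + 0) % k = i₀ := by simp [Nat.mod_eq_of_lt hi₀]
      rw [h0]
      exact he0
    | succ n ih =>
      have hlt : (i₀ + n) % k < k := Nat.mod_lt _ (by omega)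
      have := claimA _ hlt ih
      have hidx : ((i₀ + n) % k + 1) % k = (i₀ + (n + 1)) % k := by
        rw [Nat.mod_add_mod, ← Nat.add_assoc]
      rw [hidx] at this
      exact this
  apply Finset.Subset.antisymm hsub
  intro e he
  rw [hCdef, List.mem_toFinset, mem_cycleEdgeList] at he
  obtain ⟨i, hi, rfl⟩ := he
  have hj : (i₀ + (i + k - i₀)) % k = i := by
    have h1 : i₀ + (i + k - i₀) = i + k := by omega
    rw [h1, Nat.add_mod_right]
    exact Nat.mod_eq_of_lt hi
  have := hall (i + k - i₀)
  rw [hj] at this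
  exact this

section extract
variable [Fintype V]

lemma exists_cycle_step {T : Finset (Sym2 V)} (hd : ∀ e ∈ T, ¬ e.IsDiag)
    (he : ∀ x, Even (edeg T x)) {x y : V} (hxy : s(x, y) ∈ T) :
    ∃ w, s(x, w) ∈ T ∧ w ≠ x ∧ w ≠ y := by
  have h1 : s(x, y) ∈ T.filter (fun e => x ∈ e) :=
    Finset.mem_filter.mpr ⟨hxy, by rw [Sym2.mem_iff]; exact Or.inl rfl⟩
  have h2 : Even (edeg T x) := he x
  have h0 : 0 < edeg T x := Finset.card_pos.mpr ⟨_, h1⟩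
  have h3 : 1 < edeg T x := by rcases h2 with ⟨c, hc⟩; omega
  obtain ⟨e', he', hne⟩ := Finset.exists_mem_ne h3 s(x, y)
  rw [Finset.mem_filter] at he'
  obtain ⟨w, rfl⟩ := Sym2.mem_iff_exists.mp he'.2
  refine ⟨w, he'.1, ?_, ?_⟩
  · intro h; subst h; exact hd _ he'.1 (Sym2.mk_isDiag_iff.mpr rfl)
  · intro h; subst h; exact hne rfl

lemma cycle_of_chain {T : Finset (Sym2 V)} (d : V) {u : List V} (hnd : u.Nodup)
    (hch : u.Chain' (fun a b => s(a, b) ∈ T)) {j : ℕ} (hjlen : j < u.length) (hj2 : 2 ≤ j)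
    (hclose : s(u.getD j d, u.getD 0 d) ∈ T) :
    ∃ C, IsCycF C ∧ C ⊆ T := by
  set v : ℕ → V := fun i => u.getD i d with hvdef
  refine ⟨(cycleEdgeList v (j + 1)).toFinset, ⟨j + 1, v, by omega, ?_, rfl⟩, ?_⟩
  · intro a ha b hb hab
    simp only [Set.mem_Iio] at ha hb
    have ha' : a < u.length := by omega
    have hb' : b < u.length := by omega
    rw [hvdef] at hab
    simp only at hab
    rw [List.getD_eq_getElem _ _ ha', List.getD_eq_getElem _ _ hb'] at hab
    have := (List.Nodup.get_inj_iff hnd).mp hab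
    exact congrArg Fin.val this
  · intro e he
    rw [List.mem_toFinset, mem_cycleEdgeList] at he
    obtain ⟨i, hi, rfl⟩ := he
    rcases Nat.lt_or_ge i j with hij | hij
    · have hmod : (i + 1) % (j + 1) = i + 1 := Nat.mod_eq_of_lt (by omega)
      rw [hmod]
      have hch' := List.isChain_iff_getElem.mp hch i (by omega)
      have e1 : v i = u.get ⟨i, by omega⟩ := List.getD_eq_getElem _ _ (by omega)
      have e2 : v (i + 1) = u.get ⟨i + 1, by omega⟩ := List.getD_eq_getElem _ _ (by omega)
      rw [e1, e2]
      exact hch'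
    · have hij' : i = j := by omega
      subst hij'
      have hmod : (i + 1) % (i + 1) = 0 := Nat.mod_self _
      rw [hmod]
      exact hclose

lemma found_cycle {T : Finset (Sym2 V)} {x y : V} {rest : List V}
    (hnd : (x :: y :: rest).Nodup)
    (hch : (x :: y :: rest).Chain' (fun a b => s(a, b) ∈ T))
    {w : V} (hw : s(x, w) ∈ T) (hwx : w ≠ x) (hwy : w ≠ y)
    (hwu : w ∈ x :: y :: rest) :
    ∃ C, IsCycF C ∧ C ⊆ T := by
  obtain ⟨⟨j, hjlen⟩, hj⟩ := List.mem_iff_get.mp hwu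
  have hj0 : j ≠ 0 := by rintro rfl; exact hwx hj.symm
  have hj1 : j ≠ 1 := by rintro rfl; exact hwy hj.symm
  apply cycle_of_chain x hnd hch hjlen (by omega)
  have e1 : (x :: y :: rest).getD j x = w := by
    rw [List.getD_eq_getElem _ _ hjlen]; exact hj
  have e0 : (x :: y :: rest).getD 0 x = x := rfl
  rw [e1, e0, Sym2.eq_swap]
  exact hw

lemma grow {T : Finset (Sym2 V)} (hd : ∀ e ∈ T, ¬ e.IsDiag)
    (he : ∀ x, Even (edeg T x)) :
    ∀ (n : ℕ) (x y : V) (rest : List V), (x :: y :: rest).Nodup →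
      Fintype.card V ≤ (x :: y :: rest).length + n →
      (x :: y :: rest).Chain' (fun a b => s(a, b) ∈ T) →
      ∃ C, IsCycF C ∧ C ⊆ T := by
  intro n
  induction n with
  | zero =>
    intro x y rest hnd hcard hch
    have hxy : s(x, y) ∈ T := (List.isChain_cons_cons.mp hch).1
    obtain ⟨w, hw, hwx, hwy⟩ := exists_cycle_step hd he hxy
    have hwu : w ∈ x :: y :: rest := by
      by_contra hno
      have hnd' : (w :: x :: y :: rest).Nodup := List.nodup_cons.mpr ⟨hno, hnd⟩
      have := hnd'.length_le_card
      simp only [List.length_cons] at this hcard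
      omega
    exact found_cycle hnd hch hw hwx hwy hwu
  | succ n ih =>
    intro x y rest hnd hcard hch
    have hxy : s(x, y) ∈ T := (List.isChain_cons_cons.mp hch).1
    obtain ⟨w, hw, hwx, hwy⟩ := exists_cycle_step hd he hxy
    by_cases hwu : w ∈ x :: y :: rest
    · exact found_cycle hnd hch hw hwx hwy hwu
    · apply ih w x (y :: rest) (List.nodup_cons.mpr ⟨hwu, hnd⟩)
      · simp only [List.length_cons] at hcard ⊢
        omega
      · exact List.isChain_cons_cons.mpr ⟨Sym2.eq_swap ▸ hw, hch⟩

lemma exists_cycF_subset {T : Finset (Sym2 V)} (hd : ∀ e ∈ T, ¬ e.IsDiag)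
    (he : ∀ x, Even (edeg T x)) (hne : T.Nonempty) :
    ∃ C, IsCycF C ∧ C ⊆ T := by
  obtain ⟨e0, he0⟩ := hne
  induction e0 using Sym2.ind with
  | _ a b =>
    have hab : a ≠ b := fun h => hd _ he0 (Sym2.mk_isDiag_iff.mpr h)
    apply grow hd he (Fintype.card V) a b []
    · simp [hab]
    · simp only [List.length_cons, List.length_nil]
      omega
    · simp only [List.Chain', List.isChain_cons_cons, List.isChain_singleton, and_true]
      exact he0

end extract

/-- number of members of `L` containing `e` (with multiplicity) -/
def cnt (L : Multiset (Finset (Sym2 V))) (e : Sym2 V) : ℕ :=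
  (L.map (fun C => if e ∈ C then 1 else 0)).sum

@[simp] lemma cnt_zero (e : Sym2 V) : cnt (0 : Multiset (Finset (Sym2 V))) e = 0 := rfl

lemma cnt_cons (C : Finset (Sym2 V)) (L : Multiset (Finset (Sym2 V))) (e : Sym2 V) :
    cnt (C ::ₘ L) e = (if e ∈ C then 1 else 0) + cnt L e := by
  simp [cnt]

lemma cnt_add (M N : Multiset (Finset (Sym2 V))) (e : Sym2 V) :
    cnt (M + N) e = cnt M e + cnt N e := by
  simp [cnt]

lemma exists_mem_of_cnt_pos {L : Multiset (Finset (Sym2 V))} {e : Sym2 V}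
    (h : 0 < cnt L e) : ∃ C ∈ L, e ∈ C := by
  induction L using Multiset.induction with
  | empty => simp [cnt] at h
  | cons C L ih =>
    rw [cnt_cons] at h
    by_cases hC : e ∈ C
    · exact ⟨C, Multiset.mem_cons_self _ _, hC⟩
    · simp only [hC, if_false, Nat.zero_add] at h
      obtain ⟨D, hD, hDe⟩ := ih h
      exact ⟨D, Multiset.mem_cons_of_mem hD, hDe⟩

lemma one_le_cnt {L : Multiset (Finset (Sym2 V))} {C : Finset (Sym2 V)} {e : Sym2 V}
    (hC : C ∈ L) (he : e ∈ C) : 1 ≤ cnt L e := by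
  obtain ⟨L', rfl⟩ := Multiset.exists_cons_of_mem hC
  rw [cnt_cons, if_pos he]
  omega

lemma cnt_swap (L : Multiset (Finset (Sym2 V))) (A : Finset (Sym2 V)) :
    (L.map (fun C => (A.filter (fun e => e ∈ C)).card)).sum = ∑ e ∈ A, cnt L e := by
  induction L using Multiset.induction with
  | empty => simp [cnt]
  | cons C L ih =>
    rw [Multiset.map_cons, Multiset.sum_cons, ih, Finset.card_filter, ← Finset.sum_add_distrib]
    exact Finset.sum_congr rfl (fun e _ => (cnt_cons C L e).symm)

lemma sum_map_card_sub_two (L : Multiset (Finset (Sym2 V))) :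
    (L.map (fun C => (C.card : ℤ) - 2)).sum
      = ((L.map Finset.card).sum : ℤ) - 2 * Multiset.card L := by
  induction L using Multiset.induction with
  | empty => simp
  | cons C L ih =>
    simp only [Multiset.map_cons, Multiset.sum_cons, ih, Multiset.card_cons]
    push_cast
    ring

section decomp
variable [Fintype V]

lemma decomp_even : ∀ (n : ℕ) (T : Finset (Sym2 V)), T.card ≤ n →
    (∀ e ∈ T, ¬ e.IsDiag) → (∀ x, Even (edeg T x)) →
    ∃ M : Multiset (Finset (Sym2 V)), (∀ C ∈ M, IsCycF C) ∧
      ∀ e, cnt M e = if e ∈ T then 1 else 0 := by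
  intro n
  induction n with
  | zero =>
    intro T hcard _ _
    have : T = ∅ := Finset.card_eq_zero.mp (by omega)
    subst this
    exact ⟨0, by simp, fun e => by simp⟩
  | succ n ih =>
    intro T hcard hd he
    rcases T.eq_empty_or_nonempty with rfl | hne
    · exact ⟨0, by simp, fun e => by simp⟩
    · obtain ⟨C, hC, hCT⟩ := exists_cycF_subset hd he hne
      have hC3 : 3 ≤ C.card := hC.card_ge
      have hTcard : (T \ C).card ≤ n := by
        rw [Finset.card_sdiff_of_subset hCT]
        have := Finset.card_le_card hCT
        omega
      have hd' : ∀ e ∈ T \ C, ¬ e.IsDiag := fun e heq => hd e (Finset.mem_sdiff.mp heq).1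
      have he' : ∀ x, Even (edeg (T \ C) x) := by
        intro x
        have hfil : (T \ C).filter (fun e => x ∈ e)
            = T.filter (fun e => x ∈ e) \ C.filter (fun e => x ∈ e) := by
          ext e
          simp only [Finset.mem_filter, Finset.mem_sdiff]
          tauto
        have hsub : C.filter (fun e => x ∈ e) ⊆ T.filter (fun e => x ∈ e) :=
          Finset.filter_subset_filter _ hCT
        have : edeg (T \ C) x = edeg T x - edeg C x := by
          rw [edeg, hfil, Finset.card_sdiff_of_subset hsub]; rfl
        obtain ⟨a, ha⟩ := he x
        obtain ⟨b, hb⟩ := hC.even_edeg x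
        have hle : edeg C x ≤ edeg T x := edeg_mono hCT x
        rw [Nat.even_iff]
        omega
      obtain ⟨M, hM, hMcnt⟩ := ih (T \ C) hTcard hd' he'
      refine ⟨C ::ₘ M, ?_, ?_⟩
      · intro D hD
        rcases Multiset.mem_cons.mp hD with rfl | hD'
        · exact hC
        · exact hM D hD'
      · intro e
        rw [cnt_cons, hMcnt e]
        by_cases heC : e ∈ C
        · have heT : e ∈ T := hCT heC
          simp [heC, heT, Finset.mem_sdiff]
        · by_cases heT : e ∈ T <;> simp [heC, heT, Finset.mem_sdiff]

end decomp

section main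
variable [Fintype V]

/-- edges covered an odd number of times -/
def oddS (L : Multiset (Finset (Sym2 V))) : Finset (Sym2 V) :=
  Finset.univ.filter (fun e => cnt L e % 2 = 1)

lemma mem_oddS {L : Multiset (Finset (Sym2 V))} {e : Sym2 V} :
    e ∈ oddS L ↔ cnt L e % 2 = 1 := by simp [oddS]

lemma three_mul_card_le (L : Multiset (Finset (Sym2 V))) (h : ∀ C ∈ L, 3 ≤ C.card) :
    3 * Multiset.card L ≤ (L.map Finset.card).sum := by
  induction L using Multiset.induction with
  | empty => simp
  | cons C L ih =>
    simp only [Multiset.map_cons, Multiset.sum_cons, Multiset.card_cons]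
    have h1 := h C (Multiset.mem_cons_self _ _)
    have h2 := ih (fun D hD => h D (Multiset.mem_cons_of_mem hD))
    omega

lemma sum_map_sub_cast (L : Multiset (Finset (Sym2 V))) (f g : Finset (Sym2 V) → ℕ) :
    (L.map (fun C => ((f C : ℤ) - g C))).sum
      = ((L.map f).sum : ℤ) - ((L.map g).sum : ℤ) := by
  induction L using Multiset.induction with
  | empty => simp
  | cons C L ih =>
    simp only [Multiset.map_cons, Multiset.sum_cons, ih]
    push_cast
    ring

lemma filter_mem_univ (B : Finset (Sym2 V)) :
    Finset.univ.filter (fun e => e ∈ B) = B := by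
  ext e; simp

lemma main_bound : ∀ (n : ℕ) (L : Multiset (Finset (Sym2 V))),
    (L.map Finset.card).sum ≤ n → (∀ C ∈ L, IsCycF C) →
    ∀ C₀ : Finset (Sym2 V), IsCycF C₀ →
    ((oddS L ∩ C₀).card : ℤ) - ((oddS L \ C₀).card : ℤ)
        - (if oddS L = C₀ then 2 else 0)
      ≤ (L.map (fun C => (C.card : ℤ) - 2)).sum := by
  intro n
  induction n with
  | zero =>
    intro L hsum hL C₀ hC₀
    have hL0 : L = 0 := by
      by_contra h
      obtain ⟨C, hC⟩ := Multiset.exists_mem_of_ne_zero h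
      have h3 := (hL C hC).card_ge
      obtain ⟨L', rfl⟩ := Multiset.exists_cons_of_mem hC
      simp only [Multiset.map_cons, Multiset.sum_cons] at hsum
      omega
    subst hL0
    have hS : oddS (0 : Multiset (Finset (Sym2 V))) = ∅ := by
      ext e; simp [mem_oddS]
    rw [hS]
    have hne : (∅ : Finset (Sym2 V)) ≠ C₀ := by
      intro h
      have h3 := hC₀.card_ge
      rw [← h] at h3
      simp at h3
    simp [hne]
  | succ n ih =>
    intro L hsum hL C₀ hC₀
    by_cases hdisj : ∀ e, cnt L e ≤ 1
    · -- pairwise "disjoint" case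
      have EQ : ∀ A : Finset (Sym2 V),
          (L.map (fun C => (A.filter (fun e => e ∈ C)).card)).sum
            = (A.filter (fun e => e ∈ oddS L)).card := by
        intro A
        rw [cnt_swap, Finset.card_filter]
        refine Finset.sum_congr rfl (fun e _ => ?_)
        have h1 := hdisj e
        by_cases hmem : e ∈ oddS L
        · rw [if_pos hmem]; rw [mem_oddS] at hmem; omega
        · rw [if_neg hmem]; rw [mem_oddS] at hmem; omega
      have htot : (L.map Finset.card).sum = (oddS L).card := by
        have h1 := EQ Finset.univ
        rw [filter_mem_univ] at h1
        rw [← h1]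
        congr 1
        exact Multiset.map_congr rfl (fun C _ => by rw [filter_mem_univ])
      by_cases hC₀L : C₀ ∈ L
      · obtain ⟨L'', hL''⟩ := Multiset.exists_cons_of_mem hC₀L
        have hsub : C₀ ⊆ oddS L := by
          intro e he
          have h1 : 1 ≤ cnt L e := one_le_cnt hC₀L he
          have h2 := hdisj e
          rw [mem_oddS]; omega
        have hSC : (oddS L ∩ C₀).card = C₀.card := by
          rw [Finset.inter_eq_right.mpr hsub]
        have hsplit := Finset.card_inter_add_card_sdiff (oddS L) C₀
        have hLsum_split : (L.map Finset.card).sum = C₀.card + (L''.map Finset.card).sum := by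
          rw [hL'']; simp
        have h3L'' := three_mul_card_le L''
          (fun C hC => (hL C (by rw [hL'']; exact Multiset.mem_cons_of_mem hC)).card_ge)
        have hcardL : Multiset.card L = 1 + Multiset.card L'' := by
          rw [hL'', Multiset.card_cons]; omega
        rw [sum_map_card_sub_two]
        rcases Nat.eq_zero_or_pos (Multiset.card L'') with h0 | hpos
        · have hL''0 : (L''.map Finset.card).sum = 0 := by
            rw [Multiset.card_eq_zero.mp h0]; simp
          have hS : oddS L = C₀ := by
            symm
            apply Finset.eq_of_subset_of_card_le hsub
            omega
          rw [hS, if_pos rfl]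
          rw [Finset.inter_self, Finset.sdiff_self]
          simp only [Finset.card_empty]
          have hk := hC₀.card_ge
          omega
        · have hne : oddS L ≠ C₀ := by
            intro h
            have hz : (oddS L \ C₀).card = 0 := by rw [h]; simp
            omega
          rw [if_neg hne]
          omega
      · -- C₀ not a member: pointwise bound
        have key : ((oddS L ∩ C₀).card : ℤ) - ((oddS L \ C₀).card : ℤ)
            ≤ (L.map (fun C => (C.card : ℤ) - 2)).sum := by
          have hA := EQ C₀
          have hB := EQ C₀ᶜ
          have hA' : C₀.filter (fun e => e ∈ oddS L) = oddS L ∩ C₀ := by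
            ext e; simp only [Finset.mem_filter, Finset.mem_inter]; tauto
          have hB' : C₀ᶜ.filter (fun e => e ∈ oddS L) = oddS L \ C₀ := by
            ext e
            simp only [Finset.mem_filter, Finset.mem_sdiff, Finset.mem_compl]
            tauto
          rw [hA'] at hA
          rw [hB'] at hB
          calc ((oddS L ∩ C₀).card : ℤ) - ((oddS L \ C₀).card : ℤ)
              = ((L.map (fun C => (C₀.filter (fun e => e ∈ C)).card)).sum : ℤ)
                - ((L.map (fun C => (C₀ᶜ.filter (fun e => e ∈ C)).card)).sum : ℤ) := by
                rw [hA, hB]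
            _ = (L.map (fun C => ((C₀.filter (fun e => e ∈ C)).card : ℤ)
                  - ((C₀ᶜ.filter (fun e => e ∈ C)).card : ℤ))).sum := by
                rw [sum_map_sub_cast]
            _ ≤ (L.map (fun C => (C.card : ℤ) - 2)).sum := by
                apply Multiset.sum_map_le_sum_map
                intro C hC
                have hCcy := hL C hC
                have hnsub : ¬ C ⊆ C₀ := by
                  intro hss
                  exact hC₀L (cycF_subset_eq hCcy hC₀ hss ▸ hC)
                have hpart : (C₀.filter (fun e => e ∈ C)).card
                    + (C₀ᶜ.filter (fun e => e ∈ C)).card = C.card := by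
                  have e1 : C₀.filter (fun e => e ∈ C) = C ∩ C₀ := by
                    ext e; simp only [Finset.mem_filter, Finset.mem_inter]; tauto
                  have e2 : C₀ᶜ.filter (fun e => e ∈ C) = C \ C₀ := by
                    ext e
                    simp only [Finset.mem_filter, Finset.mem_sdiff, Finset.mem_compl]
                    tauto
                  rw [e1, e2]
                  exact Finset.card_inter_add_card_sdiff C C₀
                have hb : 1 ≤ (C₀ᶜ.filter (fun e => e ∈ C)).card := by
                  have e2 : C₀ᶜ.filter (fun e => e ∈ C) = C \ C₀ := by
                    ext e
                    simp only [Finset.mem_filter, Finset.mem_sdiff, Finset.mem_compl]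
                    tauto
                  rw [e2]
                  exact Finset.card_pos.mpr (Finset.sdiff_nonempty.mpr hnsub)
                push_cast
                omega
        have hite : (0 : ℤ) ≤ (if oddS L = C₀ then 2 else 0) := by split <;> norm_num
        omega
    · -- two members share an edge: merge them
      push_neg at hdisj
      obtain ⟨e, he2⟩ := hdisj
      have he2' : 2 ≤ cnt L e := he2
      obtain ⟨C₁, hC₁L, heC₁⟩ := exists_mem_of_cnt_pos (show 0 < cnt L e by omega)
      obtain ⟨L₁, hL₁⟩ := Multiset.exists_cons_of_mem hC₁L
      have hcntL₁ : 1 ≤ cnt L₁ e := by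
        rw [hL₁, cnt_cons, if_pos heC₁] at he2'; omega
      obtain ⟨C₂, hC₂L₁, heC₂⟩ := exists_mem_of_cnt_pos (show 0 < cnt L₁ e by omega)
      obtain ⟨L₂, hL₂⟩ := Multiset.exists_cons_of_mem hC₂L₁
      have hC₁cy := hL C₁ hC₁L
      have hC₂cy : IsCycF C₂ := hL C₂ (by rw [hL₁, hL₂]; exact Multiset.mem_cons_of_mem (Multiset.mem_cons_self _ _))
      set T : Finset (Sym2 V) := (C₁ ∪ C₂) \ (C₁ ∩ C₂) with hTdef
      have hTd : ∀ e' ∈ T, ¬ e'.IsDiag := by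
        intro e' he'
        rw [hTdef, Finset.mem_sdiff, Finset.mem_union] at he'
        rcases he'.1 with h | h
        · exact hC₁cy.nondiag h
        · exact hC₂cy.nondiag h
      have hTe : ∀ x, Even (edeg T x) := by
        intro x
        have hfil : T.filter (fun e' => x ∈ e')
            = ((C₁ ∪ C₂).filter (fun e' => x ∈ e'))
              \ ((C₁ ∩ C₂).filter (fun e' => x ∈ e')) := by
          ext e'
          simp only [hTdef, Finset.mem_filter, Finset.mem_sdiff, Finset.mem_union,
            Finset.mem_inter]
          tauto
        have hsubf : (C₁ ∩ C₂).filter (fun e' => x ∈ e')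
            ⊆ (C₁ ∪ C₂).filter (fun e' => x ∈ e') :=
          Finset.filter_subset_filter _ Finset.inter_subset_union
        have h3 : edeg T x = ((C₁ ∪ C₂).filter (fun e' => x ∈ e')).card
            - ((C₁ ∩ C₂).filter (fun e' => x ∈ e')).card := by
          rw [edeg, hfil, Finset.card_sdiff_of_subset hsubf]
        have h4 : ((C₁ ∪ C₂).filter (fun e' => x ∈ e')).card
            + ((C₁ ∩ C₂).filter (fun e' => x ∈ e')).card
            = edeg C₁ x + edeg C₂ x := by
          rw [Finset.filter_union, Finset.filter_inter_distrib]
          exact Finset.card_union_add_card_inter _ _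
        have hcle := Finset.card_le_card hsubf
        obtain ⟨a, ha⟩ := hC₁cy.even_edeg x
        obtain ⟨b, hb⟩ := hC₂cy.even_edeg x
        rw [Nat.even_iff]
        omega
      have hicard : 1 ≤ (C₁ ∩ C₂).card :=
        Finset.card_pos.mpr ⟨e, Finset.mem_inter.mpr ⟨heC₁, heC₂⟩⟩
      have hTcard : T.card + 2 * (C₁ ∩ C₂).card = C₁.card + C₂.card := by
        rw [hTdef, Finset.card_sdiff_of_subset Finset.inter_subset_union]
        have := Finset.card_union_add_card_inter C₁ C₂
        have h5 := Finset.card_le_card (Finset.inter_subset_union (s := C₁) (t := C₂))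
        omega
      obtain ⟨M, hMcy, hMcnt⟩ := decomp_even T.card T le_rfl hTd hTe
      have hMsum : (M.map Finset.card).sum = T.card := by
        have h2 : M.map (fun C => (Finset.univ.filter (fun e => e ∈ C)).card)
            = M.map Finset.card :=
          Multiset.map_congr rfl (fun C _ => by rw [filter_mem_univ])
        have h1 := cnt_swap M Finset.univ
        rw [h2] at h1
        rw [h1, Finset.sum_congr rfl (fun e' _ => hMcnt e'), ← Finset.card_filter,
          filter_mem_univ]
      set L' : Multiset (Finset (Sym2 V)) := M + L₂ with hL'def
      have hL'cy : ∀ C ∈ L', IsCycF C := by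
        intro C hC
        rcases Multiset.mem_add.mp hC with h | h
        · exact hMcy C h
        · exact hL C (by rw [hL₁, hL₂]; exact Multiset.mem_cons_of_mem (Multiset.mem_cons_of_mem h))
      have hLsum : (L.map Finset.card).sum = C₁.card + C₂.card + (L₂.map Finset.card).sum := by
        rw [hL₁, hL₂]; simp [add_assoc]
      have hL'sum : (L'.map Finset.card).sum = (M.map Finset.card).sum + (L₂.map Finset.card).sum := by
        rw [hL'def]; simp
      have hc₁ := hC₁cy.card_ge
      have hc₂ := hC₂cy.card_ge
      have hsum' : (L'.map Finset.card).sum ≤ n := by omega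
      have hcnt' : ∀ e', cnt L' e' % 2 = cnt L e' % 2 := by
        intro e'
        rw [hL'def, cnt_add, hMcnt e', hL₁, hL₂, cnt_cons, cnt_cons]
        by_cases h1 : e' ∈ C₁ <;> by_cases h2 : e' ∈ C₂
        · have hnT : e' ∉ T := by
            rw [hTdef, Finset.mem_sdiff, Finset.mem_inter]
            tauto
          simp only [h1, h2, hnT, if_true, if_false, if_neg hnT]
          omega
        · have hT : e' ∈ T := by
            rw [hTdef, Finset.mem_sdiff, Finset.mem_union, Finset.mem_inter]
            tauto
          simp only [h1, h2, hT, if_true, if_false, if_pos hT]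
          omega
        · have hT : e' ∈ T := by
            rw [hTdef, Finset.mem_sdiff, Finset.mem_union, Finset.mem_inter]
            tauto
          simp only [h1, h2, hT, if_true, if_false, if_pos hT]
          omega
        · have hnT : e' ∉ T := by
            rw [hTdef, Finset.mem_sdiff, Finset.mem_union]
            tauto
          simp only [h1, h2, if_false, if_neg hnT]
          omega
      have hSeq : oddS L' = oddS L := by
        ext e'
        rw [mem_oddS, mem_oddS, hcnt' e']
      have hRHS : (L'.map (fun C => (C.card : ℤ) - 2)).sum
          ≤ (L.map (fun C => (C.card : ℤ) - 2)).sum := by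
        rw [sum_map_card_sub_two, sum_map_card_sub_two]
        have hcardL : Multiset.card L = 2 + Multiset.card L₂ := by
          rw [hL₁, hL₂, Multiset.card_cons, Multiset.card_cons]; omega
        have hcardL' : Multiset.card L' = Multiset.card M + Multiset.card L₂ := by
          rw [hL'def]; simp
        have h3M := three_mul_card_le M (fun C hC => (hMcy C hC).card_ge)
        rcases Nat.eq_zero_or_pos (Multiset.card M) with h0 | hposM
        · have hM0 : (M.map Finset.card).sum = 0 := by
            rw [Multiset.card_eq_zero.mp h0]; simp
          omega
        · omega
      have hkey := ih L' hsum' hL'cy C₀ hC₀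
      rw [hSeq] at hkey
      exact le_trans hkey hRHS

end main

section glue
variable {V : Type*} [DecidableEq V]

lemma cycleM_card {E : Multiset (Sym2 V)} {m : ℕ} (h : IsCycleM E m) :
    Multiset.card E = m := by
  obtain ⟨h2, v, hv, rfl⟩ := h
  rw [Multiset.coe_card]
  simp [cycleEdgeList]

lemma cycleM_long {E : Multiset (Sym2 V)} {m : ℕ} (h : IsCycleM E m) (h3 : 3 ≤ m) :
    IsCycF E.toFinset ∧ ∀ e, Multiset.count e E = if e ∈ E.toFinset then 1 else 0 := by
  obtain ⟨h2, v, hv, heq⟩ := h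
  subst heq
  have hnd : (cycleEdgeList v m).Nodup := nodup_cycleEdgeList h3 hv
  have hndm : Multiset.Nodup (↑(cycleEdgeList v m) : Multiset (Sym2 V)) := hnd
  constructor
  · exact ⟨m, v, h3, hv, by simp⟩
  · intro e
    by_cases he : e ∈ (↑(cycleEdgeList v m) : Multiset (Sym2 V))
    · rw [if_pos (Multiset.mem_toFinset.mpr he)]
      exact Multiset.count_eq_one_of_mem hndm he
    · rw [if_neg (fun hc => he (Multiset.mem_toFinset.mp hc))]
      exact Multiset.count_eq_zero_of_notMem he

lemma cycleM_short {E : Multiset (Sym2 V)} (h : IsCycleM E 2) :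
    ∀ e, Even (Multiset.count e E) := by
  obtain ⟨-, v, hv, heq⟩ := h
  subst heq
  intro e
  have hl : cycleEdgeList v 2 = [s(v 0, v 1), s(v 0, v 1)] := by
    simp only [cycleEdgeList]
    norm_num [List.ofFn_succ]
  rw [hl]
  have : (↑[s(v 0, v 1), s(v 0, v 1)] : Multiset (Sym2 V))
      = s(v 0, v 1) ::ₘ s(v 0, v 1) ::ₘ 0 := rfl
  rw [this]
  by_cases he : e = s(v 0, v 1) <;> simp [Multiset.count_cons, he]

lemma count_msum (X : Multiset (Multiset (Sym2 V))) (e : Sym2 V) :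
    Multiset.count e X.sum = (X.map (fun C => Multiset.count e C)).sum := by
  induction X using Multiset.induction with
  | empty => simp
  | cons C X ih => simp [ih]

lemma card_msum (X : Multiset (Multiset (Sym2 V))) :
    Multiset.card X.sum = (X.map Multiset.card).sum := by
  induction X using Multiset.induction with
  | empty => simp
  | cons C X ih => simp [ih]

lemma even_msum (X : Multiset ℕ) (h : ∀ x ∈ X, x % 2 = 0) : X.sum % 2 = 0 := by
  induction X using Multiset.induction with
  | empty => simp
  | cons a X ih =>
    rw [Multiset.sum_cons]
    have h1 := h a (Multiset.mem_cons_self _ _)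
    have h2 := ih (fun x hx => h x (Multiset.mem_cons_of_mem hx))
    omega

lemma sum_const_two (X : Multiset (Multiset (Sym2 V))) (h : ∀ C ∈ X, Multiset.card C = 2) :
    (X.map Multiset.card).sum = 2 * Multiset.card X := by
  induction X using Multiset.induction with
  | empty => simp
  | cons C X ih =>
    simp only [Multiset.map_cons, Multiset.sum_cons, Multiset.card_cons]
    have h1 := h C (Multiset.mem_cons_self _ _)
    have h2 := ih (fun D hD => h D (Multiset.mem_cons_of_mem hD))
    omega

lemma card_eq_sum_count [Fintype V] (R : Multiset (Sym2 V)) :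
    Multiset.card R = ∑ e ∈ Finset.univ, Multiset.count e R := by
  rw [← Multiset.toFinset_sum_count_eq R]
  apply Finset.sum_subset (Finset.subset_univ _)
  intro e _ he
  exact Multiset.count_eq_zero_of_notMem (fun hc => he (Multiset.mem_toFinset.mpr hc))

end glue

end CPB

/-- **Lemma 6 of the paper.**  Let `G` be a multigraph (edge multiset on vertex set `V`)
in which every pair of distinct vertices is joined by an even number of edges.  Let `P`
be a cycle packing of `G` and `C₀ ∈ P`.  Then
`|P| ≤ |E(G)|/2 − |E(C₀)| + f(G,P)`, where `f(G,P) = 2` if `P` is a decomposition of `G`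
and `f(G,P) = 1` otherwise. -/
theorem cycle_packing_card_bound {V : Type*} [Fintype V] [DecidableEq V]
    (G : Multiset (Sym2 V)) (hloop : ∀ e ∈ G, ¬ e.IsDiag)
    (heven : ∀ e : Sym2 V, Even (G.count e))
    (P : Multiset (Multiset (Sym2 V)))
    (hcyc : ∀ C ∈ P, ∃ m, IsCycleM C m)
    (hpack : P.sum ≤ G)
    (C₀ : Multiset (Sym2 V)) (hC₀ : C₀ ∈ P) :
    (Multiset.card P : ℤ) ≤ (Multiset.card G : ℤ) / 2 - Multiset.card C₀ +
      (if P.sum = G then 2 else 1) := by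
  classical
  set R : Multiset (Sym2 V) := G - P.sum with hRdef
  have hcountG : ∀ e, Multiset.count e G = Multiset.count e P.sum + Multiset.count e R := by
    intro e
    rw [hRdef, Multiset.count_sub]
    have h1 := Multiset.count_le_of_le e hpack
    omega
  set Plong := P.filter (fun C => 3 ≤ Multiset.card C) with hPlongdef
  set Pshort := P.filter (fun C => ¬ 3 ≤ Multiset.card C) with hPshortdef
  have hPsplit : Plong + Pshort = P := Multiset.filter_add_not _ P
  set L : Multiset (Finset (Sym2 V)) := Plong.map Multiset.toFinset with hLdef
  have hlong : ∀ C ∈ Plong, CPB.IsCycF C.toFinset ∧ C.toFinset.card = Multiset.card C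
      ∧ ∀ e, Multiset.count e C = if e ∈ C.toFinset then 1 else 0 := by
    intro C hC
    rw [hPlongdef, Multiset.mem_filter] at hC
    obtain ⟨m, hm⟩ := hcyc C hC.1
    have hcards := CPB.cycleM_card hm
    have h3 : 3 ≤ m := by omega
    obtain ⟨hcy, hcnt⟩ := CPB.cycleM_long hm h3
    have hnd : C.Nodup := Multiset.nodup_iff_count_le_one.mpr
      (fun e => by rw [hcnt e]; split <;> omega)
    exact ⟨hcy, Multiset.toFinset_card_of_nodup hnd, hcnt⟩
  have hLcy : ∀ Cf ∈ L, CPB.IsCycF Cf := by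
    intro Cf hCf
    rw [hLdef] at hCf
    obtain ⟨C, hC, rfl⟩ := Multiset.mem_map.mp hCf
    exact (hlong C hC).1
  have hshort : ∀ C ∈ Pshort, Multiset.card C = 2 ∧ ∀ e, (Multiset.count e C) % 2 = 0 := by
    intro C hC
    rw [hPshortdef, Multiset.mem_filter] at hC
    obtain ⟨m, hm⟩ := hcyc C hC.1
    have hcards := CPB.cycleM_card hm
    have hm2 : m = 2 := by have := hm.1; omega
    subst hm2
    exact ⟨hcards, fun e => Nat.even_iff.mp (CPB.cycleM_short hm e)⟩
  have hPsumcnt : ∀ e, Multiset.count e P.sum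
      = CPB.cnt L e + (Pshort.map (fun C => Multiset.count e C)).sum := by
    intro e
    rw [← hPsplit, Multiset.sum_add, Multiset.count_add, CPB.count_msum, CPB.count_msum]
    congr 1
    have hc : CPB.cnt L e = (Plong.map (fun C => if e ∈ C.toFinset then 1 else 0)).sum := by
      rw [CPB.cnt, hLdef, Multiset.map_map]; rfl
    rw [hc]
    exact congrArg Multiset.sum (Multiset.map_congr rfl (fun C hC => (hlong C hC).2.2 e))
  have hparR : ∀ e, (Multiset.count e R) % 2 = (CPB.cnt L e) % 2 := by
    intro e
    have h1 := hcountG e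
    have h2 := Nat.even_iff.mp (heven e)
    have h3 := hPsumcnt e
    have h4 : (Pshort.map (fun C => Multiset.count e C)).sum % 2 = 0 := by
      apply CPB.even_msum
      intro x hx
      obtain ⟨C, hC, rfl⟩ := Multiset.mem_map.mp hx
      exact (hshort C hC).2 e
    omega
  set S := CPB.oddS L with hSdef
  have hrparity : Multiset.card R % 2 = S.card % 2 ∧ S.card ≤ Multiset.card R := by
    have hcardR := CPB.card_eq_sum_count R
    have hcardS : S.card = ∑ e ∈ Finset.univ, (if e ∈ S then 1 else 0) := by
      rw [← Finset.card_filter, CPB.filter_mem_univ]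
    constructor
    · rw [hcardR, hcardS, Finset.sum_nat_mod,
        Finset.sum_nat_mod Finset.univ 2 (fun e => if e ∈ S then 1 else 0)]
      congr 1
      apply Finset.sum_congr rfl
      intro e _
      have hp := hparR e
      by_cases he : e ∈ S
      · rw [if_pos he]; rw [hSdef, CPB.mem_oddS] at he; omega
      · rw [if_neg he]; rw [hSdef, CPB.mem_oddS] at he; omega
    · rw [hcardR, hcardS]
      apply Finset.sum_le_sum
      intro e _
      by_cases he : e ∈ S
      · rw [if_pos he]
        rw [hSdef, CPB.mem_oddS] at he
        have := hparR e
        omega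
      · rw [if_neg he]; omega
  have hGsplit : Multiset.card G = (L.map Finset.card).sum + 2 * Multiset.card Pshort
      + Multiset.card R := by
    have h1 : Multiset.card G = Multiset.card P.sum + Multiset.card R := by
      rw [hRdef, Multiset.card_sub hpack]
      have := Multiset.card_le_card hpack
      omega
    have h2 : Multiset.card P.sum
        = (Plong.map Multiset.card).sum + (Pshort.map Multiset.card).sum := by
      rw [← hPsplit, Multiset.sum_add, Multiset.card_add, CPB.card_msum, CPB.card_msum]
    have h3 : (Pshort.map Multiset.card).sum = 2 * Multiset.card Pshort :=
      CPB.sum_const_two _ (fun C hC => (hshort C hC).1)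
    have h4 : (L.map Finset.card).sum = (Plong.map Multiset.card).sum := by
      rw [hLdef, Multiset.map_map]
      exact congrArg _ (Multiset.map_congr rfl (fun C hC => (hlong C hC).2.1))
    omega
  have hPcard : Multiset.card P = Multiset.card L + Multiset.card Pshort := by
    rw [← hPsplit, Multiset.card_add, hLdef, Multiset.card_map]
  have hGeven : Multiset.card G % 2 = 0 := by
    rw [CPB.card_eq_sum_count G, Finset.sum_nat_mod]
    have h5 : ∀ e ∈ Finset.univ, Multiset.count e G % 2 = 0 :=
      fun e _ => Nat.even_iff.mp (heven e)
    rw [Finset.sum_congr rfl h5]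
    simp
  have hLcards : ∀ Cf ∈ L, 3 ≤ Cf.card := fun Cf hCf => (hLcy Cf hCf).card_ge
  have hL3 := CPB.three_mul_card_le L hLcards
  have hSZ := CPB.sum_map_card_sub_two L
  have hR0 : P.sum = G → Multiset.card R = 0 := by
    intro h; rw [hRdef, h]; simp
  have hR1 : P.sum ≠ G → 1 ≤ Multiset.card R := by
    intro h
    rcases Nat.eq_zero_or_pos (Multiset.card R) with h0 | h1
    · exfalso
      have hz : R = 0 := Multiset.card_eq_zero.mp h0
      rw [hRdef] at hz
      have hle : G ≤ P.sum := tsub_eq_zero_iff_le.mp hz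
      exact h (le_antisymm hpack hle)
    · exact h1
  have hKEY : (2 * Multiset.card C₀ : ℤ) - 2 * (if P.sum = G then (2:ℤ) else 1)
      - Multiset.card R ≤ (L.map (fun C => (C.card : ℤ) - 2)).sum := by
    obtain ⟨m₀, hm₀⟩ := hcyc C₀ hC₀
    have hk := CPB.cycleM_card hm₀
    rcases Nat.lt_or_ge (Multiset.card C₀) 3 with hk2 | hk3
    · have hknum : Multiset.card C₀ = 2 := by have := hm₀.1; omega
      have hLlow : (Multiset.card L : ℤ) ≤ (L.map (fun C => (C.card : ℤ) - 2)).sum := by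
        rw [hSZ]; omega
      by_cases hfg : P.sum = G
      · have hr0 := hR0 hfg
        rw [if_pos hfg, hknum]
        omega
      · have hr1 := hR1 hfg
        rw [if_neg hfg, hknum]
        rcases Nat.lt_or_ge (Multiset.card R) 2 with hrlt | hrge
        · have hr : Multiset.card R = 1 := by omega
          have hS1 : 1 ≤ S.card := by
            rcases Nat.eq_zero_or_pos S.card with h0 | h1
            · exfalso; have := hrparity.1; omega
            · exact h1
          obtain ⟨e, he⟩ := Finset.card_pos.mp hS1
          rw [hSdef, CPB.mem_oddS] at he
          obtain ⟨Cf, hCf, -⟩ := CPB.exists_mem_of_cnt_pos (show 0 < CPB.cnt L e by omega)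
          have hL1 : 1 ≤ Multiset.card L := by
            rcases Multiset.exists_cons_of_mem hCf with ⟨t, ht⟩
            rw [ht, Multiset.card_cons]; omega
          omega
        · omega
    · have hC₀Plong : C₀ ∈ Plong := by
        rw [hPlongdef, Multiset.mem_filter]; exact ⟨hC₀, hk3⟩
      obtain ⟨hF₀cy, hF₀card, -⟩ := hlong C₀ hC₀Plong
      set F₀ := C₀.toFinset with hF₀def
      have hF₀L : F₀ ∈ L := by
        rw [hLdef]; exact Multiset.mem_map_of_mem _ hC₀Plong
      set L' := L.erase F₀ with hL'def
      have hLL' : L = F₀ ::ₘ L' := (Multiset.cons_erase hF₀L).symm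
      have hL'cy : ∀ Cf ∈ L', CPB.IsCycF Cf :=
        fun Cf hCf => hLcy Cf (Multiset.mem_of_mem_erase hCf)
      have hmb := CPB.main_bound ((L'.map Finset.card).sum) L' le_rfl hL'cy F₀ hF₀cy
      have hrel : ∀ e, CPB.cnt L e = (if e ∈ F₀ then 1 else 0) + CPB.cnt L' e := by
        intro e; rw [hLL', CPB.cnt_cons]
      set S' := CPB.oddS L' with hS'def
      have h1 : S' ∩ F₀ = F₀ \ S := by
        ext e
        simp only [Finset.mem_inter, Finset.mem_sdiff, hS'def, hSdef, CPB.mem_oddS]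
        have hre := hrel e
        constructor
        · rintro ⟨hS', hF⟩
          rw [if_pos hF] at hre
          exact ⟨hF, by omega⟩
        · rintro ⟨hF, hnS⟩
          rw [if_pos hF] at hre
          exact ⟨by omega, hF⟩
      have h2 : S' \ F₀ = S \ F₀ := by
        ext e
        simp only [Finset.mem_sdiff, hS'def, hSdef, CPB.mem_oddS]
        have hre := hrel e
        constructor
        · rintro ⟨hS', hF⟩
          rw [if_neg hF] at hre
          exact ⟨by omega, hF⟩
        · rintro ⟨hS, hF⟩
          rw [if_neg hF] at hre
          exact ⟨by omega, hF⟩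
      have hsum_split : (L.map (fun C => (C.card : ℤ) - 2)).sum
          = ((F₀.card : ℤ) - 2) + (L'.map (fun C => (C.card : ℤ) - 2)).sum := by
        rw [hLL', Multiset.map_cons, Multiset.sum_cons]
      have hsplitF := Finset.card_inter_add_card_sdiff F₀ S
      have hsplitS := Finset.card_inter_add_card_sdiff S F₀
      have hcomm : (S ∩ F₀).card = (F₀ ∩ S).card := by rw [Finset.inter_comm]
      rw [h1, h2] at hmb
      by_cases hS'F : S' = F₀
      · rw [if_pos hS'F] at hmb
        have haF : (F₀ \ S).card = F₀.card := by
          rw [← h1, hS'F, Finset.inter_self]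
        have hbF : (S \ F₀).card = 0 := by
          rw [← h2, hS'F, Finset.sdiff_self, Finset.card_empty]
        by_cases hfg : P.sum = G
        · have hr0 := hR0 hfg
          rw [if_pos hfg]
          omega
        · have hr1 := hR1 hfg
          have hpar := hrparity.1
          rw [if_neg hfg]
          omega
      · rw [if_neg hS'F] at hmb
        by_cases hfg : P.sum = G
        · have hr0 := hR0 hfg
          have hrp := hrparity.2
          rw [if_pos hfg]
          omega
        · have hr1 := hR1 hfg
          have hrp := hrparity.2
          rw [if_neg hfg]
          omega
  have hdiv : (Multiset.card G : ℤ) / 2 = ((Multiset.card G / 2 : ℕ) : ℤ) := by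
    have hGc2 : Multiset.card G = 2 * (Multiset.card G / 2) := by omega
    rw [show (Multiset.card G : ℤ) = 2 * ((Multiset.card G / 2 : ℕ) : ℤ) by
      exact_mod_cast hGc2]
    exact Int.mul_ediv_cancel_left _ (by norm_num)
  rw [hdiv]
  have hGc2 : Multiset.card G = 2 * (Multiset.card G / 2) := by omega
  by_cases hfg : P.sum = G
  · rw [if_pos hfg] at hKEY ⊢
    omega
  · rw [if_neg hfg] at hKEY ⊢
    omega
end

section
/- Let k, n be natural numbers with 3 ≤ k ≤ n and let S ⊆ [n]^{(k)} be nonempty. Define the real number s ≥ k by |S| = C(s, k) (generalized binomial coefficient s(s−1)⋯(s−k+1)/k!). Then |δ_{k−2}^-(S)| ≥ C(s, 2) = s(s−1)/2. -/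
open scoped BigOperators

/-- The set of all `r`-subsets of `Fin n` contained in some member of `S`
(for `S ⊆ [n]^{(k)}` and `r = k − ℓ`, this is the `ℓ`-th lower shadow `δ_ℓ^-(S)`). -/
def lowerShadow (n r : ℕ) (S : Finset (Finset (Fin n))) : Finset (Finset (Fin n)) :=
  Finset.univ.filter fun t => t.card = r ∧ ∃ A ∈ S, t ⊆ A

/-- The generalized binomial coefficient `C(s, k) = s(s−1)⋯(s−k+1)/k!` for real `s`. -/
noncomputable def genBinom (s : ℝ) (k : ℕ) : ℝ :=
  (∏ i ∈ Finset.range k, (s - i)) / (Nat.factorial k)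


namespace GB

lemma genBinom_zero (s : ℝ) : genBinom s 0 = 1 := by simp [genBinom]

lemma prod_succ' (s : ℝ) (k : ℕ) :
    (∏ i ∈ Finset.range (k+1), (s - i)) = s * ∏ i ∈ Finset.range k, (s - 1 - i) := by
  rw [Finset.prod_range_succ']
  simp only [Nat.cast_zero, sub_zero, Nat.cast_add, Nat.cast_one]
  rw [mul_comm]
  congr 1
  apply Finset.prod_congr rfl
  intro i _
  ring

lemma genBinom_succ (s : ℝ) (k : ℕ) :
    genBinom s (k+1) = s / (k+1) * genBinom (s-1) k := by
  rw [genBinom, genBinom, prod_succ', Nat.factorial_succ]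
  have h1 : ((k:ℝ)+1) ≠ 0 := by positivity
  have h2 : (Nat.factorial k : ℝ) ≠ 0 := by positivity
  push_cast
  field_simp

lemma prod_nonneg {s : ℝ} {k : ℕ} (h : (k:ℝ) - 1 ≤ s) :
    0 ≤ ∏ i ∈ Finset.range k, (s - i) := by
  apply Finset.prod_nonneg
  intro i hi
  rw [Finset.mem_range] at hi
  have : (i:ℝ) ≤ (k:ℝ) - 1 := by
    have : (i:ℝ) + 1 ≤ k := by exact_mod_cast Nat.succ_le_of_lt hi
    linarith
  linarith

lemma genBinom_nonneg {s : ℝ} {k : ℕ} (h : (k:ℝ) - 1 ≤ s) : 0 ≤ genBinom s k := by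
  have := prod_nonneg h
  have h2 : (0:ℝ) < Nat.factorial k := by positivity
  rw [genBinom]
  positivity

lemma genBinom_lt_genBinom {y z : ℝ} {k : ℕ} (hk : 1 ≤ k) (hy : (k:ℝ) - 1 ≤ y) (hyz : y < z) :
    genBinom y k < genBinom z k := by
  rw [genBinom, genBinom, div_lt_div_iff_of_pos_right (by positivity)]
  have hz : ∀ i ∈ Finset.range k, (0:ℝ) < z - i := by
    intro i hi
    rw [Finset.mem_range] at hi
    have : (i:ℝ) + 1 ≤ k := by exact_mod_cast Nat.succ_le_of_lt hi
    linarith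
  rcases eq_or_lt_of_le hy with hy' | hy'
  · have : (∏ i ∈ Finset.range k, (y - i)) = 0 := by
      apply Finset.prod_eq_zero (i := k-1)
      · simp only [Finset.mem_range]; omega
      · have : ((k-1 : ℕ) : ℝ) = (k:ℝ) - 1 := by
          have : (1:ℕ) ≤ k := hk
          push_cast [Nat.cast_sub this]
          ring
        rw [this, ← hy']
        ring
    rw [this]
    exact Finset.prod_pos hz
  · apply Finset.prod_lt_prod_of_nonempty
    · intro i hi
      rw [Finset.mem_range] at hi
      have : (i:ℝ) + 1 ≤ k := by exact_mod_cast Nat.succ_le_of_lt hi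
      linarith
    · intro i _; linarith
    · rw [Finset.nonempty_range_iff]; omega

end GB

namespace GB2
open GB

lemma genBinom_succ' (s : ℝ) (k : ℕ) :
    genBinom s (k+1) = genBinom s k * (s - k) / (k+1) := by
  rw [genBinom, genBinom, Finset.prod_range_succ, Nat.factorial_succ]
  have h1 : ((k:ℝ)+1) ≠ 0 := by positivity
  have h2 : (Nat.factorial k : ℝ) ≠ 0 := by positivity
  push_cast
  field_simp

lemma pascal (s : ℝ) (k : ℕ) :
    genBinom s (k+1) = genBinom (s-1) (k+1) + genBinom (s-1) k := by
  rw [genBinom_succ s k, genBinom_succ' (s-1) k]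
  have h1 : ((k:ℝ)+1) ≠ 0 := by positivity
  field_simp
  ring

lemma genBinom_self (k : ℕ) : genBinom (k:ℝ) k = 1 := by
  induction k with
  | zero => simp [genBinom]
  | succ k ih =>
      rw [genBinom_succ]
      push_cast
      rw [show ((k:ℝ) + 1 - 1) = (k:ℝ) by ring, ih]
      have : ((k:ℝ)+1) ≠ 0 := by positivity
      field_simp

lemma genBinom_le_genBinom {y z : ℝ} {k : ℕ} (hy : (k:ℝ) - 1 ≤ y) (hyz : y ≤ z) :
    genBinom y k ≤ genBinom z k := by
  rcases Nat.eq_zero_or_pos k with rfl | hk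
  · simp [genBinom]
  rcases eq_or_lt_of_le hyz with rfl | h
  · exact le_refl _
  · exact (genBinom_lt_genBinom hk hy h).le

lemma one_le_genBinom {s : ℝ} {k : ℕ} (h : (k:ℝ) ≤ s) : 1 ≤ genBinom s k := by
  have := genBinom_le_genBinom (y := (k:ℝ)) (z := s) (k := k) (by linarith) h
  rwa [genBinom_self] at this

lemma genBinom_shift_le {x : ℝ} {k : ℕ} (hx : ((k:ℝ)+1) ≤ x) :
    genBinom (x-1) k ≤ genBinom x (k+1) := by
  rw [genBinom_succ]
  have hG : 0 ≤ genBinom (x-1) k := genBinom_nonneg (by linarith)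
  have h1 : (1:ℝ) ≤ x / (k+1) := by
    rw [le_div_iff₀ (by positivity)]
    linarith
  nlinarith

lemma exists_genBinom_eq {k : ℕ} (hk : 1 ≤ k) {c : ℝ} (hc : 1 ≤ c) :
    ∃ x : ℝ, (k:ℝ) ≤ x ∧ genBinom x k = c := by
  set b : ℝ := (k:ℝ) + (Nat.factorial k) * c with hb
  have hfac1 : (1:ℝ) ≤ Nat.factorial k := by exact_mod_cast Nat.one_le_iff_ne_zero.2 (Nat.factorial_ne_zero k)
  have hkb : (k:ℝ) ≤ b := by nlinarith
  have hfc : (1:ℝ) ≤ (Nat.factorial k : ℝ) * c := by nlinarith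
  have hbond : c ≤ genBinom b k := by
    obtain ⟨m, rfl⟩ : ∃ m, k = m + 1 := ⟨k - 1, by omega⟩
    have hone : ∀ i ∈ Finset.range m, (1:ℝ) ≤ b - ((i:ℝ)+1) := by
      intro i hi
      rw [Finset.mem_range] at hi
      have h3 : (i:ℝ) + 1 ≤ (m:ℝ) + 1 := by
        have : (i:ℝ) ≤ (m:ℝ) := by exact_mod_cast hi.le
        linarith
      push_cast at hkb hb ⊢
      nlinarith
    have h1 : (1:ℝ) ≤ ∏ i ∈ Finset.range m, (b - ((i:ℕ)+1 : ℕ)) := by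
      have h0 : (∏ _i ∈ Finset.range m, (1:ℝ)) ≤ ∏ i ∈ Finset.range m, (b - ((i:ℕ)+1 : ℕ)) := by
        apply Finset.prod_le_prod
        · intro i _; norm_num
        · intro i hi
          have := hone i hi
          push_cast at this ⊢
          linarith
      simpa using h0
    have hprod : b ≤ ∏ i ∈ Finset.range (m+1), (b - i) := by
      rw [Finset.prod_range_succ']
      push_cast
      have hb0 : (0:ℝ) ≤ b := by positivity
      push_cast at h1
      nlinarith
    rw [genBinom, le_div_iff₀ (by positivity)]
    have : c * (Nat.factorial (m+1) : ℝ) ≤ b := by rw [hb]; push_cast; nlinarith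
    linarith
  have hcont : ContinuousOn (fun x : ℝ => genBinom x k) (Set.Icc (k:ℝ) b) := by
    apply Continuous.continuousOn
    unfold genBinom
    fun_prop
  have := intermediate_value_Icc hkb hcont
  have hmem : c ∈ Set.Icc (genBinom (k:ℝ) k) (genBinom b k) := by
    rw [genBinom_self]
    exact ⟨hc, hbond⟩
  obtain ⟨x, hx, hxc⟩ := this hmem
  exact ⟨x, hx.1, hxc⟩

end GB2


section Comb
open Finset
open scoped FinsetFamily


def Shifted (F : Finset (Finset (Fin n))) : Prop :=
  ∀ i j : Fin n, i < j → UV.IsCompressed {i} {j} F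

lemma compress_singleton {i j : Fin n} (hij : i ≠ j) {A : Finset (Fin n)}
    (hj : j ∈ A) (hi : i ∉ A) :
    UV.compress {i} {j} A = insert i (A.erase j) := by
  rw [UV.compress, if_pos ⟨by simpa using hi, by simpa using hj⟩]
  ext a
  simp only [mem_sdiff, mem_sup, sup_eq_union, mem_union, mem_singleton, mem_insert, mem_erase]
  constructor
  · rintro ⟨h1 | h1, h2⟩
    · exact Or.inr ⟨h2, h1⟩
    · exact Or.inl h1
  · rintro (rfl | ⟨h1, h2⟩)
    · exact ⟨Or.inr rfl, hij⟩
    · exact ⟨Or.inl h2, h1⟩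

lemma Shifted.insert_erase_mem {F : Finset (Finset (Fin n))} (hF : Shifted F)
    {A : Finset (Fin n)} (hA : A ∈ F) {i j : Fin n} (hij : i < j) (hj : j ∈ A) (hi : i ∉ A) :
    insert i (A.erase j) ∈ F := by
  have h1 := UV.compress_mem_compression (u := ({i} : Finset (Fin n))) (v := {j}) hA
  rw [hF i j hij, compress_singleton hij.ne hj hi] at h1
  exact h1

def famMeasure (F : Finset (Finset (Fin n))) : ℕ := ∑ A ∈ F, ∑ a ∈ A, (a : ℕ)

lemma famMeasure_compression_lt {i j : Fin n} (hij : i < j) {F : Finset (Finset (Fin n))}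
    (h : UV.compression {i} {j} F ≠ F) :
    famMeasure (UV.compression {i} {j} F) < famMeasure F := by
  set u : Finset (Fin n) := {i}
  set v : Finset (Fin n) := {j}
  rw [UV.compression] at h ⊢
  have q : ∀ Q ∈ F.filter (fun A => UV.compress u v A ∉ F), UV.compress u v Q ≠ Q := by
    intro Q hQ hQ'
    rw [mem_filter] at hQ
    rw [hQ'] at hQ
    exact hQ.2 hQ.1
  have uA : F.filter (fun A => UV.compress u v A ∈ F) ∪
      F.filter (fun A => UV.compress u v A ∉ F) = F := filter_union_filter_not_eq _ _
  have ne₂ : (F.filter fun A => UV.compress u v A ∉ F).Nonempty := by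
    refine nonempty_iff_ne_empty.2 fun z => h ?_
    rw [filter_image, z, image_empty, union_empty]
    rwa [z, union_empty] at uA
  rw [famMeasure, famMeasure, sum_union UV.compress_disjoint]
  conv_rhs => rw [← uA]
  rw [sum_union (disjoint_filter_filter_not _ _ _), add_lt_add_iff_left, filter_image,
    sum_image UV.compress_injOn]
  refine sum_lt_sum_of_nonempty ne₂ fun A hA => ?_
  have hne := q A hA
  have hcond : j ∈ A ∧ i ∉ A := by
    by_contra hc
    apply hne
    rw [UV.compress]
    rw [if_neg]
    intro ⟨h1, h2⟩
    simp only [u, v, disjoint_singleton_left, le_eq_subset, singleton_subset_iff] at h1 h2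
    exact hc ⟨h2, h1⟩
  rw [compress_singleton hij.ne hcond.1 hcond.2]
  have hi' : i ∉ A.erase j := fun hh => hcond.2 (mem_of_mem_erase hh)
  rw [sum_insert hi', ← Finset.sum_erase_add A _ hcond.1]
  have hij' : (i:ℕ) < (j:ℕ) := hij
  omega

lemma exists_shifted (F : Finset (Finset (Fin n))) :
    ∃ G : Finset (Finset (Fin n)), #G = #F ∧ #(∂ G) ≤ #(∂ F) ∧
      (∀ A ∈ G, ∃ B ∈ F, #A = #B) ∧ Shifted G := by
  classical
  generalize hm : famMeasure F = m
  induction m using Nat.strong_induction_on generalizing F with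
  | _ m ih =>
    by_cases hS : Shifted F
    · exact ⟨F, rfl, le_rfl, fun A hA => ⟨A, hA, rfl⟩, hS⟩
    · simp only [Shifted, not_forall] at hS
      obtain ⟨i, j, hij, hc⟩ := hS
      have hne : UV.compression {i} {j} F ≠ F := hc
      have hlt := famMeasure_compression_lt hij hne
      rw [hm] at hlt
      obtain ⟨G, h1, h2, h3, h4⟩ := ih _ hlt (UV.compression {i} {j} F) rfl
      refine ⟨G, ?_, ?_, ?_, h4⟩
      · rw [h1, UV.card_compression]
      · refine h2.trans ?_
        apply UV.card_shadow_compression_le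
        intro x hx
        refine ⟨j, mem_singleton_self j, ?_⟩
        rw [mem_singleton] at hx
        subst hx
        simp only [erase_singleton]
        exact UV.isCompressed_self _ _
      · intro A hA
        obtain ⟨B, hB, hAB⟩ := h3 A hA
        rw [UV.mem_compression] at hB
        rcases hB with ⟨hB, -⟩ | ⟨-, B', hB', rfl⟩
        · exact ⟨B, hB, hAB⟩
        · refine ⟨B', hB', ?_⟩
          rw [hAB, UV.card_compress (by simp)]

def link (e : Fin n) (F : Finset (Finset (Fin n))) : Finset (Finset (Fin n)) :=
  (F.filter (fun A => e ∈ A)).image (fun A => A.erase e)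

lemma card_link (e : Fin n) (F : Finset (Finset (Fin n))) :
    #(link e F) = #(F.filter (fun A => e ∈ A)) := by
  apply card_image_of_injOn
  intro A hA B hB hAB
  rw [mem_coe, mem_filter] at hA hB
  simp only at hAB
  rw [← insert_erase hA.2, hAB, insert_erase hB.2]

lemma not_mem_of_mem_link {e : Fin n} {F : Finset (Finset (Fin n))} {B : Finset (Fin n)}
    (hB : B ∈ link e F) : e ∉ B := by
  rw [link, mem_image] at hB
  obtain ⟨A, -, rfl⟩ := hB
  exact notMem_erase e A

lemma link_subset_shadow (e : Fin n) (F : Finset (Finset (Fin n))) : link e F ⊆ ∂ F := by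
  intro B hB
  rw [link, mem_image] at hB
  obtain ⟨A, hA, rfl⟩ := hB
  rw [mem_filter] at hA
  exact erase_mem_shadow hA.1 hA.2

lemma link_sized {e : Fin n} {F : Finset (Finset (Fin n))} {k : ℕ}
    (hsized : ∀ A ∈ F, #A = k) : ∀ B ∈ link e F, #B = k - 1 := by
  intro B hB
  rw [link, mem_image] at hB
  obtain ⟨A, hA, rfl⟩ := hB
  rw [mem_filter] at hA
  rw [card_erase_of_mem hA.2, hsized A hA.1]

lemma card_link_add_card_shadow_link_le (e : Fin n) (F : Finset (Finset (Fin n))) :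
    #(link e F) + #(∂ (link e F)) ≤ #(∂ F) := by
  classical
  have hsub : link e F ∪ (∂ (link e F)).image (insert e) ⊆ ∂ F := by
    intro B hB
    rw [mem_union] at hB
    rcases hB with hB | hB
    · exact link_subset_shadow e F hB
    · rw [mem_image] at hB
      obtain ⟨C, hC, rfl⟩ := hB
      rw [mem_shadow_iff] at hC
      obtain ⟨D, hD, a, haD, rfl⟩ := hC
      rw [link, mem_image] at hD
      obtain ⟨A, hA, rfl⟩ := hD
      rw [mem_filter] at hA
      have hae : a ≠ e := ne_of_mem_erase haD
      have haA : a ∈ A := mem_of_mem_erase haD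
      have : insert e ((A.erase e).erase a) = A.erase a := by
        rw [Finset.erase_right_comm, insert_erase]
        exact mem_erase.2 ⟨hae.symm, hA.2⟩
      rw [this]
      exact erase_mem_shadow hA.1 haA
  have hdisj : Disjoint (link e F) ((∂ (link e F)).image (insert e)) := by
    rw [disjoint_left]
    intro B hB hB'
    rw [mem_image] at hB'
    obtain ⟨C, -, rfl⟩ := hB'
    exact not_mem_of_mem_link hB (mem_insert_self e C)
  have hinj : #((∂ (link e F)).image (insert e)) = #(∂ (link e F)) := by
    apply card_image_of_injOn
    intro B hB B' hB' hBB'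
    rw [mem_coe, mem_shadow_iff] at hB hB'
    obtain ⟨D, hD, a, -, rfl⟩ := hB
    obtain ⟨D', hD', a', -, rfl⟩ := hB'
    have h1 : e ∉ D.erase a := fun h => not_mem_of_mem_link hD (mem_of_mem_erase h)
    have h2 : e ∉ D'.erase a' := fun h => not_mem_of_mem_link hD' (mem_of_mem_erase h)
    rw [← erase_insert h1, hBB', erase_insert h2]
  calc #(link e F) + #(∂ (link e F)) = #(link e F ∪ (∂ (link e F)).image (insert e)) := by
        rw [card_union_of_disjoint hdisj, hinj]
    _ ≤ #(∂ F) := card_le_card hsub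

lemma shadow_filter_subset_link (hn : 0 < n) {F : Finset (Finset (Fin n))} (hF : Shifted F) :
    ∂ (F.filter (fun A => (⟨0, hn⟩ : Fin n) ∉ A)) ⊆ link ⟨0, hn⟩ F := by
  classical
  set e : Fin n := ⟨0, hn⟩
  intro B hB
  rw [mem_shadow_iff] at hB
  obtain ⟨A, hA, j, hj, rfl⟩ := hB
  rw [mem_filter] at hA
  have hej : e < j := by
    refine lt_of_le_of_ne ?_ ?_
    · exact Fin.mk_le_of_le_val (Nat.zero_le _)
    · rintro rfl; exact hA.2 hj
  have hmem : insert e (A.erase j) ∈ F := hF.insert_erase_mem hA.1 hej hj hA.2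
  rw [link, mem_image]
  refine ⟨insert e (A.erase j), ?_, ?_⟩
  · rw [mem_filter]; exact ⟨hmem, mem_insert_self _ _⟩
  · rw [erase_insert]
    intro h
    exact hA.2 (mem_of_mem_erase h)

lemma link_nonempty (hn : 0 < n) {F : Finset (Finset (Fin n))} (hF : Shifted F)
    (hne : F.Nonempty) (hcard : ∀ A ∈ F, 1 ≤ #A) :
    ((F.filter (fun A => (⟨0, hn⟩ : Fin n) ∈ A))).Nonempty := by
  classical
  set e : Fin n := ⟨0, hn⟩
  obtain ⟨A, hA⟩ := hne
  by_cases he : e ∈ A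
  · exact ⟨A, mem_filter.2 ⟨hA, he⟩⟩
  · obtain ⟨j, hj⟩ := card_pos.1 (hcard A hA)
    have hej : e < j := by
      refine lt_of_le_of_ne ?_ ?_
      · exact Fin.mk_le_of_le_val (Nat.zero_le _)
      · rintro rfl; exact he hj
    refine ⟨insert e (A.erase j), mem_filter.2 ⟨hF.insert_erase_mem hA hej hj he, mem_insert_self _ _⟩⟩

end Comb

section Core
open Finset GB GB2
open scoped FinsetFamily

variable {n : ℕ}

theorem core_kk (hn : 0 < n) (k : ℕ) :
    1 ≤ k → ∀ N : ℕ, ∀ F : Finset (Finset (Fin n)), #F ≤ N →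
    (∀ A ∈ F, #A = k) → ∀ x : ℝ, (k:ℝ) ≤ x → genBinom x k ≤ (#F : ℝ) →
    genBinom x (k-1) ≤ (#(∂ F) : ℝ) := by
  classical
  induction k using Nat.strong_induction_on with
  | _ k ihk =>
  intro hk N
  induction N with
  | zero =>
      intro F hFN _ x hx hcard
      exfalso
      have h1 : (1:ℝ) ≤ genBinom x k := one_le_genBinom hx
      interval_cases hF : #F
      · simp [hF] at hcard; linarith
  | succ N ihN =>
      intro F hFN hsized x hx hcard
      obtain ⟨G, hGcard, hGshadow, hGsizes, hGshift⟩ := exists_shifted F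
      have hGsized : ∀ A ∈ G, #A = k := by
        intro A hA
        obtain ⟨B, hB, hAB⟩ := hGsizes A hA
        rw [hAB, hsized B hB]
      have hGF : (#G : ℝ) = #F := by rw [hGcard]
      have hmain : genBinom x (k-1) ≤ (#(∂ G) : ℝ) → genBinom x (k-1) ≤ (#(∂ F) : ℝ) := by
        intro h
        exact h.trans (by exact_mod_cast hGshadow)
      apply hmain
      have hGne : G.Nonempty := by
        rw [← card_pos]
        by_contra h
        push_neg at h
        have hF0 : #F = 0 := by omega
        rw [hF0] at hcard
        have := one_le_genBinom hx
        norm_num at hcard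
        linarith
      -- dispatch k = 1
      obtain ⟨m, rfl⟩ | hk1 : (∃ m, k = m + 2) ∨ k = 1 := by
        rcases Nat.lt_or_ge k 2 with h | h
        · right; omega
        · left; exact ⟨k - 2, by omega⟩
      swap
      · -- k = 1
        subst hk1
        have : ∅ ∈ ∂ G := by
          obtain ⟨A, hA⟩ := hGne
          obtain ⟨a, ha⟩ := card_pos.1 (by rw [hGsized A hA]; norm_num : 0 < #A)
          have : A.erase a = ∅ := by
            rw [← Finset.card_eq_zero, card_erase_of_mem ha, hGsized A hA]
          rw [← this]
          exact erase_mem_shadow hA ha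
        have h1 : 1 ≤ #(∂ G) := card_pos.2 ⟨∅, this⟩
        simp only [Nat.sub_self, genBinom_zero]
        exact_mod_cast h1
      -- now k = m + 2
      set e : Fin n := ⟨0, hn⟩
      set F₁ : Finset (Finset (Fin n)) := link e G with hF₁
      set a : ℝ := (#F₁ : ℝ) with ha
      have hkk : ((m:ℝ) + 2) = ((m + 2 : ℕ) : ℝ) := by push_cast; ring
      have hx' : ((m:ℝ) + 2) ≤ x := by rw [hkk]; exact hx
      have hF₁sized : ∀ B ∈ F₁, #B = m + 1 := by
        intro B hB
        have := link_sized hGsized B hB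
        omega
      have hshadow_ge : #F₁ + #(∂ F₁) ≤ #(∂ G) := card_link_add_card_shadow_link_le e G
      have hsimp1 : (m + 2 - 1 : ℕ) = m + 1 := by omega
      rw [hsimp1]
      by_cases hcase : genBinom (x-1) (m+1) ≤ a
      · -- Case 1
        have hIH : genBinom (x-1) (m+1-1) ≤ (#(∂ F₁) : ℝ) := by
          apply ihk (m+1) (by omega) (by omega) (#F₁) F₁ le_rfl hF₁sized (x-1) ?_ ?_
          · push_cast; linarith
          · rwa [ha] at hcase
        rw [show (m + 1 - 1 : ℕ) = m by omega] at hIH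
        have hp : genBinom x (m+1) = genBinom (x-1) (m+1) + genBinom (x-1) m := pascal x m
        have : a + (#(∂ F₁) : ℝ) ≤ (#(∂ G) : ℝ) := by
          rw [ha]; push_cast
          exact_mod_cast hshadow_ge
        linarith
      · -- Case 2
        push_neg at hcase
        exfalso
        set F₀ : Finset (Finset (Fin n)) := G.filter (fun A => e ∉ A) with hF₀
        have hsplit : #F₀ + #F₁ = #G := by
          rw [hF₀, hF₁, card_link]
          rw [add_comm]
          exact card_filter_add_card_filter_not _
        have hA6 : genBinom (x-1) (m+1) ≤ genBinom x (m+2) :=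
          genBinom_shift_le (by push_cast at hx' ⊢; linarith)
        have hF₀ne : F₀.Nonempty := by
          rw [← card_pos]
          by_contra h
          push_neg at h
          have h0 : #F₀ = 0 := by omega
          have : a = (#G : ℝ) := by rw [ha]; norm_cast; omega
          rw [this, hGF] at hcase
          linarith
        have h1le : (1:ℝ) ≤ (#F₀ : ℝ) := by exact_mod_cast card_pos.2 hF₀ne
        obtain ⟨x', hx'ge, hx'eq⟩ := exists_genBinom_eq (k := m + 2) (by omega) h1le
        have hF₁ne : F₁.Nonempty := by
          rw [hF₁, link]
          apply Nonempty.image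
          exact link_nonempty hn hGshift hGne (fun A hA => by rw [hGsized A hA]; omega)
        have hF₀N : #F₀ ≤ N := by
          have h1 : 1 ≤ #F₁ := card_pos.2 hF₁ne
          have h2 : #G ≤ N + 1 := by omega
          omega
        have hIH2 : genBinom x' (m+2-1) ≤ (#(∂ F₀) : ℝ) := by
          apply ihN F₀ hF₀N ?_ x' hx'ge hx'eq.le
          intro A hA
          exact hGsized A (mem_filter.1 hA).1
        rw [hsimp1] at hIH2
        have hsub : ∂ F₀ ⊆ F₁ := shadow_filter_subset_link hn hGshift
        have hle1 : (#(∂ F₀) : ℝ) ≤ a := by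
          rw [ha]; exact_mod_cast card_le_card hsub
        -- genBinom (x-1) (m+2) < genBinom x' (m+2)
        have hp2 : genBinom x (m+2) = genBinom (x-1) (m+2) + genBinom (x-1) (m+1) :=
          pascal x (m+1)
        have hGR : (#G : ℝ) = (#F₀ : ℝ) + a := by rw [ha]; exact_mod_cast hsplit.symm
        have hstrict : genBinom (x-1) (m+2) < genBinom x' (m+2) := by
          rw [hx'eq]
          have : genBinom x (m+2) ≤ (#G : ℝ) := by rw [hGF]; exact hcard
          linarith
        have hxx' : x - 1 ≤ x' := by
          by_contra h
          push_neg at h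
          have := genBinom_le_genBinom (k := m+2) (y := x') (z := x - 1)
            (by push_cast; linarith) h.le
          linarith
        have hmono : genBinom (x-1) (m+1) ≤ genBinom x' (m+1) := by
          apply genBinom_le_genBinom (by push_cast; push_cast at hx'; linarith) hxx'
        linarith

end Core

section Main
open Finset GB GB2
open scoped FinsetFamily

variable {n : ℕ}

lemma shadow_sized {F : Finset (Finset (Fin n))} {k : ℕ} (h : ∀ A ∈ F, #A = k) :
    ∀ B ∈ ∂ F, #B = k - 1 := by
  intro B hB
  rw [mem_shadow_iff] at hB
  obtain ⟨A, hA, a, ha, rfl⟩ := hB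
  rw [card_erase_of_mem ha, h A hA]

lemma iter_core (hn : 0 < n) (k : ℕ) (S : Finset (Finset (Fin n)))
    (hS : ∀ A ∈ S, #A = k) (x : ℝ) (hx : (k:ℝ) ≤ x) (hc : genBinom x k ≤ (#S : ℝ)) :
    ∀ j : ℕ, j ≤ k - 1 →
      (∀ A ∈ (∂ ) ^[j] S, #A = k - j) ∧ genBinom x (k - j) ≤ (#((∂ ) ^[j] S) : ℝ) := by
  intro j
  induction j with
  | zero => intro _; simpa using ⟨hS, hc⟩
  | succ j ihj =>
      intro hj
      have hj' : j ≤ k - 1 := by omega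
      obtain ⟨hsz, hcard⟩ := ihj hj'
      have hk1 : 1 ≤ k - j := by omega
      have hxj : ((k - j : ℕ) : ℝ) ≤ x := by
        have h1 : ((k - j : ℕ) : ℝ) ≤ (k : ℝ) := by exact_mod_cast Nat.sub_le k j
        linarith
      have := core_kk hn (k - j) hk1 (#((∂ ) ^[j] S)) ((∂ ) ^[j] S) le_rfl hsz x hxj hcard
      constructor
      · rw [Function.iterate_succ_apply']
        have := shadow_sized hsz
        intro A hA
        rw [this A hA]
        omega
      · rw [Function.iterate_succ_apply']
        rw [show k - (j+1) = k - j - 1 by omega]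
        exact this

theorem main_bound (k : ℕ) (hk : 3 ≤ k) (hkn : k ≤ n)
    (S : Finset (Finset (Fin n))) (hS : ∀ A ∈ S, A.card = k)
    (s : ℝ) (hs : (k : ℝ) ≤ s) (hcard : genBinom s k ≤ (S.card : ℝ)) :
    genBinom s 2 ≤ ((Finset.univ.filter fun t =>
      t.card = 2 ∧ ∃ A ∈ S, t ⊆ A : Finset (Finset (Fin n))).card : ℝ) := by
  classical
  have hn : 0 < n := by omega
  obtain ⟨hsz, hbound⟩ := iter_core hn k S hS s hs hcard (k - 2) (by omega)
  rw [show k - (k - 2) = 2 by omega] at hbound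
  have hEq : (Finset.univ.filter fun t =>
      t.card = 2 ∧ ∃ A ∈ S, t ⊆ A : Finset (Finset (Fin n))) = (∂ ) ^[k-2] S := by
    ext t
    rw [mem_filter, mem_shadow_iterate_iff_exists_sdiff]
    simp only [mem_univ, true_and]
    constructor
    · rintro ⟨ht2, A, hA, htA⟩
      refine ⟨A, hA, htA, ?_⟩
      rw [card_sdiff_of_subset htA, hS A hA, ht2]
    · rintro ⟨A, hA, htA, hsd⟩
      have h1 : #t ≤ #A := card_le_card htA
      rw [card_sdiff_of_subset htA, hS A hA] at hsd
      rw [hS A hA] at h1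
      exact ⟨by omega, A, hA, htA⟩
  rw [hEq]
  exact hbound

end Main

/-- **Lemma 7(i) of the paper (Kühn–Osthus, Lemma 4(i)).**  Let `3 ≤ k ≤ n` and let
`S ⊆ [n]^{(k)}` be nonempty.  If the real number `s ≥ k` satisfies `C(s,k) = |S|`,
then `|δ_{k−2}^-(S)| ≥ C(s,2) = s(s−1)/2`. -/
theorem lower_shadow_bound (k n : ℕ) (hk : 3 ≤ k) (hkn : k ≤ n)
    (S : Finset (Finset (Fin n))) (hS : ∀ A ∈ S, A.card = k) (hne : S.Nonempty)
    (s : ℝ) (hs : (k : ℝ) ≤ s) (hcard : genBinom s k = S.card) :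
    genBinom s 2 ≤ ((lowerShadow n 2 S).card : ℝ) := by
  have h := main_bound k hk hkn S hS s hs (le_of_eq hcard)
  simpa [lowerShadow] using h
end

section
/- Suppose S′ ⊊ [n]^{(2)} is a proper subset, and let c, d be nonnegative integers with c < n, d < n − (c+1), and |S′| = cn − C(c+1, 2) + d. Then |δ_1^+(S′)| ≥ c·C(n−c, 2) + d(n−c−2) − C(d, 2). -/
open Finset Finset.Colex
open scoped symmDiff FinsetFamily

private lemma choose2_succ (x : ℕ) : (x+1).choose 2 = x.choose 2 + x := by
  simpa [Nat.choose_one_right, Nat.add_comm] using Nat.choose_succ_succ x 1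

private lemma choose3_succ (x : ℕ) : (x+1).choose 3 = x.choose 3 + x.choose 2 := by
  simpa [Nat.add_comm] using Nat.choose_succ_succ x 2

private lemma identA (a c : ℕ) : (a+c).choose 2 + (c+1).choose 2 = a.choose 2 + c*(a+c) := by
  induction c with
  | zero => simp
  | succ c ih =>
    have hm : (c+1)*(a+(c+1)) = c*(a+c) + (a + 2*c + 1) := by ring
    rw [show a+(c+1) = (a+c)+1 from by ring, choose2_succ (a+c), choose2_succ (c+1),
      show (a+c)+1 = a+(c+1) from by ring, hm]
    linarith [ih]

private lemma identB (b d : ℕ) : (b+d+1).choose 2 + d.choose 2 = (b+1).choose 2 + d*(b+d) := by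
  induction d with
  | zero => simp
  | succ d ih =>
    have hm : (d+1)*(b+(d+1)) = d*(b+d) + (b + 2*d + 1) := by ring
    rw [show b+(d+1)+1 = (b+d+1)+1 from by ring, choose2_succ (b+d+1), choose2_succ d, hm]
    linarith [ih]

private lemma ineqC (x c : ℕ) : x.choose 3 + c * x.choose 2 ≤ (x+c).choose 3 := by
  induction c with
  | zero => simp
  | succ c ih =>
    have h2 : x.choose 2 ≤ (x+c).choose 2 := Nat.choose_le_choose _ (by omega)
    have hm : (c+1)*x.choose 2 = c*x.choose 2 + x.choose 2 := by ring
    rw [show x+(c+1) = (x+c)+1 from by ring, choose3_succ, hm]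
    linarith [ih]

private lemma arithMain (b c d : ℕ) :
    (b+d+2).choose 3 + (b+1).choose 2 + c*(b+d+2).choose 2 + d*(b+d)
      ≤ (b+d+2+c).choose 3 + (b+d+1).choose 2 + d.choose 2 := by
  linarith [identB b d, ineqC (b+d+2) c]

private lemma compl_colex {n : ℕ} {s t : Finset (Fin n)} (h : toColex s < toColex t) :
    toColex tᶜ < toColex sᶜ := by
  rw [toColex_lt_toColex_iff_exists_forall_lt] at h ⊢
  obtain ⟨a, hat, has, hforall⟩ := h
  refine ⟨a, by simpa using has, by simpa using hat, ?_⟩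
  intro b hb hbs
  exact hforall b (by simpa using hbs) (by simpa using hb)

private lemma card_filter_lt {n k : ℕ} (hk : k ≤ n) :
    #(univ.filter fun x : Fin n => (x:ℕ) < k) = k := by
  have heq : (univ.filter fun x : Fin n => (x:ℕ) < k) = Finset.map (Fin.castLEEmb hk) univ := by
    ext x
    simp only [mem_filter, mem_univ, true_and, mem_map, Fin.castLEEmb_apply]
    constructor
    · intro hx
      exact ⟨⟨x, hx⟩, by ext; simp⟩
    · rintro ⟨y, rfl⟩
      simpa using y.isLt
  rw [heq, card_map, card_univ, Fintype.card_fin]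

/-- The set of all `r`-subsets of `Fin n` containing some member of `S`
(for `S ⊆ [n]^{(k)}` and `r = k + ℓ`, this is the `ℓ`-th upper shadow `δ_ℓ^+(S)`). -/
def upperShadow (n r : ℕ) (S : Finset (Finset (Fin n))) : Finset (Finset (Fin n)) :=
  Finset.univ.filter fun t => t.card = r ∧ ∃ A ∈ S, A ⊆ t

private lemma shadow_eq_of_inst {α : Type*} (i1 i2 : DecidableEq α) (F : Finset (Finset α)) :
    @Finset.shadow α i1 F = @Finset.shadow α i2 F := by
  congr 1
  exact Subsingleton.elim _ _

private lemma compl_erase' {n : ℕ} (t : Finset (Fin n)) (a : Fin n) :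
    (t.erase a)ᶜ = insert a tᶜ := by
  ext x
  simp only [Finset.mem_compl, Finset.mem_erase, Finset.mem_insert, not_and]
  by_cases hx : x = a <;> simp [hx]

private lemma shadow_compl {n : ℕ} (hn : 3 ≤ n) (S : Finset (Finset (Fin n)))
    (hS : ∀ A ∈ S, A.card = 2) :
    ∂ (S.image compl) = (upperShadow n 3 S).image compl := by
  ext u
  simp only [Finset.mem_shadow_iff_insert_mem, Finset.mem_image, upperShadow,
    Finset.mem_filter, Finset.mem_univ, true_and]
  constructor
  · rintro ⟨a, ha, A, hA, hcompl⟩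
    have hAc : A = (insert a u)ᶜ := by rw [← hcompl, compl_compl]
    have h2 : A.card = 2 := hS A hA
    have hins : (insert a u).card = u.card + 1 := Finset.card_insert_of_notMem ha
    have hle : (insert a u).card ≤ n := by
      simpa using Finset.card_le_univ (insert a u)
    have hu : u.card = n - 3 := by
      rw [hAc, Finset.card_compl, Fintype.card_fin] at h2
      omega
    refine ⟨uᶜ, ⟨?_, A, hA, ?_⟩, compl_compl u⟩
    · rw [Finset.card_compl, Fintype.card_fin, hu]; omega
    · rw [hAc]
      exact Finset.compl_subset_compl.2 (by simp [Finset.subset_insert])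
  · rintro ⟨t, ⟨ht3, A, hA, hAt⟩, rfl⟩
    have h2 : A.card = 2 := hS A hA
    have hne : (t \ A).Nonempty := by
      rw [← Finset.card_pos, Finset.card_sdiff_of_subset hAt]; omega
    obtain ⟨a, ha⟩ := hne
    rw [Finset.mem_sdiff] at ha
    have hAeq : A = t.erase a := by
      apply Finset.eq_of_subset_of_card_le
      · intro x hx
        exact Finset.mem_erase.2 ⟨fun hxa => ha.2 (hxa ▸ hx), hAt hx⟩
      · rw [Finset.card_erase_of_mem ha.1, ht3, h2]
    refine ⟨a, by simp [ha.1], A, hA, ?_⟩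
    rw [hAeq, compl_erase']

/-- **Lemma 7(ii) of the paper (from Kühn–Osthus).**  Suppose `S′ ⊊ [n]^{(2)}` is a
proper subset of the 2-subsets of `[n]`, and let `c, d ≥ 0` satisfy `c < n`,
`d < n − (c+1)` and `|S′| = cn − C(c+1,2) + d`.  Then
`|δ_1^+(S′)| ≥ c·C(n−c,2) + d(n−c−2) − C(d,2)`. -/
theorem upper_shadow_bound_one (n c d : ℕ)
    (S' : Finset (Finset (Fin n)))
    (hsub : S' ⊂ Finset.univ.filter fun t : Finset (Fin n) => t.card = 2)
    (hc : c < n) (hd : d < n - (c + 1))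
    (hcard : (S'.card : ℤ) = c * n - Nat.choose (c + 1) 2 + d) :
    (c : ℤ) * Nat.choose (n - c) 2 + d * ((n : ℤ) - c - 2) - Nat.choose d 2
      ≤ ((upperShadow n 3 S').card : ℤ) := by
  classical
  by_cases hn3 : 3 ≤ n
  swap
  · have hc0 : c = 0 ∧ d = 0 := by omega
    obtain ⟨rfl, rfl⟩ := hc0
    have h0 : (0:ℤ) ≤ ((upperShadow n 3 S').card : ℤ) := by positivity
    simpa using h0
  have hS2 : ∀ A ∈ S', A.card = 2 := fun A hA => (Finset.mem_filter.1 (hsub.subset hA)).2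
  have hcd : c + d + 2 ≤ n := by omega
  have hvlt : n - c - 1 < n := by omega
  set v : Fin n := ⟨n - c - 1, hvlt⟩ with hv
  set Lo := univ.filter (fun x : Fin n => (x:ℕ) < n - c) with hLo
  set Mid := univ.filter (fun x : Fin n => (x:ℕ) < n - c - 1) with hMid
  set Sm := univ.filter (fun x : Fin n => (x:ℕ) < n - c - 1 - d) with hSm
  have hSmMid : Sm ⊆ Mid := by
    intro x hx
    rw [hSm, mem_filter] at hx
    rw [hMid, mem_filter]
    exact ⟨hx.1, by omega⟩
  set W := Mid \ Sm with hW
  set T1 := powersetCard 2 (univ : Finset (Fin n)) \ powersetCard 2 Lo with hT1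
  set T2 := W.image (fun x => ({x, v} : Finset (Fin n))) with hT2
  set T := T1 ∪ T2 with hT
  have hmemLo : ∀ x : Fin n, x ∈ Lo ↔ (x:ℕ) < n - c := by
    intro x; rw [hLo, mem_filter]; simp
  have hmemW : ∀ x : Fin n, x ∈ W ↔ n - c - 1 - d ≤ (x:ℕ) ∧ (x:ℕ) < n - c - 1 := by
    intro x
    rw [hW, mem_sdiff, hMid, hSm, mem_filter, mem_filter]
    simp only [mem_univ, true_and, not_lt]
    tauto
  have hT1mem : ∀ p : Finset (Fin n), p ∈ T1 ↔ p.card = 2 ∧ ∃ x ∈ p, n - c ≤ (x:ℕ) := by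
    intro p
    rw [hT1, mem_sdiff, mem_powersetCard, mem_powersetCard]
    constructor
    · rintro ⟨⟨-, h2⟩, hno⟩
      refine ⟨h2, ?_⟩
      by_contra hcon
      push_neg at hcon
      exact hno ⟨fun x hx => (hmemLo x).2 (hcon x hx), h2⟩
    · rintro ⟨h2, x, hx, hge⟩
      refine ⟨⟨subset_univ p, h2⟩, fun hcon => ?_⟩
      have := (hmemLo x).1 (hcon.1 hx)
      omega
  have hwv : ∀ x : Fin n, x ∈ W → x ≠ v := by
    intro x hx
    have := (hmemW x).1 hx
    intro hxv
    rw [hxv] at this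
    simp only [hv] at this
    omega
  have hTsized : ∀ p ∈ T, p.card = 2 := by
    intro p hp
    rcases mem_union.1 hp with hp1 | hp2
    · exact ((hT1mem p).1 hp1).1
    · obtain ⟨x, hx, rfl⟩ := mem_image.1 hp2
      rw [card_insert_of_notMem (by simp [hwv x hx]), card_singleton]
  have hvval : (v:ℕ) = n - c - 1 := rfl
  have hup : ∀ p ∈ T, ∀ q : Finset (Fin n), q.card = 2 → toColex p < toColex q → q ∈ T := by
    intro p hp q hq2 hlt
    rw [Finset.Colex.toColex_lt_toColex] at hlt
    obtain ⟨hne, hfor⟩ := hlt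
    by_cases hbig : ∃ x ∈ q, n - c ≤ (x:ℕ)
    · exact mem_union_left _ ((hT1mem q).2 ⟨hq2, hbig⟩)
    push_neg at hbig
    rcases mem_union.1 hp with hp1 | hp2
    · exfalso
      obtain ⟨-, x, hxp, hxge⟩ := (hT1mem p).1 hp1
      have hxq : x ∉ q := fun h => by have := hbig x h; omega
      obtain ⟨b, hbq, -, hxb⟩ := hfor hxp hxq
      have hble := hbig b hbq
      rw [Fin.le_def] at hxb
      omega
    obtain ⟨w, hwW, hpw⟩ := mem_image.1 hp2
    have hwbounds := (hmemW w).1 hwW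
    have hvq : v ∈ q := by
      by_contra hvq
      have hvp : v ∈ p := by rw [← hpw]; simp
      obtain ⟨b, hbq, hbp, hvb⟩ := hfor hvp hvq
      have hblt := hbig b hbq
      rw [Fin.le_def, hvval] at hvb
      have : b = v := Fin.ext (by rw [hvval]; omega)
      exact hvq (this ▸ hbq)
    have hqe : (q.erase v).card = 1 := by rw [card_erase_of_mem hvq, hq2]
    obtain ⟨u, hu⟩ := Finset.card_eq_one.1 hqe
    have huqe : u ∈ q.erase v := hu ▸ mem_singleton_self u
    have huq : u ∈ q := mem_of_mem_erase huqe
    have huv : u ≠ v := (mem_erase.1 huqe).1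
    have hqeq : q = {u, v} := by
      refine (Finset.eq_of_subset_of_card_le ?_ ?_).symm
      · exact insert_subset huq (singleton_subset_iff.2 hvq)
      · rw [hq2, card_insert_of_notMem (by simp [huv]), card_singleton]
    have huval : (u:ℕ) ≠ n - c - 1 := fun h => huv (Fin.ext (by rw [hvval, ← h]))
    have hulow : (u:ℕ) < n - c - 1 := by have := hbig u huq; omega
    have huge : n - c - 1 - d ≤ (u:ℕ) := by
      by_cases huw : u = w
      · rw [huw]; exact hwbounds.1
      · have hwq : w ∉ q := by
          rw [hqeq, mem_insert, mem_singleton]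
          push_neg
          exact ⟨fun h => huw h.symm, hwv w hwW⟩
        have hwp : w ∈ p := by rw [← hpw]; simp
        obtain ⟨b, hbq, hbp, hwb⟩ := hfor hwp hwq
        have hbv : b ≠ v := fun h => hbp (by rw [← hpw, h]; simp)
        have hbu : b = u := by
          rw [hqeq, mem_insert, mem_singleton] at hbq
          tauto
        rw [hbu] at hwb
        rw [Fin.le_def] at hwb
        omega
    apply mem_union_right
    rw [hT2]
    refine mem_image.2 ⟨u, (hmemW u).2 ⟨huge, hulow⟩, hqeq.symm⟩
  have hinit : IsInitSeg (T.image compl) (n-2) := by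
    constructor
    · intro A hA
      rw [Finset.mem_coe, mem_image] at hA
      obtain ⟨p, hp, rfl⟩ := hA
      rw [card_compl, hTsized p hp, Fintype.card_fin]
    · rintro s t hs ⟨hlt, htcard⟩
      obtain ⟨p, hp, rfl⟩ := mem_image.1 hs
      have hq2 : tᶜ.card = 2 := by
        rw [card_compl, htcard, Fintype.card_fin]; omega
      have hlt2 : toColex p < toColex tᶜ := by
        have := compl_colex hlt
        simpa using this
      exact mem_image.2 ⟨tᶜ, hup p hp tᶜ hq2 hlt2, compl_compl t⟩
  -- cardinalities
  have hLocard : Lo.card = n - c := by rw [hLo]; exact card_filter_lt (by omega)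
  have hMidcard : Mid.card = n - c - 1 := by rw [hMid]; exact card_filter_lt (by omega)
  have hSmcard : Sm.card = n - c - 1 - d := by rw [hSm]; exact card_filter_lt (by omega)
  have hT1card : T1.card = n.choose 2 - (n-c).choose 2 := by
    rw [hT1, card_sdiff_of_subset (powersetCard_mono (subset_univ Lo)), card_powersetCard,
      card_powersetCard, card_univ, Fintype.card_fin, hLocard]
  have hWcard : W.card = d := by
    rw [hW, card_sdiff_of_subset hSmMid, hMidcard, hSmcard]; omega
  have hTcard : T.card ≤ (n.choose 2 - (n-c).choose 2) + d := by
    calc T.card ≤ T1.card + T2.card := card_union_le _ _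
    _ ≤ (n.choose 2 - (n-c).choose 2) + d := by
        have := card_image_le (s := W) (f := fun x => ({x, v} : Finset (Fin n)))
        rw [← hT2, hWcard] at this
        rw [hT1card]
        omega
  -- |T| ≤ |S'|
  have hid : n.choose 2 + (c+1).choose 2 = (n-c).choose 2 + c*n := by
    have := identA (n-c) c
    rw [show (n-c) + c = n from by omega] at this
    exact this
  have hchle : (n-c).choose 2 ≤ n.choose 2 := Nat.choose_le_choose _ (by omega)
  have hTS : T.card ≤ S'.card := by
    have h1 : (T.card : ℤ) ≤ (n.choose 2 : ℤ) - (n-c).choose 2 + d := by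
      have := hTcard
      zify [hchle] at this
      exact this
    have h2 : (n.choose 2 : ℤ) - (n-c).choose 2 + d = (S'.card : ℤ) := by
      rw [hcard]
      have : (n.choose 2 : ℤ) + (c+1).choose 2 = ((n-c).choose 2 : ℤ) + c*n := by
        exact_mod_cast congrArg (Nat.cast : ℕ → ℤ) hid
      push_cast at this ⊢
      linarith
    have := h1.trans_eq h2
    exact_mod_cast this
  -- Kruskal-Katona
  have hAsized : ((S'.image compl) : Set (Finset (Fin n))).Sized (n-2) := by
    intro A hA
    rw [Finset.mem_coe, mem_image] at hA
    obtain ⟨p, hp, rfl⟩ := hA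
    rw [card_compl, hS2 p hp, Fintype.card_fin]
  have hkk : (∂ (T.image compl)).card ≤ (∂ (S'.image compl)).card := by
    have hcc : (T.image compl).card ≤ (S'.image compl).card := by
      rw [card_image_of_injective _ compl_injective, card_image_of_injective _ compl_injective]
      exact hTS
    have h := Finset.kruskal_katona hAsized hcc hinit
    exact le_trans (le_of_eq (congrArg Finset.card (shadow_eq_of_inst _ _ _)))
      (le_trans h (le_of_eq (congrArg Finset.card (shadow_eq_of_inst _ _ _))))
  have hshadS : (upperShadow n 3 S').card = (∂ (S'.image compl)).card := by
    rw [shadow_compl hn3 S' hS2, card_image_of_injective _ compl_injective]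
  have hshadT : (upperShadow n 3 T).card = (∂ (T.image compl)).card := by
    rw [shadow_compl hn3 T hTsized, card_image_of_injective _ compl_injective]
  -- the witness families inside the upper shadow of T
  set U1 := powersetCard 3 (univ : Finset (Fin n)) \ powersetCard 3 Lo with hU1
  set U2 := (powersetCard 2 Mid \ powersetCard 2 Sm).image (insert v) with hU2
  have hvMid : v ∉ Mid := by
    rw [hMid, mem_filter]
    push_neg
    intro _
    rw [hvval]
  have hU1card : U1.card = n.choose 3 - (n-c).choose 3 := by
    rw [hU1, card_sdiff_of_subset (powersetCard_mono (subset_univ Lo)), card_powersetCard,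
      card_powersetCard, card_univ, Fintype.card_fin, hLocard]
  have hinj : Set.InjOn (insert v)
      ((powersetCard 2 Mid \ powersetCard 2 Sm : Finset (Finset (Fin n))) : Set (Finset (Fin n))) := by
    intro p hp q hq hpq
    rw [Finset.mem_coe, mem_sdiff, mem_powersetCard] at hp hq
    have hvp : v ∉ p := fun h => hvMid (hp.1.1 h)
    have hvq : v ∉ q := fun h => hvMid (hq.1.1 h)
    rw [← Finset.erase_insert hvp, ← Finset.erase_insert hvq, hpq]
  have hU2card : U2.card = (n-c-1).choose 2 - (n-c-1-d).choose 2 := by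
    rw [hU2, card_image_of_injOn hinj, card_sdiff_of_subset (powersetCard_mono hSmMid),
      card_powersetCard, card_powersetCard, hMidcard, hSmcard]
  have hdisj : Disjoint U1 U2 := by
    rw [disjoint_left]
    intro t ht ht2
    rw [hU1, mem_sdiff] at ht
    obtain ⟨p, hp, rfl⟩ := mem_image.1 ht2
    rw [mem_sdiff, mem_powersetCard] at hp
    have hpMid : p ⊆ Mid := hp.1.1
    have hvp : v ∉ p := fun h => hvMid (hpMid h)
    apply ht.2
    rw [mem_powersetCard]
    constructor
    · apply insert_subset_iff.2
      constructor
      · exact (hmemLo v).2 (by rw [hvval]; omega)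
      · intro x hx
        have hxm := hpMid hx
        rw [hMid, mem_filter] at hxm
        exact (hmemLo x).2 (by omega)
    · rw [card_insert_of_notMem hvp, hp.1.2]
  have hUsub : U1 ∪ U2 ⊆ upperShadow n 3 T := by
    intro t ht
    rw [upperShadow, mem_filter]
    refine ⟨mem_univ t, ?_⟩
    rcases mem_union.1 ht with h1 | h2
    · rw [hU1, mem_sdiff, mem_powersetCard] at h1
      obtain ⟨⟨-, ht3⟩, hno⟩ := h1
      refine ⟨ht3, ?_⟩
      have hnsub : ¬ t ⊆ Lo := fun hsubLo => hno (mem_powersetCard.2 ⟨hsubLo, ht3⟩)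
      obtain ⟨x, hxt, hxLo⟩ := not_subset.1 hnsub
      have hxge : n - c ≤ (x:ℕ) := by
        have h' : ¬ ((x:ℕ) < n - c) := fun hh => hxLo ((hmemLo x).2 hh)
        omega
      have hery : (t.erase x).Nonempty := by
        rw [← card_pos, card_erase_of_mem hxt, ht3]
        omega
      obtain ⟨y, hy⟩ := hery
      have hyx : y ≠ x := (mem_erase.1 hy).1
      refine ⟨{x, y}, ?_, ?_⟩
      · apply mem_union_left
        apply (hT1mem _).2
        refine ⟨?_, x, by simp, hxge⟩
        rw [card_insert_of_notMem (by simp [hyx.symm]), card_singleton]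
      · exact insert_subset_iff.2 ⟨hxt, singleton_subset_iff.2 (mem_of_mem_erase hy)⟩
    · obtain ⟨p, hp, rfl⟩ := mem_image.1 h2
      rw [mem_sdiff, mem_powersetCard, mem_powersetCard] at hp
      obtain ⟨⟨hpMid, hp2⟩, hnoSm⟩ := hp
      have hvp : v ∉ p := fun h => hvMid (hpMid h)
      have ht3 : (insert v p).card = 3 := by rw [card_insert_of_notMem hvp, hp2]
      refine ⟨ht3, ?_⟩
      have hnsub : ¬ p ⊆ Sm := fun hs => hnoSm ⟨hs, hp2⟩
      obtain ⟨x, hxp, hxSm⟩ := not_subset.1 hnsub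
      have hxW : x ∈ W := by
        rw [hmemW]
        have h1 := hpMid hxp
        rw [hMid, mem_filter] at h1
        rw [hSm, mem_filter] at hxSm
        push_neg at hxSm
        have h2 := hxSm (mem_univ x)
        omega
      refine ⟨{x, v}, mem_union_right _ (mem_image.2 ⟨x, hxW, rfl⟩), ?_⟩
      exact insert_subset_iff.2 ⟨mem_insert_of_mem hxp,
        singleton_subset_iff.2 (mem_insert_self v p)⟩
  have hcardU : (n.choose 3 - (n-c).choose 3) + ((n-c-1).choose 2 - (n-c-1-d).choose 2)
      ≤ (upperShadow n 3 T).card := by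
    rw [← hU1card, ← hU2card, ← card_union_of_disjoint hdisj]
    exact card_le_card hUsub
  have hfinal : (upperShadow n 3 T).card ≤ (upperShadow n 3 S').card := by
    rw [hshadT, hshadS]
    exact hkk
  -- final arithmetic
  set b := n - c - 2 - d with hbdef
  have e1 : n - c = b + d + 2 := by omega
  have e2 : n - c - 1 = b + d + 1 := by omega
  have e3 : n - c - 1 - d = b + 1 := by omega
  have e4 : n = b + d + 2 + c := by omega
  have hle3 : (n-c).choose 3 ≤ n.choose 3 := Nat.choose_le_choose _ (by omega)
  have hle2 : (n-c-1-d).choose 2 ≤ (n-c-1).choose 2 := Nat.choose_le_choose _ (by omega)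
  have hchain := le_trans hcardU hfinal
  zify [hle3, hle2] at hchain
  rw [e3, e2, e1] at hchain
  have hAM := arithMain b c d
  rw [← e4] at hAM
  have hAMZ : ((b+d+2).choose 3 : ℤ) + (b+1).choose 2 + c*(b+d+2).choose 2 + d*(b+d)
      ≤ (n.choose 3 : ℤ) + (b+d+1).choose 2 + d.choose 2 := by exact_mod_cast hAM
  have hn' : (n:ℤ) = (b:ℤ) + d + 2 + c := by exact_mod_cast congrArg (Nat.cast (R := ℤ)) e4
  rw [e1, hn']
  push_cast
  linarith [hchain, hAMZ]
end

section
/- If S′ ⊆ [n]^{(2)} and |S′| ≤ n−1, then |δ_2^+(S′)| ≥ |S′|·C(n−|S′|−1, 2) + C(|S′|, 2)·(n−|S′|−1). -/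
open Finset

lemma two_mul_choose_two (x : ℕ) : 2 * x.choose 2 = x * (x - 1) := by
  rcases x with _ | y
  · simp
  · rw [Nat.choose_two_right, Nat.succ_sub_one, Nat.mul_div_cancel']
    exact Even.two_dvd (by simpa [Nat.mul_comm] using Nat.even_mul_succ_self y)

lemma le_one_add_choose (f : ℕ) : f ≤ 1 + f.choose 2 := by
  rcases f with _ | _ | k
  · simp
  · simp
  · simp [Nat.choose_succ_succ, Nat.choose_one_right]
    omega

lemma sum_card_filter {α β : Type*} (s : Finset α) (t : Finset β)
    (P : α → β → Prop) [∀ a b, Decidable (P a b)] :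
    ∑ b ∈ t, (s.filter (fun a => P a b)).card = ∑ a ∈ s, (t.filter (fun b => P a b)).card := by
  simp_rw [card_filter]
  exact Finset.sum_comm

lemma card_supersets {n : ℕ} (u : Finset (Fin n)) (k : ℕ) (hu : u.card ≤ k) :
    (((univ : Finset (Fin n)).powersetCard k).filter (fun t => u ⊆ t)).card
      = (n - u.card).choose (k - u.card) := by
  have hcd : (univ \ u).card = n - u.card := by
    rw [card_sdiff_of_subset (subset_univ u), card_univ, Fintype.card_fin]
  rw [← hcd, ← card_powersetCard (k - u.card) (univ \ u)]
  apply card_nbij' (fun t => t \ u) (fun s => s ∪ u)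
  · intro t ht
    simp only [coe_filter, Set.mem_setOf_eq, mem_coe, mem_filter, mem_powersetCard] at ht ⊢
    refine ⟨sdiff_subset_sdiff ht.1.1 (le_refl u), ?_⟩
    rw [card_sdiff_of_subset ht.2, ht.1.2]
  · intro s hs
    simp only [coe_filter, Set.mem_setOf_eq, mem_coe, mem_filter, mem_powersetCard] at hs ⊢
    have hdisj : Disjoint s u := disjoint_of_subset_left hs.1 sdiff_disjoint
    refine ⟨⟨subset_univ _, ?_⟩, subset_union_right⟩
    rw [card_union_of_disjoint hdisj, hs.2]
    omega
  · intro t ht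
    simp only [coe_filter, Set.mem_setOf_eq, mem_coe, mem_filter, mem_powersetCard] at ht
    exact sdiff_union_of_subset ht.2
  · intro s hs
    simp only [Set.mem_setOf_eq, mem_coe, mem_powersetCard] at hs
    have hdisj : Disjoint s u := disjoint_of_subset_left hs.1 sdiff_disjoint
    beta_reduce
    rw [union_sdiff_right, sdiff_eq_self_of_disjoint hdisj]

lemma arith (m n : ℕ) (h4 : 4 ≤ n) (hm : m ≤ n - 1) :
    m * (n - m - 1).choose 2 + m.choose 2 * (n - m - 1) + m.choose 2 * (n - 3)
      = m * (n - 2).choose 2 := by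
  obtain ⟨a, rfl⟩ : ∃ a, n = m + 1 + a := ⟨n - m - 1, by omega⟩
  rcases m with _ | _ | k
  · simp
  · have h2 : 1 + 1 + a - 2 = a := by omega
    simp [h2]
  · have h2 : k + 2 + 1 + a - 2 = k + 1 + a := by omega
    have h3 : k + 2 + 1 + a - 3 = k + a := by omega
    have h4' : k + 2 + 1 + a - (k + 2) - 1 = a := by omega
    rw [h2, h3, h4']
    apply Nat.eq_of_mul_eq_mul_left (show 0 < 2 by norm_num)
    have e1 : 2 * a.choose 2 = a * (a - 1) := two_mul_choose_two a
    have e2 : 2 * (k + 2).choose 2 = (k + 2) * (k + 1) := by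
      rw [two_mul_choose_two]; rfl
    have e3 : 2 * (k + 1 + a).choose 2 = (k + 1 + a) * (k + a) := by
      rw [two_mul_choose_two]; congr 1; omega
    rcases a with _ | b
    · -- a = 0
      simp only [Nat.choose] at *
      nlinarith [e2]
    · have e1' : 2 * (b + 1).choose 2 = (b + 1) * b := by
        rw [two_mul_choose_two]; rfl
      calc 2 * ((k + 2) * (b + 1).choose 2 + (k + 2).choose 2 * (b + 1)
              + (k + 2).choose 2 * (k + (b + 1)))
          = (k + 2) * (2 * (b + 1).choose 2) + (2 * (k + 2).choose 2) * (b + 1)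
              + (2 * (k + 2).choose 2) * (k + (b + 1)) := by ring
        _ = (k + 2) * ((b + 1) * b) + ((k + 2) * (k + 1)) * (b + 1)
              + ((k + 2) * (k + 1)) * (k + (b + 1)) := by rw [e1', e2]
        _ = (k + 2) * ((k + 1 + (b + 1)) * (k + (b + 1))) := by ring
        _ = (k + 2) * (2 * (k + 1 + (b + 1)).choose 2) := by rw [e3]
        _ = 2 * ((k + 2) * (k + 1 + (b + 1)).choose 2) := by ring

/-- **Lemma 7(iii) of the paper (from Kühn–Osthus).**  If `S′ ⊆ [n]^{(2)}` and
`|S′| ≤ n − 1`, then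
`|δ_2^+(S′)| ≥ |S′|·C(n−|S′|−1, 2) + C(|S′|, 2)·(n−|S′|−1)`. -/
theorem upper_shadow_bound_two (n : ℕ) (S' : Finset (Finset (Fin n)))
    (hsub : ∀ A ∈ S', A.card = 2) (hcard : S'.card ≤ n - 1) :
    S'.card * Nat.choose (n - S'.card - 1) 2 + Nat.choose S'.card 2 * (n - S'.card - 1)
      ≤ (upperShadow n 4 S').card := by
  rcases le_or_gt n 3 with hn | hn
  · obtain ⟨m, hm⟩ : ∃ m, S'.card = m := ⟨_, rfl⟩
    rw [hm] at hcard ⊢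
    have h0 : m ≤ 2 := by omega
    have : m * (n - m - 1).choose 2 + m.choose 2 * (n - m - 1) = 0 := by
      interval_cases n <;> interval_cases m <;> simp
    rw [this]
    exact Nat.zero_le _
  · -- n ≥ 4
    set N := upperShadow n 4 S' with hN
    set T := (univ : Finset (Fin n)).powersetCard 4 with hT
    set m := S'.card with hm
    -- Step 1
    have hstep1 : m * (n - 2).choose 2 = ∑ t ∈ T, (S'.filter (fun e => e ⊆ t)).card := by
      rw [sum_card_filter S' T (fun e t => e ⊆ t)]
      rw [Finset.sum_congr rfl (fun e he => by
        rw [card_supersets e 4 (by rw [hsub e he]; norm_num), hsub e he])]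
      simp [mul_comm, hm]
    -- pair counting identity
    have hpair : ∀ t : Finset (Fin n),
        ((S'.filter (fun e => e ⊆ t)).card).choose 2
          = ((S'.powersetCard 2).filter (fun p => ∀ e ∈ p, e ⊆ t)).card := by
      intro t
      rw [← card_powersetCard 2 (S'.filter (fun e => e ⊆ t))]
      congr 1
      ext p
      simp only [mem_powersetCard, mem_filter]
      constructor
      · rintro ⟨hp, hc⟩
        exact ⟨⟨fun x hx => (mem_filter.mp (hp hx)).1, hc⟩,
          fun e he => (mem_filter.mp (hp he)).2⟩
      · rintro ⟨⟨hp, hc⟩, hall⟩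
        exact ⟨fun x hx => mem_filter.mpr ⟨hp hx, hall x hx⟩, hc⟩
    -- Step 2: pointwise bound
    have hstep2 : ∀ t ∈ T, (S'.filter (fun e => e ⊆ t)).card
        ≤ (if t ∈ N then 1 else 0)
          + ((S'.powersetCard 2).filter (fun p => ∀ e ∈ p, e ⊆ t)).card := by
      intro t ht
      rw [← hpair t]
      by_cases htN : t ∈ N
      · rw [if_pos htN]
        exact le_one_add_choose _
      · rw [if_neg htN, zero_add]
        have hz : (S'.filter (fun e => e ⊆ t)).card = 0 := by
          rw [card_eq_zero, filter_eq_empty_iff]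
          intro e he hsubt
          apply htN
          simp only [hN, upperShadow, mem_filter, mem_univ, true_and]
          simp only [hT, mem_powersetCard] at ht
          exact ⟨ht.2, e, he, hsubt⟩
        rw [hz]
        exact Nat.zero_le _
    -- Step 3
    have hstep3 : ∑ t ∈ T, (if t ∈ N then 1 else 0) = N.card := by
      rw [← Finset.card_filter]
      congr 1
      ext t
      simp only [mem_filter, hN, upperShadow, mem_univ, true_and, hT, mem_powersetCard]
      constructor
      · tauto
      · rintro ⟨hc, he⟩
        exact ⟨⟨subset_univ t, hc⟩, hc, he⟩
    -- Step 4
    have hstep4 : ∑ t ∈ T, ((S'.powersetCard 2).filter (fun p => ∀ e ∈ p, e ⊆ t)).card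
        ≤ m.choose 2 * (n - 3) := by
      rw [sum_card_filter (S'.powersetCard 2) T (fun p t => ∀ e ∈ p, e ⊆ t)]
      have hbound : ∀ p ∈ S'.powersetCard 2,
          (T.filter (fun t => ∀ e ∈ p, e ⊆ t)).card ≤ n - 3 := by
        intro p hp
        simp only [mem_powersetCard] at hp
        obtain ⟨e, f, hef, rfl⟩ := card_eq_two.mp hp.2
        have he : e ∈ S' := hp.1 (mem_insert_self e {f})
        have hf : f ∈ S' := hp.1 (mem_insert_of_mem (mem_singleton_self f))
        have hcongr : T.filter (fun t => ∀ x ∈ ({e, f} : Finset (Finset (Fin n))), x ⊆ t)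
            = T.filter (fun t => e ∪ f ⊆ t) := by
          apply filter_congr
          intro t _
          simp [union_subset_iff]
        rw [hcongr, card_supersets (e ∪ f) 4 (by
          have := card_union_le e f
          rw [hsub e he, hsub f hf] at this
          omega)]
        have hc3 : 3 ≤ (e ∪ f).card := by
          by_contra hlt
          push_neg at hlt
          have hsub1 : e ⊆ e ∪ f := subset_union_left
          have : e = e ∪ f := eq_of_subset_of_card_le hsub1 (by rw [hsub e he]; omega)
          have hfe : f ⊆ e := this ▸ subset_union_right
          exact hef ((eq_of_subset_of_card_le hfe (by rw [hsub e he, hsub f hf])).symm)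
        have hc4 : (e ∪ f).card ≤ 4 := by
          have := card_union_le e f
          rw [hsub e he, hsub f hf] at this
          omega
        interval_cases h : (e ∪ f).card
        · rw [Nat.choose_one_right]
        · norm_num
          omega
      calc ∑ p ∈ S'.powersetCard 2, (T.filter (fun t => ∀ e ∈ p, e ⊆ t)).card
          ≤ ∑ _p ∈ S'.powersetCard 2, (n - 3) := Finset.sum_le_sum hbound
        _ = m.choose 2 * (n - 3) := by
            rw [Finset.sum_const, smul_eq_mul, card_powersetCard]
    -- combine
    have hmain : m * (n - 2).choose 2 ≤ N.card + m.choose 2 * (n - 3) := by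
      rw [hstep1]
      calc ∑ t ∈ T, (S'.filter (fun e => e ⊆ t)).card
          ≤ ∑ t ∈ T, ((if t ∈ N then 1 else 0)
            + ((S'.powersetCard 2).filter (fun p => ∀ e ∈ p, e ⊆ t)).card) :=
            Finset.sum_le_sum hstep2
        _ = N.card + ∑ t ∈ T, ((S'.powersetCard 2).filter (fun p => ∀ e ∈ p, e ⊆ t)).card := by
            rw [Finset.sum_add_distrib, hstep3]
        _ ≤ N.card + m.choose 2 * (n - 3) := by
            exact Nat.add_le_add_left hstep4 _
    have hid := arith m n (by omega) hcard
    rw [← hid] at hmain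
    omega
end

section
/- Let n ≥ 10 and let g_1, …, g_m be subsets of [n] = {1, …, n} with m ≤ n, such that |g_j| ≥ n−4 for every j ∈ {1, …, m} and every element of [n] belongs to at least m−6 of the sets g_1, …, g_m. Then (g_1, …, g_m) has a system of distinct representatives, i.e., there exist pairwise distinct elements x_1, …, x_m of [n] with x_j ∈ g_j for every j. -/
/-- **SDR lemma (from the proof of Case 2 of Theorem 5 of the paper).**
Let `n ≥ 10`, `m ≤ n`, and let `g_1, …, g_m ⊆ [n]` be sets with `|g_j| ≥ n − 4` for
every `j`, such that every element of `[n]` belongs to at least `m − 6` of the sets.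
Then `(g_1, …, g_m)` has a system of distinct representatives. -/
theorem sdr_exists (n m : ℕ) (hn : 10 ≤ n) (hm : m ≤ n)
    (g : Fin m → Finset (Fin n))
    (hcard : ∀ j, n - 4 ≤ (g j).card)
    (hcover : ∀ x : Fin n, m - 6 ≤ (Finset.univ.filter fun j => x ∈ g j).card) :
    ∃ x : Fin m → Fin n, Function.Injective x ∧ ∀ j, x j ∈ g j := by
  rw [← Finset.all_card_le_biUnion_card_iff_exists_injective]
  intro s
  rcases Nat.eq_zero_or_pos s.card with h0 | hpos
  · simp [h0]
  by_cases hs : s.card ≤ n - 4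
  · obtain ⟨j, hj⟩ := Finset.card_pos.mp hpos
    calc s.card ≤ n - 4 := hs
      _ ≤ (g j).card := hcard j
      _ ≤ (s.biUnion g).card := Finset.card_le_card (fun x hx =>
        Finset.mem_biUnion.mpr ⟨j, hj, hx⟩)
  · -- s.card ≥ n - 3 ≥ 7, so the union is everything
    push_neg at hs
    have h7 : 7 ≤ s.card := by omega
    have huniv : s.biUnion g = Finset.univ := by
      apply Finset.eq_univ_of_forall
      intro x
      by_contra hx
      have hsub : (Finset.univ.filter fun j => x ∈ g j) ⊆ sᶜ := by
        intro j hj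
        rw [Finset.mem_filter] at hj
        rw [Finset.mem_compl]
        intro hjs
        exact hx (Finset.mem_biUnion.mpr ⟨j, hjs, hj.2⟩)
      have := Finset.card_le_card hsub
      rw [Finset.card_compl] at this
      have hc := hcover x
      have hcardm : s.card ≤ m := (Finset.card_le_card (Finset.subset_univ s)).trans
        (by simp)
      simp only [Fintype.card_fin] at this
      omega
    rw [huniv]
    have : s.card ≤ m := (Finset.card_le_card (Finset.subset_univ s)).trans (by simp)
    simp only [Finset.card_univ, Fintype.card_fin]
    omega
end

section
/- Let μ ≥ 1 and n ≥ 10 be integers and set k = n−2. Let C = (m_1, …, m_s) and P = (n_1, …, n_t) be lists of integers with 2 ≤ m_i ≤ n for every i ∈ {1, …, s}, 1 ≤ n_j ≤ n−1 for every j ∈ {1, …, t}, and m_1 + ⋯ + m_s + n_1 + ⋯ + n_t = μ·C(n, n−2). Then μK_n^{(n−2)} has a decomposition into s Berge cycles of lengths m_1, …, m_s and t Berge paths of lengths n_1, …, n_t. -/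
set_option maxHeartbeats 2000000

namespace Berge5

def MM (n : ℕ) : ℕ := if n % 2 = 0 then n - 1 else n
def inr (n : ℕ) : ℕ := (MM n - 1) / 2
def rho (n : ℕ) : ℕ := if n % 2 = 0 then inr n + 1 else inr n
def hf (n r : ℕ) : ℕ := if r % 2 = 0 then r / 2 else (r + MM n) / 2
def pA (n r s : ℕ) : ℕ := if hf n r + (s+1) < MM n then hf n r + (s+1) else hf n r + (s+1) - MM n
def pB (n r s : ℕ) : ℕ := if s + 1 ≤ hf n r then hf n r - (s+1) else hf n r + MM n - (s+1)
def pairOf (n r s : ℕ) : Finset ℕ := if s < inr n then {pA n r s, pB n r s} else {n - 1, hf n r}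

variable {n r s r' s' x : ℕ}

lemma MM_odd (hn : 10 ≤ n) : MM n % 2 = 1 := by unfold MM; split <;> omega
lemma MM_le (hn : 10 ≤ n) : MM n ≤ n := by unfold MM; split <;> omega
lemma MM_ge (hn : 10 ≤ n) : 9 ≤ MM n := by unfold MM; split <;> omega
lemma rho_facts (hn : 10 ≤ n) : inr n = (MM n - 1)/2 ∧
    ((n % 2 = 0 ∧ rho n = inr n + 1 ∧ MM n = n - 1) ∨ (n % 2 = 1 ∧ rho n = inr n ∧ MM n = n)) := by
  unfold rho inr MM; split <;> simp_all <;> omega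

lemma hf_lt (hn : 10 ≤ n) (hr : r < MM n) : hf n r < MM n := by
  have := MM_odd hn; unfold hf; split <;> omega

lemma hf_spec (hn : 10 ≤ n) (hr : r < MM n) : 2 * hf n r = r ∨ 2 * hf n r = r + MM n := by
  have := MM_odd hn; unfold hf; split <;> omega

lemma mem_pairOf_pos (hsi : s < inr n) :
    x ∈ pairOf n r s ↔ (x = pA n r s ∨ x = pB n r s) := by
  simp [pairOf, if_pos hsi]

lemma mem_pairOf_neg (hsi : ¬ s < inr n) :
    x ∈ pairOf n r s ↔ (x = n - 1 ∨ x = hf n r) := by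
  simp [pairOf, if_neg hsi]

lemma pair_card (hn : 10 ≤ n) (hr : r < MM n) (hs : s < rho n) : (pairOf n r s).card = 2 := by
  have h1 := hf_lt hn hr
  have h2 := MM_odd hn
  have h3 := MM_ge hn
  have h4 := MM_le hn
  obtain ⟨hi, hc⟩ := rho_facts hn
  by_cases hsi : s < inr n
  · have hne : pA n r s ≠ pB n r s := by
      unfold pA pB; split_ifs <;> omega
    rw [pairOf, if_pos hsi]
    simp [Finset.card_insert_of_notMem, hne]
  · have hne : n - 1 ≠ hf n r := by omega
    rw [pairOf, if_neg hsi]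
    simp [hne]

lemma pair_mem_lt (hn : 10 ≤ n) (hr : r < MM n) (hs : s < rho n) (hx : x ∈ pairOf n r s) :
    x < n := by
  have h1 := hf_lt hn hr
  have h3 := MM_ge hn
  have h4 := MM_le hn
  obtain ⟨hi, hc⟩ := rho_facts hn
  by_cases hsi : s < inr n
  · rw [mem_pairOf_pos hsi] at hx
    simp only [pA, pB] at hx; split_ifs at hx <;> omega
  · rw [mem_pairOf_neg hsi] at hx
    omega

/-- within a round, each vertex is in at most one pair -/
lemma pair_round_unique (hn : 10 ≤ n) (hr : r < MM n) (hs : s < rho n) (hs' : s' < rho n)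
    (hx : x ∈ pairOf n r s) (hx' : x ∈ pairOf n r s') : s = s' := by
  have h1 := hf_lt hn hr
  have h2 := MM_odd hn
  have h3 := MM_ge hn
  have h4 := MM_le hn
  obtain ⟨hi, hc⟩ := rho_facts hn
  by_cases hsi : s < inr n
  · by_cases hsi' : s' < inr n
    · rw [mem_pairOf_pos hsi] at hx
      rw [mem_pairOf_pos hsi'] at hx'
      simp only [pA, pB] at hx hx'; split_ifs at hx hx' <;> omega
    · rw [mem_pairOf_pos hsi] at hx
      rw [mem_pairOf_neg hsi'] at hx'
      simp only [pA, pB] at hx; split_ifs at hx <;> omega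
  · by_cases hsi' : s' < inr n
    · rw [mem_pairOf_neg hsi] at hx
      rw [mem_pairOf_pos hsi'] at hx'
      simp only [pA, pB] at hx'; split_ifs at hx' <;> omega
    · omega

/-- injectivity of the pair enumeration -/
lemma pairOf_inj (hn : 10 ≤ n) (hr : r < MM n) (hr' : r' < MM n) (hs : s < rho n)
    (hs' : s' < rho n) (h : pairOf n r s = pairOf n r' s') : r = r' ∧ s = s' := by
  have h1 := hf_lt hn hr
  have h1' := hf_lt hn hr'
  have h2 := MM_odd hn
  have h3 := MM_ge hn
  have h4 := MM_le hn
  have h5 := hf_spec hn hr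
  have h5' := hf_spec hn hr'
  obtain ⟨hi, hc⟩ := rho_facts hn
  have key := Finset.ext_iff.mp h
  by_cases hsi : s < inr n
  · by_cases hsi' : s' < inr n
    · have k1 := (key (pA n r s)).mp ((mem_pairOf_pos hsi).mpr (Or.inl rfl))
      have k2 := (key (pB n r s)).mp ((mem_pairOf_pos hsi).mpr (Or.inr rfl))
      have k3 := (key (pA n r' s')).mpr ((mem_pairOf_pos hsi').mpr (Or.inl rfl))
      rw [mem_pairOf_pos hsi'] at k1 k2
      rw [mem_pairOf_pos hsi] at k3
      simp only [pA, pB] at k1 k2 k3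
      split_ifs at k1 k2 k3 <;> omega
    · have k1 := (key (pA n r s)).mp ((mem_pairOf_pos hsi).mpr (Or.inl rfl))
      have k2 := (key (pB n r s)).mp ((mem_pairOf_pos hsi).mpr (Or.inr rfl))
      rw [mem_pairOf_neg hsi'] at k1 k2
      simp only [pA, pB] at k1 k2
      split_ifs at k1 k2 <;> omega
  · by_cases hsi' : s' < inr n
    · have k1 := (key (pA n r' s')).mpr ((mem_pairOf_pos hsi').mpr (Or.inl rfl))
      have k2 := (key (pB n r' s')).mpr ((mem_pairOf_pos hsi').mpr (Or.inr rfl))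
      rw [mem_pairOf_neg hsi] at k1 k2
      simp only [pA, pB] at k1 k2
      split_ifs at k1 k2 <;> omega
    · have k1 := (key (hf n r)).mp ((mem_pairOf_neg hsi).mpr (Or.inr rfl))
      rw [mem_pairOf_neg hsi'] at k1
      omega

variable {n μ g g' : ℕ}

/-- the pair (as a 2-subset of ℕ) at global position `g` -/
def PAIR (n g : ℕ) : Finset ℕ := pairOf n ((g / rho n) % MM n) (g % rho n)
/-- the edge at global position `g` -/
def EDGE (n g : ℕ) : Finset (Fin n) := Finset.univ.filter (fun x => ¬ x.val ∈ PAIR n g)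
/-- total number of edges -/
def Ntot (n μ : ℕ) : ℕ := μ * (MM n * rho n)
/-- the (edge, copy) token at global position `g` -/
def TOK (n : ℕ) (μ : ℕ) (hμ : 0 < μ) (g : ℕ) : Finset (Fin n) × Fin μ :=
  (EDGE n g, ⟨g / (rho n * MM n) % μ, Nat.mod_lt _ hμ⟩)

lemma rho_pos (hn : 10 ≤ n) : 0 < rho n := by
  have := MM_ge hn; obtain ⟨hi, hc⟩ := rho_facts hn; omega

lemma r_lt (hn : 10 ≤ n) : (g / rho n) % MM n < MM n := Nat.mod_lt _ (by have := MM_ge hn; omega)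

lemma s_lt (hn : 10 ≤ n) : g % rho n < rho n := Nat.mod_lt _ (rho_pos hn)

lemma PAIR_card (hn : 10 ≤ n) : (PAIR n g).card = 2 :=
  pair_card hn (r_lt hn) (s_lt hn)

lemma PAIR_mem_lt (hn : 10 ≤ n) {x : ℕ} (hx : x ∈ PAIR n g) : x < n :=
  pair_mem_lt hn (r_lt hn) (s_lt hn) hx

lemma MM_mul_rho (hn : 10 ≤ n) : MM n * rho n = n * (n - 1) / 2 := by
  have key : 2 * (MM n * rho n) = n * (n - 1) := by
    obtain ⟨hi, hc⟩ := rho_facts hn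
    rcases hc with ⟨he, h1, h2⟩ | ⟨ho, h1, h2⟩
    · obtain ⟨q, rfl⟩ : ∃ q, n = 2 * q + 2 := ⟨(n - 2) / 2, by omega⟩
      have h5 : rho (2 * q + 2) = q + 1 := by omega
      have h6 : MM (2 * q + 2) = 2 * q + 1 := by omega
      rw [h5, h6]
      have h7 : 2 * q + 2 - 1 = 2 * q + 1 := by omega
      rw [h7]; ring
    · obtain ⟨q, rfl⟩ : ∃ q, n = 2 * q + 1 := ⟨n / 2, by omega⟩
      have h5 : rho (2 * q + 1) = q := by omega
      have h6 : MM (2 * q + 1) = 2 * q + 1 := by omega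
      rw [h5, h6]
      have h7 : 2 * q + 1 - 1 = 2 * q := by omega
      rw [h7]; ring
  omega

lemma choose_eq (hn : 10 ≤ n) : Nat.choose n (n - 2) = MM n * rho n := by
  rw [MM_mul_rho hn, ← Nat.choose_two_right]
  have h2 : n - (n - 2) = 2 := by omega
  rw [← h2, Nat.choose_symm (by omega)]

lemma EDGE_card (hn : 10 ≤ n) : (EDGE n g).card = n - 2 := by
  classical
  have hmem : (Finset.univ.filter (fun x : Fin n => x.val ∈ PAIR n g)).card = 2 := by
    rw [← PAIR_card (g := g) hn]
    apply Finset.card_bij (fun (x : Fin n) _ => x.val)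
    · intro a ha; simp only [Finset.mem_filter] at ha; exact ha.2
    · intro a ha b hb hab; exact Fin.ext hab
    · intro b hb
      exact ⟨⟨b, PAIR_mem_lt hn hb⟩, by simp [hb], rfl⟩
  have hsd : EDGE n g = Finset.univ \ Finset.univ.filter (fun x : Fin n => x.val ∈ PAIR n g) := by
    ext x; simp [EDGE]
  rw [hsd, Finset.card_sdiff_of_subset (Finset.filter_subset _ _), hmem]
  simp

lemma TOK_inj (hn : 10 ≤ n) (hμ : 0 < μ) (hg : g < Ntot n μ) (hg' : g' < Ntot n μ)
    (h : TOK n μ hμ g = TOK n μ hμ g') : g = g' := by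
  have hMpos : 0 < MM n := by have := MM_ge hn; omega
  have hrpos := rho_pos hn
  have hcop : g / (rho n * MM n) = g' / (rho n * MM n) := by
    have h2 := congrArg Prod.snd h
    simp only [TOK] at h2
    have hlt : g / (rho n * MM n) < μ := by
      apply Nat.div_lt_of_lt_mul
      calc g < μ * (MM n * rho n) := hg
      _ = rho n * MM n * μ := by ring
    have hlt' : g' / (rho n * MM n) < μ := by
      apply Nat.div_lt_of_lt_mul
      calc g' < μ * (MM n * rho n) := hg'
      _ = rho n * MM n * μ := by ring
    have := Fin.mk.injEq _ _ _ _ ▸ h2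
    rw [Nat.mod_eq_of_lt hlt, Nat.mod_eq_of_lt hlt'] at this
    exact this
  have hedge : EDGE n g = EDGE n g' := congrArg Prod.fst h
  have hpair : PAIR n g = PAIR n g' := by
    ext y
    constructor
    · intro hy
      have hyn : y < n := PAIR_mem_lt hn hy
      by_contra hy'
      have : (⟨y, hyn⟩ : Fin n) ∈ EDGE n g' := by simp [EDGE, hy']
      rw [← hedge] at this
      simp [EDGE] at this
      exact this hy
    · intro hy
      have hyn : y < n := PAIR_mem_lt hn hy
      by_contra hy'
      have : (⟨y, hyn⟩ : Fin n) ∈ EDGE n g := by simp [EDGE, hy']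
      rw [hedge] at this
      simp [EDGE] at this
      exact this hy
  obtain ⟨hr, hs⟩ := pairOf_inj hn (r_lt hn) (r_lt hn) (s_lt hn) (s_lt hn) hpair
  have e1 : g / rho n / MM n = g' / rho n / MM n := by
    rw [Nat.div_div_eq_div_mul, Nat.div_div_eq_div_mul]; exact hcop
  have d3 := Nat.div_add_mod (g / rho n) (MM n)
  rw [e1, hr] at d3
  have d4 := Nat.div_add_mod (g' / rho n) (MM n)
  have hq : g / rho n = g' / rho n := by omega
  have d1 := Nat.div_add_mod g (rho n)
  rw [hq, hs] at d1
  have d2 := Nat.div_add_mod g' (rho n)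
  omega

lemma TOK_surj (hn : 10 ≤ n) (hμ : 0 < μ) (A : Finset (Fin n)) (hA : A.card = n - 2)
    (c : Fin μ) : ∃ g < Ntot n μ, TOK n μ hμ g = (A, c) := by
  classical
  set S : Finset (Finset (Fin n) × Fin μ) :=
    (Finset.univ.powersetCard (n - 2)) ×ˢ Finset.univ with hS
  have hScard : S.card = Ntot n μ := by
    rw [hS, Finset.card_product, Finset.card_powersetCard]
    simp only [Finset.card_univ, Fintype.card_fin]
    rw [choose_eq hn, Ntot]
    ring
  set f : Fin (Ntot n μ) → Finset (Fin n) × Fin μ := fun g => TOK n μ hμ g.val with hf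
  have hfinj : Function.Injective f := by
    intro a b hab
    exact Fin.ext (TOK_inj hn hμ a.isLt b.isLt hab)
  have himg : Finset.univ.image f ⊆ S := by
    intro y hy
    simp only [Finset.mem_image] at hy
    obtain ⟨a, _, ha⟩ := hy
    rw [hS, Finset.mem_product]
    constructor
    · rw [Finset.mem_powersetCard]
      refine ⟨Finset.subset_univ _, ?_⟩
      rw [← ha]
      exact EDGE_card hn
    · simp
  have hcard : (Finset.univ.image f).card = Ntot n μ := by
    rw [Finset.card_image_of_injective _ hfinj]
    simp
  have : Finset.univ.image f = S := Finset.eq_of_subset_of_card_le himg (by omega)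
  have hmem : (A, c) ∈ S := by
    rw [hS, Finset.mem_product]
    exact ⟨by rw [Finset.mem_powersetCard]; exact ⟨Finset.subset_univ _, hA⟩, Finset.mem_univ _⟩
  rw [← this] at hmem
  simp only [Finset.mem_image] at hmem
  obtain ⟨a, _, ha⟩ := hmem
  exact ⟨a.val, a.isLt, ha⟩

variable {n μ b g mlen plen : ℕ}

lemma PAIR_def (n g : ℕ) : PAIR n g = pairOf n ((g / rho n) % MM n) (g % rho n) := rfl

lemma n_le_rho (hn : 10 ≤ n) : n ≤ 2 * rho n + 1 := by
  obtain ⟨hi, hc⟩ := rho_facts hn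
  have := MM_ge hn
  omega

/-- in a window of `≤ 2ρ+1` consecutive positions, a vertex `x` lies in at most 3 pairs -/
lemma J_card_le (hn : 10 ≤ n) (x : ℕ) (hm : mlen ≤ 2 * rho n + 1) :
    ((Finset.univ : Finset (Fin mlen)).filter
      (fun j => x ∈ PAIR n (b + j.val))).card ≤ 3 := by
  have hrpos := rho_pos hn
  have h3 : ({0, 1, 2} : Finset ℕ).card ≤ 3 := by decide
  refine le_trans (Finset.card_le_card_of_injOn
    (fun j => (b + j.val) / rho n - b / rho n) ?_ ?_) h3
  · intro j hj
    have hj2 : (b + j.val) / rho n ≤ b / rho n + 2 := by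
      have h1 : (b + j.val) ≤ b + 2 * rho n := by have := j.isLt; omega
      have h2 : (b + 2 * rho n) / rho n = b / rho n + 2 := by
        rw [Nat.add_mul_div_right _ _ hrpos]
      calc (b + j.val) / rho n ≤ (b + 2 * rho n) / rho n := Nat.div_le_div_right h1
        _ = b / rho n + 2 := h2
    simp only [Finset.mem_coe, Finset.mem_insert, Finset.mem_singleton]
    omega
  · intro j hj j' hj' heq
    simp only [Finset.mem_coe, Finset.mem_filter] at hj hj'
    have hmono : b / rho n ≤ (b + j.val) / rho n := Nat.div_le_div_right (by omega)
    have hmono' : b / rho n ≤ (b + j'.val) / rho n := Nat.div_le_div_right (by omega)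
    simp only at heq
    have hq : (b + j.val) / rho n = (b + j'.val) / rho n := by omega
    have hs : (b + j.val) % rho n = (b + j'.val) % rho n := by
      have hr1 : ((b + j.val) / rho n) % MM n < MM n := r_lt hn
      have hs1 : (b + j.val) % rho n < rho n := s_lt hn
      have hs2 : (b + j'.val) % rho n < rho n := s_lt hn
      refine pair_round_unique (x := x) hn hr1 hs1 hs2 ?_ ?_
      · rw [← PAIR_def]; exact hj.2
      · rw [hq, ← PAIR_def]; exact hj'.2
    have d1 := Nat.div_add_mod (b + j.val) (rho n)
    have d2 := Nat.div_add_mod (b + j'.val) (rho n)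
    rw [hq, hs] at d1
    have : j.val = j'.val := by omega
    exact Fin.ext this

/-- allowed vertex sets for a cycle block -/
def tC (n b mlen : ℕ) (j : Fin mlen) : Finset (Fin n) :=
  Finset.univ.filter (fun y => ¬ y.val ∈ PAIR n (b + (j.val + mlen - 1) % mlen)
    ∧ ¬ y.val ∈ PAIR n (b + j.val))

/-- allowed vertex sets for a path block -/
def tP (n b plen : ℕ) (j : Fin (plen + 1)) : Finset (Fin n) :=
  Finset.univ.filter (fun y => (j.val < plen → ¬ y.val ∈ PAIR n (b + j.val))
    ∧ (0 < j.val → ¬ y.val ∈ PAIR n (b + j.val - 1)))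

lemma filter_two_pairs_card (hn : 10 ≤ n) (P1 P2 : Finset ℕ)
    (h1 : P1.card = 2) (h2 : P2.card = 2) :
    ((Finset.univ : Finset (Fin n)).filter (fun y => y.val ∈ P1 ∨ y.val ∈ P2)).card ≤ 4 := by
  classical
  have : ((Finset.univ : Finset (Fin n)).filter (fun y => y.val ∈ P1 ∨ y.val ∈ P2)).card
      ≤ (P1 ∪ P2).card := by
    apply Finset.card_le_card_of_injOn (fun y => y.val)
    · intro y hy
      simp only [Finset.mem_coe, Finset.mem_filter] at hy
      simp only [Finset.mem_coe, Finset.mem_union]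
      exact hy.2
    · intro a _ b _ hab; exact Fin.ext hab
  calc _ ≤ (P1 ∪ P2).card := this
    _ ≤ P1.card + P2.card := Finset.card_union_le _ _
    _ ≤ 4 := by omega

lemma tC_card (hn : 10 ≤ n) (j : Fin mlen) : n - 4 ≤ (tC n b mlen j).card := by
  classical
  have hs : tC n b mlen j = Finset.univ \ (Finset.univ.filter
      (fun y : Fin n => y.val ∈ PAIR n (b + (j.val + mlen - 1) % mlen)
        ∨ y.val ∈ PAIR n (b + j.val))) := by
    ext y
    simp only [tC, Finset.mem_filter, Finset.mem_univ, true_and, Finset.mem_sdiff]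
    tauto
  rw [hs, Finset.card_sdiff_of_subset (Finset.filter_subset _ _)]
  have h4 := filter_two_pairs_card hn _ _ (PAIR_card hn (g := b + (j.val + mlen - 1) % mlen))
    (PAIR_card hn (g := b + j.val))
  have : (Finset.univ : Finset (Fin n)).card = n := by simp
  omega

lemma tP_card (hn : 10 ≤ n) (j : Fin (plen + 1)) : n - 4 ≤ (tP n b plen j).card := by
  classical
  have hs : tP n b plen j ⊇ Finset.univ \ (Finset.univ.filter
      (fun y : Fin n => y.val ∈ PAIR n (b + j.val)
        ∨ y.val ∈ PAIR n (b + j.val - 1))) := by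
    intro y hy
    simp only [Finset.mem_sdiff, Finset.mem_filter, Finset.mem_univ, true_and] at hy
    simp only [tP, Finset.mem_filter, Finset.mem_univ, true_and]
    push_neg at hy
    exact ⟨fun _ => hy.1, fun _ => hy.2⟩
  refine le_trans ?_ (Finset.card_le_card hs)
  rw [Finset.card_sdiff_of_subset (Finset.filter_subset _ _)]
  have h4 := filter_two_pairs_card hn _ _ (PAIR_card hn (g := b + j.val))
    (PAIR_card hn (g := b + j.val - 1))
  have : (Finset.univ : Finset (Fin n)).card = n := by simp
  omega

lemma cyc_succ (h2 : 2 ≤ mlen) {j : ℕ} (hj : j < mlen) :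
    ((j + mlen - 1) % mlen + 1) % mlen = j := by
  rcases Nat.eq_zero_or_pos j with h | h
  · subst h
    have e1 : (0 + mlen - 1) % mlen = mlen - 1 := by
      rw [show (0 + mlen - 1) = mlen - 1 by omega]
      exact Nat.mod_eq_of_lt (by omega)
    rw [e1, show mlen - 1 + 1 = mlen by omega, Nat.mod_self]
  · have e1 : (j + mlen - 1) % mlen = j - 1 := by
      rw [show j + mlen - 1 = (j - 1) + mlen by omega, Nat.add_mod_right]
      exact Nat.mod_eq_of_lt (by omega)
    rw [e1, show j - 1 + 1 = j by omega]
    exact Nat.mod_eq_of_lt hj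

/-- Hall condition for a cycle block -/
lemma hall_cycle (hn : 10 ≤ n) (h2 : 2 ≤ mlen) (hmn : mlen ≤ n)
    (S : Finset (Fin mlen)) : S.card ≤ (S.biUnion (tC n b mlen)).card := by
  classical
  by_cases hsmall : S.card ≤ n - 4
  · rcases S.eq_empty_or_nonempty with rfl | ⟨j, hj⟩
    · simp
    · calc S.card ≤ n - 4 := hsmall
        _ ≤ (tC n b mlen j).card := tC_card hn j
        _ ≤ (S.biUnion (tC n b mlen)).card :=
            Finset.card_le_card (Finset.subset_biUnion_of_mem _ hj)
  · have hbig : n - 3 ≤ S.card := by omega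
    have huniv : S.biUnion (tC n b mlen) = Finset.univ := by
      apply Finset.eq_univ_iff_forall.mpr
      intro y
      by_contra hy
      have hall : ∀ j ∈ S, y.val ∈ PAIR n (b + (j.val + mlen - 1) % mlen)
          ∨ y.val ∈ PAIR n (b + j.val) := by
        intro j hj
        by_contra hcon
        push_neg at hcon
        exact hy (Finset.mem_biUnion.mpr ⟨j, hj, by
          simp only [tC, Finset.mem_filter, Finset.mem_univ, true_and]
          exact hcon⟩)
      set J : Finset (Fin mlen) :=
        Finset.univ.filter (fun j => y.val ∈ PAIR n (b + j.val)) with hJ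
      have hJ3 : J.card ≤ 3 := J_card_le hn y.val (le_trans hmn (n_le_rho hn))
      have hσ : ∀ j ∈ S, j ∈ J ∪ J.image
          (fun j : Fin mlen => (⟨(j.val + 1) % mlen, Nat.mod_lt _ (by omega)⟩ : Fin mlen)) := by
        intro j hj
        rcases hall j hj with hc | hc
        · apply Finset.mem_union_right
          apply Finset.mem_image.mpr
          refine ⟨⟨(j.val + mlen - 1) % mlen, Nat.mod_lt _ (by omega)⟩, ?_, ?_⟩
          · rw [hJ, Finset.mem_filter]
            exact ⟨Finset.mem_univ _, hc⟩
          · apply Fin.ext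
            exact cyc_succ h2 j.isLt
        · exact Finset.mem_union_left _ (by rw [hJ, Finset.mem_filter]; exact ⟨Finset.mem_univ _, hc⟩)
      have : S.card ≤ (J ∪ J.image _).card := Finset.card_le_card (fun j hj => hσ j hj)
      have hu : (J ∪ J.image (fun j : Fin mlen =>
          (⟨(j.val + 1) % mlen, Nat.mod_lt _ (by omega)⟩ : Fin mlen))).card ≤ 6 := by
        calc _ ≤ J.card + (J.image _).card := Finset.card_union_le _ _
          _ ≤ J.card + J.card := by
              have := Finset.card_image_le (s := J) (f := fun j : Fin mlen =>
                (⟨(j.val + 1) % mlen, Nat.mod_lt _ (by omega)⟩ : Fin mlen))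
              omega
          _ ≤ 6 := by omega
      omega
    rw [huniv]
    have h1 : S.card ≤ mlen := le_trans (Finset.card_le_univ S) (by simp)
    have h2 : (Finset.univ : Finset (Fin n)).card = n := by simp
    omega

/-- Hall condition for a path block -/
lemma hall_path (hn : 10 ≤ n) (h1 : 1 ≤ plen) (hpn : plen ≤ n - 1)
    (S : Finset (Fin (plen + 1))) : S.card ≤ (S.biUnion (tP n b plen)).card := by
  classical
  by_cases hsmall : S.card ≤ n - 4
  · rcases S.eq_empty_or_nonempty with rfl | ⟨j, hj⟩
    · simp
    · calc S.card ≤ n - 4 := hsmall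
        _ ≤ (tP n b plen j).card := tP_card hn j
        _ ≤ (S.biUnion (tP n b plen)).card :=
            Finset.card_le_card (Finset.subset_biUnion_of_mem _ hj)
  · have hbig : n - 3 ≤ S.card := by omega
    have huniv : S.biUnion (tP n b plen) = Finset.univ := by
      apply Finset.eq_univ_iff_forall.mpr
      intro y
      by_contra hy
      have hall : ∀ j ∈ S, (j.val < plen ∧ y.val ∈ PAIR n (b + j.val))
          ∨ (0 < j.val ∧ y.val ∈ PAIR n (b + j.val - 1)) := by
        intro j hj
        by_contra hcon
        push_neg at hcon
        exact hy (Finset.mem_biUnion.mpr ⟨j, hj, by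
          simp only [tP, Finset.mem_filter, Finset.mem_univ, true_and]
          exact hcon⟩)
      set J : Finset (Fin (plen + 1)) :=
        Finset.univ.filter (fun j => y.val ∈ PAIR n (b + j.val)) with hJ
      have hJ3 : J.card ≤ 3 := J_card_le hn y.val (by
        have := n_le_rho hn; omega)
      set σ : Fin (plen + 1) → Fin (plen + 1) :=
        fun j => (⟨min (j.val + 1) plen, by omega⟩ : Fin (plen + 1)) with hσdef
      have hσ : ∀ j ∈ S, j ∈ J ∪ J.image σ := by
        intro j hj
        rcases hall j hj with ⟨h1c, hc⟩ | ⟨h1c, hc⟩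
        · exact Finset.mem_union_left _ (by rw [hJ, Finset.mem_filter]; exact ⟨Finset.mem_univ _, hc⟩)
        · apply Finset.mem_union_right
          apply Finset.mem_image.mpr
          refine ⟨⟨j.val - 1, by omega⟩, ?_, ?_⟩
          · rw [hJ, Finset.mem_filter]
            refine ⟨Finset.mem_univ _, ?_⟩
            have : b + (j.val - 1) = b + j.val - 1 := by omega
            rw [this]
            exact hc
          · apply Fin.ext
            simp only [hσdef]
            have := j.isLt
            omega
      have hcard : S.card ≤ (J ∪ J.image σ).card := Finset.card_le_card (fun j hj => hσ j hj)
      have hu : (J ∪ J.image σ).card ≤ 6 := by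
        calc _ ≤ J.card + (J.image σ).card := Finset.card_union_le _ _
          _ ≤ J.card + J.card := by have := Finset.card_image_le (s := J) (f := σ); omega
          _ ≤ 6 := by omega
      omega
    rw [huniv]
    have hc1 : S.card ≤ plen + 1 := le_trans (Finset.card_le_univ S) (by simp)
    have hc2 : (Finset.univ : Finset (Fin n)).card = n := by simp
    omega

/-- prefix sums -/
def OFF (f : ℕ → ℕ) (k : ℕ) : ℕ := ∑ j ∈ Finset.range k, f j

lemma OFF_succ (f : ℕ → ℕ) (k : ℕ) : OFF f (k + 1) = OFF f k + f k :=
  Finset.sum_range_succ f k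

lemma OFF_mono (f : ℕ → ℕ) {k k' : ℕ} (h : k ≤ k') : OFF f k ≤ OFF f k' :=
  Finset.sum_le_sum_of_subset (Finset.range_subset_range.mpr h)

lemma OFF_locate (f : ℕ → ℕ) (K g : ℕ) (h : g < OFF f K) :
    ∃ k < K, OFF f k ≤ g ∧ g < OFF f k + f k := by
  induction K with
  | zero => simp [OFF] at h
  | succ K ih =>
    rw [OFF_succ] at h
    by_cases hg : g < OFF f K
    · obtain ⟨k, h1, h2, h3⟩ := ih hg
      exact ⟨k, by omega, h2, h3⟩
    · exact ⟨K, by omega, by omega, by omega⟩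

lemma OFF_unique (f : ℕ → ℕ) {k k' g : ℕ} (h1 : OFF f k ≤ g) (h2 : g < OFF f k + f k)
    (h1' : OFF f k' ≤ g) (h2' : g < OFF f k' + f k') : k = k' := by
  by_contra hne
  rcases Nat.lt_or_ge k k' with h | h
  · have := OFF_mono f (show k + 1 ≤ k' by omega)
    rw [OFF_succ] at this
    omega
  · have hlt : k' < k := by omega
    have := OFF_mono f (show k' + 1 ≤ k by omega)
    rw [OFF_succ] at this
    omega

lemma cyc_pred {mlen : ℕ} (h2 : 2 ≤ mlen) {j : ℕ} (hj : j < mlen) :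
    ((j + 1) % mlen + mlen - 1) % mlen = j := by
  by_cases hc : j + 1 < mlen
  · rw [Nat.mod_eq_of_lt hc, show j + 1 + mlen - 1 = j + mlen by omega,
      Nat.add_mod_right]
    exact Nat.mod_eq_of_lt hj
  · have : j + 1 = mlen := by omega
    rw [this, Nat.mod_self, show 0 + mlen - 1 = mlen - 1 by omega]
    rw [Nat.mod_eq_of_lt (by omega)]
    omega

lemma mem_EDGE {n g : ℕ} (y : Fin n) : y ∈ EDGE n g ↔ ¬ y.val ∈ PAIR n g := by
  simp [EDGE]

lemma TOK_fst (n μ : ℕ) (hμ : 0 < μ) (g : ℕ) : (TOK n μ hμ g).1 = EDGE n g := rfl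

end Berge5

/-- The data `(v, e)` forms a Berge cycle of length `len` in `μ K_n^{(k)}` (edges of the
multi-hypergraph are pairs: a `k`-subset of `Fin n` together with a copy index in `Fin μ`):
the vertices `v 0, …, v (len-1)` are distinct, the edges `e 0, …, e (len-1)` are distinct
`k`-sets (with multiplicity), and `e j` contains `v j` and `v ((j+1) mod len)`. -/
def IsBergeCycle (n k μ len : ℕ) (v : ℕ → Fin n) (e : ℕ → Finset (Fin n) × Fin μ) : Prop :=
  Set.InjOn v (Set.Iio len) ∧ Set.InjOn e (Set.Iio len) ∧
  ∀ j < len, (e j).1.card = k ∧ v j ∈ (e j).1 ∧ v ((j + 1) % len) ∈ (e j).1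

/-- The data `(v, e)` forms a Berge path of length `len` in `μ K_n^{(k)}`:
the vertices `v 0, …, v len` are distinct, the edges `e 0, …, e (len-1)` are distinct
`k`-sets (with multiplicity), and `e j` contains `v j` and `v (j+1)`. -/
def IsBergePath (n k μ len : ℕ) (v : ℕ → Fin n) (e : ℕ → Finset (Fin n) × Fin μ) : Prop :=
  Set.InjOn v (Set.Iic len) ∧ Set.InjOn e (Set.Iio len) ∧
  ∀ j < len, (e j).1.card = k ∧ v j ∈ (e j).1 ∧ v (j + 1) ∈ (e j).1


open Berge5 in
/-- **Case `k = n−2` of Theorem 5 of the paper.**  For `μ ≥ 1`, `n ≥ 10` and lists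
`C = (m_1, …, m_s)`, `P = (n_1, …, n_t)` with `2 ≤ m_i ≤ n`, `1 ≤ n_j ≤ n−1` and
`Σ m_i + Σ n_j = μ·C(n, n−2)`, the multi-hypergraph `μ K_n^{(n-2)}` decomposes into
`s` Berge cycles of lengths `m_1, …, m_s` and `t` Berge paths of lengths `n_1, …, n_t`. -/
theorem complete_multihypergraph_berge_decomposition_k_eq_n_sub_two (μ n : ℕ) (hμ : 1 ≤ μ)
    (hn : 10 ≤ n)
    (s t : ℕ) (m : Fin s → ℕ) (p : Fin t → ℕ)
    (hm : ∀ i, 2 ≤ m i ∧ m i ≤ n) (hp : ∀ j, 1 ≤ p j ∧ p j ≤ n - 1)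
    (hsum : ∑ i, m i + ∑ j, p j = μ * Nat.choose n (n - 2)) :
    ∃ (vc : Fin s → ℕ → Fin n) (ec : Fin s → ℕ → Finset (Fin n) × Fin μ)
      (vp : Fin t → ℕ → Fin n) (ep : Fin t → ℕ → Finset (Fin n) × Fin μ),
      (∀ i, IsBergeCycle n (n - 2) μ (m i) (vc i) (ec i)) ∧
      (∀ j, IsBergePath n (n - 2) μ (p j) (vp j) (ep j)) ∧
      (∀ A : Finset (Fin n), A.card = n - 2 → ∀ c : Fin μ,
        ∃! x : (Σ i : Fin s, Fin (m i)) ⊕ (Σ j : Fin t, Fin (p j)),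
          Sum.elim (fun q : Σ i : Fin s, Fin (m i) => ec q.1 q.2.val)
                   (fun q : Σ j : Fin t, Fin (p j) => ep q.1 q.2.val) x = (A, c)) := by
  classical
  have hμ0 : 0 < μ := hμ
  set mm : ℕ → ℕ := fun i => if h : i < s then m ⟨i, h⟩ else 0 with hmm
  set pp : ℕ → ℕ := fun j => if h : j < t then p ⟨j, h⟩ else 0 with hpp
  have hmmv : ∀ i : Fin s, mm i.val = m i := fun i => by simp [hmm, i.isLt]
  have hppv : ∀ j : Fin t, pp j.val = p j := fun j => by simp [hpp, j.isLt]
  have hOm : OFF mm s = ∑ i, m i := by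
    rw [OFF, ← Fin.sum_univ_eq_sum_range]
    exact Finset.sum_congr rfl (fun i _ => hmmv i)
  have hOp : OFF pp t = ∑ j, p j := by
    rw [OFF, ← Fin.sum_univ_eq_sum_range]
    exact Finset.sum_congr rfl (fun j _ => hppv j)
  have hN : OFF mm s + OFF pp t = Ntot n μ := by
    rw [hOm, hOp, hsum, Ntot, choose_eq hn]
  -- block position bounds
  have hCbound : ∀ i : Fin s, OFF mm i.val + m i ≤ OFF mm s := by
    intro i
    have h1 := OFF_mono mm (show i.val + 1 ≤ s from i.isLt)
    rw [OFF_succ, hmmv] at h1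
    exact h1
  have hPbound : ∀ j : Fin t, OFF pp j.val + p j ≤ OFF pp t := by
    intro j
    have h1 := OFF_mono pp (show j.val + 1 ≤ t from j.isLt)
    rw [OFF_succ, hppv] at h1
    exact h1
  -- Hall for the blocks
  have HC : ∀ i : Fin s, ∃ f : Fin (m i) → Fin n, Function.Injective f ∧
      ∀ j, f j ∈ tC n (OFF mm i.val) (m i) j :=
    fun i => (Finset.all_card_le_biUnion_card_iff_exists_injective
      (tC n (OFF mm i.val) (m i))).mp
      (fun S => hall_cycle hn (hm i).1 (hm i).2 S)
  choose fC hfCinj hfCmem using HC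
  have HP : ∀ j : Fin t, ∃ f : Fin (p j + 1) → Fin n, Function.Injective f ∧
      ∀ l, f l ∈ tP n (OFF mm s + OFF pp j.val) (p j) l :=
    fun j => (Finset.all_card_le_biUnion_card_iff_exists_injective
      (tP n (OFF mm s + OFF pp j.val) (p j))).mp
      (fun S => hall_path hn (hp j).1 (hp j).2 S)
  choose fP hfPinj hfPmem using HP
  refine ⟨fun i j => if h : j < m i then fC i ⟨j, h⟩ else fC i ⟨0, by have := (hm i).1; omega⟩,
          fun i j => TOK n μ hμ0 (OFF mm i.val + j % m i),
          fun j l => if h : l < p j + 1 then fP j ⟨l, h⟩ else fP j ⟨0, by omega⟩,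
          fun j l => TOK n μ hμ0 (OFF mm s + OFF pp j.val + min l (p j - 1)),
          ?_, ?_, ?_⟩
  · -- cycles
    intro i
    have hm2 := (hm i).1
    have hmn := (hm i).2
    have hmpos : 0 < m i := by omega
    refine ⟨?_, ?_, ?_⟩
    · intro a ha b hb hab
      dsimp only at hab
      simp only [Set.mem_Iio] at ha hb
      rw [dif_pos ha, dif_pos hb] at hab
      have := congrArg Fin.val (hfCinj i hab)
      simpa using this
    · intro a ha b hb hab
      dsimp only at hab
      simp only [Set.mem_Iio] at ha hb
      rw [Nat.mod_eq_of_lt ha, Nat.mod_eq_of_lt hb] at hab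
      have h1 : OFF mm i.val + a < Ntot n μ := by have := hCbound i; omega
      have h2 : OFF mm i.val + b < Ntot n μ := by have := hCbound i; omega
      have := TOK_inj hn hμ0 h1 h2 hab
      omega
    · intro j hj
      dsimp only
      have hjm : j % m i = j := Nat.mod_eq_of_lt hj
      refine ⟨?_, ?_, ?_⟩
      · rw [TOK_fst]; exact EDGE_card hn
      · rw [dif_pos hj, TOK_fst, hjm]
        have H := hfCmem i ⟨j, hj⟩
        simp only [tC, Finset.mem_filter] at H
        rw [mem_EDGE]
        exact H.2.2
      · have hx : (j + 1) % m i < m i := Nat.mod_lt _ hmpos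
        rw [dif_pos hx, TOK_fst, hjm]
        have H := hfCmem i ⟨(j + 1) % m i, hx⟩
        simp only [tC, Finset.mem_filter] at H
        rw [mem_EDGE]
        have hcp : ((j + 1) % m i + m i - 1) % m i = j := cyc_pred hm2 hj
        rw [hcp] at H
        exact H.2.1
  · -- paths
    intro j
    have hp1 := (hp j).1
    have hpn := (hp j).2
    refine ⟨?_, ?_, ?_⟩
    · intro a ha b hb hab
      dsimp only at hab
      simp only [Set.mem_Iic] at ha hb
      rw [dif_pos (by omega : a < p j + 1), dif_pos (by omega : b < p j + 1)] at hab
      have := congrArg Fin.val (hfPinj j hab)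
      simpa using this
    · intro a ha b hb hab
      dsimp only at hab
      simp only [Set.mem_Iio] at ha hb
      rw [Nat.min_eq_left (by omega), Nat.min_eq_left (by omega)] at hab
      have h1 : OFF mm s + OFF pp j.val + a < Ntot n μ := by have := hPbound j; omega
      have h2 : OFF mm s + OFF pp j.val + b < Ntot n μ := by have := hPbound j; omega
      have := TOK_inj hn hμ0 h1 h2 hab
      omega
    · intro l hl
      dsimp only
      refine ⟨?_, ?_, ?_⟩
      · rw [TOK_fst]; exact EDGE_card hn
      · rw [dif_pos (by omega : l < p j + 1), TOK_fst, Nat.min_eq_left (by omega)]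
        have H := hfPmem j ⟨l, by omega⟩
        simp only [tP, Finset.mem_filter] at H
        rw [mem_EDGE]
        exact H.2.1 hl
      · rw [dif_pos (by omega : l + 1 < p j + 1), TOK_fst, Nat.min_eq_left (by omega)]
        have H := hfPmem j ⟨l + 1, by omega⟩
        simp only [tP, Finset.mem_filter] at H
        rw [mem_EDGE]
        have H2 := H.2.2 (by omega)
        have : OFF mm s + OFF pp j.val + (l + 1) - 1 = OFF mm s + OFF pp j.val + l := by omega
        rw [this] at H2
        exact H2
  · -- decomposition
    intro A hA c
    obtain ⟨g, hgN, hTOK⟩ := TOK_surj hn hμ0 A hA c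
    have huniqpos : ∀ g', g' < Ntot n μ → TOK n μ hμ0 g' = (A, c) → g' = g := by
      intro g' h1 h2
      exact TOK_inj hn hμ0 h1 hgN (h2.trans hTOK.symm)
    by_cases hcase : g < OFF mm s
    · obtain ⟨k, hk, hk1, hk2⟩ := OFF_locate mm s g hcase
      have hmk : mm k = m ⟨k, hk⟩ := by simp [hmm, hk]
      refine ⟨Sum.inl ⟨⟨k, hk⟩, ⟨g - OFF mm k, by omega⟩⟩, ?_, ?_⟩
      · simp only [Sum.elim_inl]
        show TOK n μ hμ0 (OFF mm k + (g - OFF mm k) % m ⟨k, hk⟩) = (A, c)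
        rw [Nat.mod_eq_of_lt (by omega), show OFF mm k + (g - OFF mm k) = g by omega]
        exact hTOK
      · rintro (⟨i, q⟩ | ⟨i, q⟩) hy
        · simp only [Sum.elim_inl] at hy
          try dsimp only at hy
          rw [Nat.mod_eq_of_lt q.isLt] at hy
          have hpos : OFF mm i.val + q.val < Ntot n μ := by
            have := hCbound i; have := q.isLt; omega
          have hgeq := huniqpos _ hpos hy
          have hmi : mm i.val = m i := hmmv i
          have hik : i.val = k := by
            refine OFF_unique mm (g := g) ?_ ?_ hk1 hk2
            · omega
            · rw [hmi]; have := q.isLt; omega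
          have hie : i = ⟨k, hk⟩ := Fin.ext hik
          subst hie
          have hvv : ((⟨k, hk⟩ : Fin s) : ℕ) = k := rfl
          rw [hvv] at hgeq
          have hq : q = ⟨g - OFF mm k, by omega⟩ :=
            Fin.ext (show q.val = g - OFF mm k by omega)
          rw [hq]
        · simp only [Sum.elim_inr] at hy
          try dsimp only at hy
          have hpos : OFF mm s + OFF pp i.val + min q.val (p i - 1) < Ntot n μ := by
            have := hPbound i
            have h1 : min q.val (p i - 1) ≤ p i - 1 := Nat.min_le_right _ _
            have := (hp i).1
            omega
          have hgeq := huniqpos _ hpos hy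
          omega
    · have hg2 : g - OFF mm s < OFF pp t := by omega
      obtain ⟨k, hk, hk1, hk2⟩ := OFF_locate pp t (g - OFF mm s) hg2
      have hpk : pp k = p ⟨k, hk⟩ := by simp [hpp, hk]
      refine ⟨Sum.inr ⟨⟨k, hk⟩, ⟨g - OFF mm s - OFF pp k, by omega⟩⟩, ?_, ?_⟩
      · simp only [Sum.elim_inr]
        show TOK n μ hμ0 (OFF mm s + OFF pp k +
          min (g - OFF mm s - OFF pp k) (p ⟨k, hk⟩ - 1)) = (A, c)
        rw [Nat.min_eq_left (by omega),
          show OFF mm s + OFF pp k + (g - OFF mm s - OFF pp k) = g by omega]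
        exact hTOK
      · rintro (⟨i, q⟩ | ⟨i, q⟩) hy
        · simp only [Sum.elim_inl] at hy
          try dsimp only at hy
          rw [Nat.mod_eq_of_lt q.isLt] at hy
          have hpos : OFF mm i.val + q.val < Ntot n μ := by
            have := hCbound i; have := q.isLt; omega
          have hgeq := huniqpos _ hpos hy
          have := hCbound i
          have := q.isLt
          omega
        · simp only [Sum.elim_inr] at hy
          try dsimp only at hy
          have hq1 : min q.val (p i - 1) = q.val := Nat.min_eq_left (by have := q.isLt; omega)
          rw [hq1] at hy
          have hpos : OFF mm s + OFF pp i.val + q.val < Ntot n μ := by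
            have := hPbound i; have := q.isLt; omega
          have hgeq := huniqpos _ hpos hy
          have hpi : pp i.val = p i := hppv i
          have hik : i.val = k := by
            refine OFF_unique pp (g := g - OFF mm s) ?_ ?_ hk1 hk2
            · omega
            · rw [hpi]; have := q.isLt; omega
          have hie : i = ⟨k, hk⟩ := Fin.ext hik
          subst hie
          have hvv : ((⟨k, hk⟩ : Fin t) : ℕ) = k := rfl
          rw [hvv] at hgeq
          have hq : q = ⟨g - OFF mm s - OFF pp k, by omega⟩ :=
            Fin.ext (show q.val = g - OFF mm s - OFF pp k by omega)
          rw [hq]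
end

section
/- Let μ ≥ 1 and n ≥ 4 be integers and set k = n−1. Let C = (m_1, …, m_s) and P = (n_1, …, n_t) be lists of integers with 2 ≤ m_i ≤ n for every i ∈ {1, …, s}, 1 ≤ n_j ≤ n−1 for every j ∈ {1, …, t}, and m_1 + ⋯ + m_s + n_1 + ⋯ + n_t = μ·n. Then μK_n^{(n−1)} has a decomposition into s Berge cycles of lengths m_1, …, m_s and t Berge paths of lengths n_1, …, n_t. -/

def auxOff (f : ℕ → ℕ) (i : ℕ) : ℕ := ∑ k ∈ Finset.range i, f k

lemma aux_block_lt (f : ℕ → ℕ) {N i j : ℕ} (hi : i < N) (hj : j < f i) :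
    auxOff f i + j < auxOff f N := by
  unfold auxOff
  calc (∑ k ∈ Finset.range i, f k) + j < (∑ k ∈ Finset.range i, f k) + f i := by omega
    _ = ∑ k ∈ Finset.range (i+1), f k := (Finset.sum_range_succ f i).symm
    _ ≤ ∑ k ∈ Finset.range N, f k :=
        Finset.sum_le_sum_of_subset (Finset.range_subset_range.mpr hi)

lemma aux_block_exists (f : ℕ → ℕ) (N r : ℕ) (hr : r < auxOff f N) :
    ∃ i, i < N ∧ ∃ j, j < f i ∧ auxOff f i + j = r := by
  unfold auxOff at *
  induction N with
  | zero => simp at hr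
  | succ N ih =>
    rcases lt_or_ge r (∑ k ∈ Finset.range N, f k) with h | h
    · obtain ⟨i, hi, j, hj, hij⟩ := ih h
      exact ⟨i, Nat.lt_succ_of_lt hi, j, hj, hij⟩
    · refine ⟨N, Nat.lt_succ_self _, r - ∑ k ∈ Finset.range N, f k, ?_, by omega⟩
      rw [Finset.sum_range_succ] at hr; omega

lemma aux_block_inj (f : ℕ → ℕ) {i1 j1 i2 j2 : ℕ} (h1 : j1 < f i1) (h2 : j2 < f i2)
    (h : auxOff f i1 + j1 = auxOff f i2 + j2) : i1 = i2 ∧ j1 = j2 := by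
  rcases lt_trichotomy i1 i2 with hlt | heq | hgt
  · have hb := aux_block_lt f hlt h1
    have : auxOff f i2 ≤ auxOff f i2 + j2 := Nat.le_add_right _ _
    omega
  · refine ⟨heq, ?_⟩; subst heq; omega
  · have hb := aux_block_lt f hgt h2
    have : auxOff f i1 ≤ auxOff f i1 + j1 := Nat.le_add_right _ _
    omega

def auxExt {s : ℕ} (m : Fin s → ℕ) : ℕ → ℕ := fun k => if h : k < s then m ⟨k, h⟩ else 0

lemma auxExt_apply {s : ℕ} (m : Fin s → ℕ) (i : Fin s) : auxExt m i.val = m i := by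
  simp [auxExt]

lemma auxExt_sum {s : ℕ} (m : Fin s → ℕ) : auxOff (auxExt m) s = ∑ i, m i := by
  unfold auxOff
  rw [← Fin.sum_univ_eq_sum_range (fun k => auxExt m k) s]
  exact Finset.sum_congr rfl fun i _ => auxExt_apply m i

lemma aux_mod_cancel {n : ℕ} (a : ℕ) {u w : ℕ} (hu : u < n) (hw : w < n)
    (h : (a + u) % n = (a + w) % n) : u = w := by
  have h2 : u ≡ w [MOD n] := Nat.ModEq.add_left_cancel' a h
  have h3 : u % n = w % n := h2
  rwa [Nat.mod_eq_of_lt hu, Nat.mod_eq_of_lt hw] at h3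

def auxE (n μ : ℕ) (hn : 0 < n) (hμ : 0 < μ) (r : ℕ) : Finset (Fin n) × Fin μ :=
  (({⟨r % n, Nat.mod_lt r hn⟩} : Finset (Fin n))ᶜ, ⟨(r / n) % μ, Nat.mod_lt _ hμ⟩)

lemma auxE_card {n μ : ℕ} (hn : 0 < n) (hμ : 0 < μ) (r : ℕ) :
    ((auxE n μ hn hμ r).1).card = n - 1 := by
  simp [auxE, Finset.card_compl]

lemma auxE_mem {n μ : ℕ} (hn : 0 < n) (hμ : 0 < μ) (r : ℕ) (v : Fin n) :
    v ∈ (auxE n μ hn hμ r).1 ↔ (v : ℕ) ≠ r % n := by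
  simp [auxE, Fin.ext_iff]

lemma auxE_inj {n μ : ℕ} (hn : 0 < n) (hμ : 0 < μ) {r1 r2 : ℕ}
    (h1 : r1 < μ * n) (h2 : r2 < μ * n)
    (h : auxE n μ hn hμ r1 = auxE n μ hn hμ r2) : r1 = r2 := by
  rw [auxE, auxE, Prod.mk.injEq] at h
  obtain ⟨hA, hc⟩ := h
  have hsing := compl_injective hA
  have hx : r1 % n = r2 % n := by
    have := Finset.singleton_injective hsing
    simpa [Fin.ext_iff] using this
  have hd1 : r1 / n < μ := Nat.div_lt_of_lt_mul (by rwa [mul_comm] at h1)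
  have hd2 : r2 / n < μ := Nat.div_lt_of_lt_mul (by rwa [mul_comm] at h2)
  have hcv : r1 / n = r2 / n := by
    have hv := congrArg Fin.val hc
    simp only at hv
    rwa [Nat.mod_eq_of_lt hd1, Nat.mod_eq_of_lt hd2] at hv
  have e1 := Nat.div_add_mod r1 n
  have e2 := Nat.div_add_mod r2 n
  rw [← hcv, ← hx] at e2
  omega

lemma auxE_eq {n μ : ℕ} (hn : 0 < n) (hμ : 0 < μ) (x : Fin n) (c : Fin μ) :
    auxE n μ hn hμ (n * c.val + x.val) = (({x} : Finset (Fin n))ᶜ, c) := by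
  have h1 : (n * c.val + x.val) % n = x.val := by
    rw [Nat.mul_add_mod]; exact Nat.mod_eq_of_lt x.isLt
  have h2 : (n * c.val + x.val) / n = c.val := by
    rw [Nat.mul_add_div hn, Nat.div_eq_of_lt x.isLt, add_zero]
  rw [auxE, Prod.mk.injEq]
  constructor
  · have hx : (⟨(n * c.val + x.val) % n, Nat.mod_lt _ hn⟩ : Fin n) = x := Fin.ext h1
    rw [hx]
  · refine Fin.ext ?_
    show (n * c.val + x.val) / n % μ = c.val
    rw [h2, Nat.mod_eq_of_lt c.isLt]

/-- **Case `k = n−1` of Theorem 5 of the paper.**  For `μ ≥ 1`, `n ≥ 4` and lists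
`C = (m_1, …, m_s)`, `P = (n_1, …, n_t)` with `2 ≤ m_i ≤ n`, `1 ≤ n_j ≤ n−1` and
`Σ m_i + Σ n_j = μ·n`, the multi-hypergraph `μ K_n^{(n-1)}` decomposes into
`s` Berge cycles of lengths `m_1, …, m_s` and `t` Berge paths of lengths `n_1, …, n_t`. -/
theorem complete_multihypergraph_berge_decomposition_k_eq_n_sub_one (μ n : ℕ) (hμ : 1 ≤ μ)
    (hn : 4 ≤ n)
    (s t : ℕ) (m : Fin s → ℕ) (p : Fin t → ℕ)
    (hm : ∀ i, 2 ≤ m i ∧ m i ≤ n) (hp : ∀ j, 1 ≤ p j ∧ p j ≤ n - 1)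
    (hsum : ∑ i, m i + ∑ j, p j = μ * n) :
    ∃ (vc : Fin s → ℕ → Fin n) (ec : Fin s → ℕ → Finset (Fin n) × Fin μ)
      (vp : Fin t → ℕ → Fin n) (ep : Fin t → ℕ → Finset (Fin n) × Fin μ),
      (∀ i, IsBergeCycle n (n - 1) μ (m i) (vc i) (ec i)) ∧
      (∀ j, IsBergePath n (n - 1) μ (p j) (vp j) (ep j)) ∧
      (∀ A : Finset (Fin n), A.card = n - 1 → ∀ c : Fin μ,
        ∃! x : (Σ i : Fin s, Fin (m i)) ⊕ (Σ j : Fin t, Fin (p j)),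
          Sum.elim (fun q : Σ i : Fin s, Fin (m i) => ec q.1 q.2.val)
                   (fun q : Σ j : Fin t, Fin (p j) => ep q.1 q.2.val) x = (A, c)) := by
  have hn0 : 0 < n := by omega
  have hμ0 : 0 < μ := hμ
  have hMs : auxOff (auxExt m) s = ∑ i, m i := auxExt_sum m
  have hPs : auxOff (auxExt p) t = ∑ j, p j := auxExt_sum p
  have hcb : ∀ (i : Fin s) (j : ℕ), j < m i → auxOff (auxExt m) i.val + j < ∑ i, m i := by
    intro i j hj
    have := aux_block_lt (auxExt m) i.isLt (j := j) (by rwa [auxExt_apply m i])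
    rwa [hMs] at this
  have hpb : ∀ (j : Fin t) (j' : ℕ), j' < p j → auxOff (auxExt p) j.val + j' < ∑ j, p j := by
    intro j j' hj'
    have := aux_block_lt (auxExt p) j.isLt (j := j') (by rwa [auxExt_apply p j])
    rwa [hPs] at this
  refine ⟨
    fun i j => ⟨(auxOff (auxExt m) i.val + j + (if m i = 2 then 2 else 1)) % n, Nat.mod_lt _ hn0⟩,
    fun i j => auxE n μ hn0 hμ0 (auxOff (auxExt m) i.val + j),
    fun j j' => ⟨((∑ i, m i) + auxOff (auxExt p) j.val + j' + 1) % n, Nat.mod_lt _ hn0⟩,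
    fun j j' => auxE n μ hn0 hμ0 ((∑ i, m i) + auxOff (auxExt p) j.val + j'),
    ?_, ?_, ?_⟩
  · -- cycles
    intro i
    obtain ⟨hm2, hmn⟩ := hm i
    set a := auxOff (auxExt m) i.val with ha
    set d := (if m i = 2 then 2 else 1) with hd
    have hd12 : 1 ≤ d ∧ d ≤ 2 := by rw [hd]; split_ifs <;> omega
    have hdne : d ≠ m i - 1 := by rw [hd]; split_ifs with h <;> omega
    have hb : ∀ j, j < m i → a + j < μ * n := by
      intro j hj
      have := hcb i j hj
      omega
    refine ⟨?_, ?_, ?_⟩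
    · intro j1 hj1 j2 hj2 h
      simp only [Fin.mk.injEq] at h
      have hj1' : j1 < m i := Set.mem_Iio.mp hj1
      have hj2' : j2 < m i := Set.mem_Iio.mp hj2
      have h' : ((a + d) + j1) % n = ((a + d) + j2) % n := by
        have e1 : a + d + j1 = a + j1 + d := by omega
        have e2 : a + d + j2 = a + j2 + d := by omega
        rw [e1, e2]; exact h
      exact aux_mod_cancel (a + d) (by omega) (by omega) h'
    · intro j1 hj1 j2 hj2 h
      have h2 : auxE n μ hn0 hμ0 (a + j1) = auxE n μ hn0 hμ0 (a + j2) := h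
      have := auxE_inj hn0 hμ0 (hb j1 (Set.mem_Iio.mp hj1)) (hb j2 (Set.mem_Iio.mp hj2)) h2
      omega
    · intro j hj
      refine ⟨auxE_card hn0 hμ0 _, ?_, ?_⟩
      · refine (auxE_mem hn0 hμ0 _ _).mpr ?_
        show (a + j + d) % n ≠ (a + j) % n
        intro hcon
        have h' : ((a + j) + d) % n = ((a + j) + 0) % n := by rw [add_zero]; exact hcon
        have := aux_mod_cancel (a + j) (by omega) (by omega) h'
        omega
      · rcases Nat.lt_or_ge (j + 1) (m i) with h | h
        · rw [Nat.mod_eq_of_lt h]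
          refine (auxE_mem hn0 hμ0 _ _).mpr ?_
          show (a + (j + 1) + d) % n ≠ (a + j) % n
          intro hcon
          have h' : ((a + j) + (1 + d)) % n = ((a + j) + 0) % n := by
            rw [add_zero]
            have e : a + j + (1 + d) = a + (j + 1) + d := by omega
            rw [e]; exact hcon
          have := aux_mod_cancel (a + j) (by omega) (by omega) h'
          omega
        · have hj1 : j + 1 = m i := by omega
          rw [hj1, Nat.mod_self]
          refine (auxE_mem hn0 hμ0 _ _).mpr ?_
          show (a + 0 + d) % n ≠ (a + j) % n
          intro hcon
          have h' : (a + d) % n = (a + (m i - 1)) % n := by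
            have e1 : a + d = a + 0 + d := by omega
            have e2 : m i - 1 = j := by omega
            rw [e1, e2]; exact hcon
          have := aux_mod_cancel a (by omega) (by omega) h'
          omega
  · -- paths
    intro j
    obtain ⟨hp1, hpn⟩ := hp j
    set a := (∑ i, m i) + auxOff (auxExt p) j.val with ha
    have hb : ∀ j', j' < p j → a + j' < μ * n := by
      intro j' hj'
      have := hpb j j' hj'
      omega
    refine ⟨?_, ?_, ?_⟩
    · intro j1 hj1 j2 hj2 h
      simp only [Fin.mk.injEq] at h
      have hj1' : j1 ≤ p j := Set.mem_Iic.mp hj1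
      have hj2' : j2 ≤ p j := Set.mem_Iic.mp hj2
      have h' : ((a + 1) + j1) % n = ((a + 1) + j2) % n := by
        have e1 : a + 1 + j1 = a + j1 + 1 := by omega
        have e2 : a + 1 + j2 = a + j2 + 1 := by omega
        rw [e1, e2]; exact h
      exact aux_mod_cancel (a + 1) (by omega) (by omega) h'
    · intro j1 hj1 j2 hj2 h
      have h2 : auxE n μ hn0 hμ0 (a + j1) = auxE n μ hn0 hμ0 (a + j2) := h
      have := auxE_inj hn0 hμ0 (hb j1 (Set.mem_Iio.mp hj1)) (hb j2 (Set.mem_Iio.mp hj2)) h2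
      omega
    · intro j' hj'
      refine ⟨auxE_card hn0 hμ0 _, ?_, ?_⟩
      · refine (auxE_mem hn0 hμ0 _ _).mpr ?_
        show (a + j' + 1) % n ≠ (a + j') % n
        intro hcon
        have h' : ((a + j') + 1) % n = ((a + j') + 0) % n := by rw [add_zero]; exact hcon
        have := aux_mod_cancel (a + j') (by omega) (by omega) h'
        omega
      · refine (auxE_mem hn0 hμ0 _ _).mpr ?_
        show (a + (j' + 1) + 1) % n ≠ (a + j') % n
        intro hcon
        have h' : ((a + j') + 2) % n = ((a + j') + 0) % n := by
          rw [add_zero]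
          have e : a + j' + 2 = a + (j' + 1) + 1 := by omega
          rw [e]; exact hcon
        have := aux_mod_cancel (a + j') (by omega) (by omega) h'
        omega
  · -- decomposition
    intro A hA c
    obtain ⟨x, hxA⟩ : ∃ x : Fin n, A = ({x} : Finset (Fin n))ᶜ := by
      have h1 : Aᶜ.card = 1 := by
        rw [Finset.card_compl, hA, Fintype.card_fin]; omega
      obtain ⟨x, hx⟩ := Finset.card_eq_one.mp h1
      exact ⟨x, by rw [← compl_compl A, hx]⟩
    set r := n * c.val + x.val with hr
    have hrlt : r < μ * n := by
      have h1 : c.val + 1 ≤ μ := c.isLt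
      have h2 : n * (c.val + 1) ≤ n * μ := Nat.mul_le_mul_left n h1
      have h3 : n * (c.val + 1) = n * c.val + n := Nat.mul_succ n c.val
      have h4 := x.isLt
      rw [mul_comm μ n]
      omega
    have hEr : auxE n μ hn0 hμ0 r = (A, c) := by
      rw [hr, auxE_eq hn0 hμ0 x c, ← hxA]
    rcases Nat.lt_or_ge r (∑ i, m i) with hcase | hcase
    · obtain ⟨i, his, j, hj, hij⟩ := aux_block_exists (auxExt m) s r (by rwa [hMs])
      have hj' : j < m ⟨i, his⟩ := by rwa [auxExt_apply m ⟨i, his⟩] at hj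
      refine ⟨Sum.inl ⟨⟨i, his⟩, ⟨j, hj'⟩⟩, ?_, ?_⟩
      · show auxE n μ hn0 hμ0 (auxOff (auxExt m) i + j) = (A, c)
        rw [hij]; exact hEr
      · intro y hy
        rcases y with ⟨i2, j2⟩ | ⟨j2, j2'⟩
        · have hy2 : auxE n μ hn0 hμ0 (auxOff (auxExt m) i2.val + j2.val) = (A, c) := hy
          have hb2 : auxOff (auxExt m) i2.val + j2.val < μ * n := by
            have := hcb i2 j2.val j2.isLt; omega
          have hslot : auxOff (auxExt m) i2.val + j2.val = r :=
            auxE_inj hn0 hμ0 hb2 hrlt (by rw [hy2, hEr])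
          rw [← hij] at hslot
          have hj2' : j2.val < auxExt m i2.val := by rw [auxExt_apply]; exact j2.isLt
          obtain ⟨hi, hjj⟩ := aux_block_inj (auxExt m) hj2' hj hslot
          have hi2 : i2 = ⟨i, his⟩ := Fin.ext hi
          subst hi2
          have hj2e : j2 = ⟨j, hj'⟩ := Fin.ext hjj
          subst hj2e
          rfl
        · exfalso
          have hy2 : auxE n μ hn0 hμ0
              ((∑ i, m i) + auxOff (auxExt p) j2.val + j2'.val) = (A, c) := hy
          have hb2 : (∑ i, m i) + auxOff (auxExt p) j2.val + j2'.val < μ * n := by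
            have := hpb j2 j2'.val j2'.isLt; omega
          have hslot := auxE_inj hn0 hμ0 hb2 hrlt (by rw [hy2, hEr])
          omega
    · have hr2 : r - (∑ i, m i) < auxOff (auxExt p) t := by
        rw [hPs]; omega
      obtain ⟨j, hjt, j', hj', hjj⟩ := aux_block_exists (auxExt p) t _ hr2
      have hq : j' < p ⟨j, hjt⟩ := by rwa [auxExt_apply p ⟨j, hjt⟩] at hj'
      refine ⟨Sum.inr ⟨⟨j, hjt⟩, ⟨j', hq⟩⟩, ?_, ?_⟩
      · show auxE n μ hn0 hμ0 ((∑ i, m i) + auxOff (auxExt p) j + j') = (A, c)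
        have he : (∑ i, m i) + auxOff (auxExt p) j + j' = r := by omega
        rw [he]; exact hEr
      · intro y hy
        rcases y with ⟨i2, j2⟩ | ⟨j2, j2'⟩
        · exfalso
          have hy2 : auxE n μ hn0 hμ0 (auxOff (auxExt m) i2.val + j2.val) = (A, c) := hy
          have hlt := hcb i2 j2.val j2.isLt
          have hb2 : auxOff (auxExt m) i2.val + j2.val < μ * n := by omega
          have hslot := auxE_inj hn0 hμ0 hb2 hrlt (by rw [hy2, hEr])
          omega
        · have hy2 : auxE n μ hn0 hμ0
              ((∑ i, m i) + auxOff (auxExt p) j2.val + j2'.val) = (A, c) := hy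
          have hb2 : (∑ i, m i) + auxOff (auxExt p) j2.val + j2'.val < μ * n := by
            have := hpb j2 j2'.val j2'.isLt; omega
          have hslot := auxE_inj hn0 hμ0 hb2 hrlt (by rw [hy2, hEr])
          have hslot2 : auxOff (auxExt p) j2.val + j2'.val = auxOff (auxExt p) j + j' := by
            omega
          have hj2p : j2'.val < auxExt p j2.val := by rw [auxExt_apply]; exact j2'.isLt
          obtain ⟨hi, hjjq⟩ := aux_block_inj (auxExt p) hj2p hj' hslot2
          have he1 : j2 = ⟨j, hjt⟩ := Fin.ext hi
          subst he1
          have he2 : j2' = ⟨j', hq⟩ := Fin.ext hjjq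
          subst he2
          rfl
end
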